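/- arXiv:1703.10705 — 7 statements merged into one kernel-verified Lean document; each statement's English description precedes it below -/
import Mathlib

section
/- If S ⊆ ℤ² is integrally convex, then for all x, y ∈ S, every point z ∈ ℤ² satisfying min(x_i,y_i) ≤ z_i ≤ max(x_i,y_i) for i=1,2, min(x₁−x₂, y₁−y₂) ≤ z₁−z₂ ≤ max(x₁−x₂, y₁−y₂), and min(x₁+x₂, y₁+y₂) ≤ z₁+z₂ ≤ max(x₁+x₂, y₁+y₂), belongs to S. -/
open scoped BigOperators

noncomputable section

/-- Integer neighborhood `N(x)` of a real point. -/
def intNbhd {n : ℕ} (x : Fin n → ℝ) : Set (Fin n → ℤ) :=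
  {z | ∀ i, |x i - (z i : ℝ)| < 1}

/-- Local convex extension of `f : ℤⁿ → ℝ ∪ {+∞}`. -/
noncomputable def localExt {n : ℕ} (f : (Fin n → ℤ) → EReal) (x : Fin n → ℝ) : EReal :=
  sInf { v : EReal | ∃ (m : ℕ) (lam : Fin m → ℝ) (y : Fin m → (Fin n → ℤ)),
      (∀ j, 0 ≤ lam j) ∧ (∑ j, lam j) = 1 ∧ (∀ j, y j ∈ intNbhd x) ∧
      (∀ i, (∑ j, lam j * ((y j i : ℝ))) = x i) ∧
      v = ∑ j, (((lam j : ℝ) : EReal) * f (y j)) }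

/-- A function is integrally convex if its local convex extension is convex. -/
def IsIntegrallyConvexFn {n : ℕ} (f : (Fin n → ℤ) → EReal) : Prop :=
  ∀ x y : Fin n → ℝ, ∀ t : ℝ, 0 ≤ t → t ≤ 1 →
    localExt f (fun i => t * x i + (1 - t) * y i) ≤
      ((t : ℝ) : EReal) * localExt f x + (((1 - t : ℝ)) : EReal) * localExt f y

/-- Coercion of an integer point to a real point. -/
def realify {n : ℕ} (z : Fin n → ℤ) : Fin n → ℝ := fun i => (z i : ℝ)

/-- A set `S ⊆ ℤⁿ` is integrally convex. -/
def IsIntegrallyConvexSet {n : ℕ} (S : Set (Fin n → ℤ)) : Prop :=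
  ∀ x : Fin n → ℝ, x ∈ convexHull ℝ (realify '' S) →
    x ∈ convexHull ℝ (realify '' (S ∩ intNbhd x))

lemma exists_step {S : Set (Fin 2 → ℤ)} (hS : IsIntegrallyConvexSet S)
    {x y : Fin 2 → ℤ} (hx : x ∈ S) (hy : y ∈ S) (c0 c1 : ℤ)
    (hlt : c0 * x 0 + c1 * x 1 < c0 * y 0 + c1 * y 1) :
    ∃ w ∈ S,
      (∀ i, w i = x i ∨ (x i < y i ∧ w i = x i + 1) ∨ (y i < x i ∧ w i = x i - 1)) ∧
      c0 * x 0 + c1 * x 1 < c0 * w 0 + c1 * w 1 := by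
  set D : ℕ := (y 0 - x 0).natAbs + (y 1 - x 1).natAbs with hD
  set t : ℝ := ((D : ℝ) + 1)⁻¹ with hT
  have hDR : (0:ℝ) ≤ (D:ℝ) := Nat.cast_nonneg _
  have ht0 : 0 < t := by rw [hT]; positivity
  have htsum : t * ((D:ℝ) + 1) = 1 := by
    rw [hT]; exact inv_mul_cancel₀ (by linarith)
  have ht1 : t ≤ 1 := by nlinarith
  set p : Fin 2 → ℝ := fun i => (x i : ℝ) + t * ((y i : ℝ) - (x i : ℝ)) with hp
  have hseg : p ∈ segment ℝ (realify x) (realify y) := by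
    refine ⟨1 - t, t, by linarith, ht0.le, by ring, ?_⟩
    funext i
    simp only [hp, realify, Pi.add_apply, Pi.smul_apply, smul_eq_mul]
    ring
  have hpS : p ∈ convexHull ℝ (realify '' S) :=
    segment_subset_convexHull (Set.mem_image_of_mem realify hx) (Set.mem_image_of_mem realify hy) hseg
  have hp2 := hS p hpS
  rw [convexHull_eq] at hp2
  obtain ⟨ι, T, lam, g, hpos, hsum, hmem, hcm⟩ := hp2
  rw [Finset.centerMass_eq_of_sum_1 _ _ hsum] at hcm
  have hco : ∀ j, ∑ i ∈ T, lam i * g i j = p j := by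
    intro j
    have h := congrFun hcm j
    simpa [Finset.sum_apply, Pi.smul_apply, smul_eq_mul] using h
  have hF : ∑ i ∈ T, lam i * ((c0:ℝ) * g i 0 + (c1:ℝ) * g i 1)
      = (c0:ℝ) * p 0 + (c1:ℝ) * p 1 := by
    rw [← hco 0, ← hco 1, Finset.mul_sum, Finset.mul_sum, ← Finset.sum_add_distrib]
    exact Finset.sum_congr rfl fun i _ => by ring
  have hex : ∃ i ∈ T, (c0:ℝ) * p 0 + (c1:ℝ) * p 1 ≤ (c0:ℝ) * g i 0 + (c1:ℝ) * g i 1 := by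
    by_contra hcon
    push_neg at hcon
    obtain ⟨i0, hi0T, hi0⟩ := Finset.exists_ne_zero_of_sum_ne_zero
      (by rw [hsum]; exact one_ne_zero : ∑ i ∈ T, lam i ≠ 0)
    have hlt2 : ∑ i ∈ T, lam i * ((c0:ℝ) * g i 0 + (c1:ℝ) * g i 1)
        < ∑ i ∈ T, lam i * ((c0:ℝ) * p 0 + (c1:ℝ) * p 1) :=
      Finset.sum_lt_sum (fun i hi => mul_le_mul_of_nonneg_left (hcon i hi).le (hpos i hi))
        ⟨i0, hi0T, mul_lt_mul_of_pos_left (hcon i0 hi0T) ((hpos i0 hi0T).lt_of_ne (Ne.symm hi0))⟩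
    rw [← Finset.sum_mul, hsum, one_mul] at hlt2
    linarith [hF]
  obtain ⟨i, hiT, hile⟩ := hex
  obtain ⟨w, hwmem, hgw⟩ := hmem i hiT
  obtain ⟨hwS, hwN⟩ := hwmem
  rw [← hgw] at hile
  simp only [realify] at hile
  simp only [intNbhd, Set.mem_setOf_eq] at hwN
  have hDall : ∀ j : Fin 2, (y j - x j).natAbs ≤ D := Fin.forall_fin_two.mpr ⟨by omega, by omega⟩
  refine ⟨w, hwS, ?_, ?_⟩
  · intro j
    have hnb := hwN j
    have hpj : p j = (x j : ℝ) + t * ((y j : ℝ) - (x j : ℝ)) := by rw [hp]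
    rw [hpj] at hnb
    rw [abs_lt] at hnb
    obtain ⟨hnb1, hnb2⟩ := hnb
    have hbnd : -(D:ℤ) ≤ y j - x j ∧ y j - x j ≤ (D:ℤ) := by have := hDall j; omega
    have hbr1 : -(D:ℝ) ≤ (y j : ℝ) - (x j : ℝ) := by
      have : ((-(D:ℤ) : ℤ) : ℝ) ≤ ((y j - x j : ℤ) : ℝ) := by exact_mod_cast hbnd.1
      push_cast at this; linarith
    have hbr2 : (y j : ℝ) - (x j : ℝ) ≤ (D:ℝ) := by
      have : ((y j - x j : ℤ) : ℝ) ≤ (((D:ℤ)) : ℝ) := by exact_mod_cast hbnd.2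
      push_cast at this; linarith
    rcases lt_trichotomy (y j) (x j) with h | h | h
    · have hyr : (y j : ℝ) - (x j : ℝ) ≤ -1 := by
        have : ((y j - x j : ℤ) : ℝ) ≤ ((-1 : ℤ) : ℝ) := by exact_mod_cast (by omega : y j - x j ≤ -1)
        push_cast at this; linarith
      have hq1 : -1 < t * ((y j : ℝ) - (x j : ℝ)) := by nlinarith
      have hq2 : t * ((y j : ℝ) - (x j : ℝ)) < 0 := by nlinarith
      have hi1 : (-1 : ℤ) < x j - w j := by
        have : ((-1 : ℤ) : ℝ) < ((x j - w j : ℤ) : ℝ) := by push_cast; linarith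
        exact_mod_cast this
      have hi2 : (x j : ℤ) - w j < 2 := by
        have : ((x j - w j : ℤ) : ℝ) < ((2 : ℤ) : ℝ) := by push_cast; linarith
        exact_mod_cast this
      omega
    · have hyr : (y j : ℝ) = (x j : ℝ) := by exact_mod_cast h
      have hi1 : (-1 : ℤ) < x j - w j := by
        have : ((-1 : ℤ) : ℝ) < ((x j - w j : ℤ) : ℝ) := by push_cast; rw [hyr] at hnb1; linarith
        exact_mod_cast this
      have hi2 : (x j : ℤ) - w j < 1 := by
        have : ((x j - w j : ℤ) : ℝ) < ((1 : ℤ) : ℝ) := by push_cast; rw [hyr] at hnb2; linarith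
        exact_mod_cast this
      omega
    · have hyr : (1:ℝ) ≤ (y j : ℝ) - (x j : ℝ) := by
        have : ((1 : ℤ) : ℝ) ≤ ((y j - x j : ℤ) : ℝ) := by exact_mod_cast (by omega : (1:ℤ) ≤ y j - x j)
        push_cast at this; linarith
      have hq1 : 0 < t * ((y j : ℝ) - (x j : ℝ)) := by nlinarith
      have hq2 : t * ((y j : ℝ) - (x j : ℝ)) < 1 := by nlinarith
      have hi1 : (-2 : ℤ) < x j - w j := by
        have : ((-2 : ℤ) : ℝ) < ((x j - w j : ℤ) : ℝ) := by push_cast; linarith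
        exact_mod_cast this
      have hi2 : (x j : ℤ) - w j < 1 := by
        have : ((x j - w j : ℤ) : ℝ) < ((1 : ℤ) : ℝ) := by push_cast; linarith
        exact_mod_cast this
      omega
  · have hkey : (1:ℤ) ≤ c0 * (y 0 - x 0) + c1 * (y 1 - x 1) := by
      have hr : c0 * (y 0 - x 0) + c1 * (y 1 - x 1)
          = (c0 * y 0 + c1 * y 1) - (c0 * x 0 + c1 * x 1) := by ring
      linarith
    have hkeyR : (1:ℝ) ≤ (c0:ℝ) * ((y 0 : ℝ) - (x 0 : ℝ)) + (c1:ℝ) * ((y 1 : ℝ) - (x 1 : ℝ)) := by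
      have h' : ((1:ℤ):ℝ) ≤ ((c0 * (y 0 - x 0) + c1 * (y 1 - x 1) : ℤ) : ℝ) := by
        exact_mod_cast hkey
      push_cast at h'
      linarith
    have hpe : (c0:ℝ) * p 0 + (c1:ℝ) * p 1
        = ((c0:ℝ) * (x 0 : ℝ) + (c1:ℝ) * (x 1 : ℝ))
          + t * ((c0:ℝ) * ((y 0 : ℝ) - (x 0 : ℝ)) + (c1:ℝ) * ((y 1 : ℝ) - (x 1 : ℝ))) := by
      simp only [hp]
      ring
    have hpos2 : 0 < t * ((c0:ℝ) * ((y 0 : ℝ) - (x 0 : ℝ)) + (c1:ℝ) * ((y 1 : ℝ) - (x 1 : ℝ))) :=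
      mul_pos ht0 (by linarith)
    have hfin : (c0:ℝ) * ((x 0 : ℤ) : ℝ) + (c1:ℝ) * ((x 1 : ℤ) : ℝ)
        < (c0:ℝ) * ((w 0 : ℤ) : ℝ) + (c1:ℝ) * ((w 1 : ℤ) : ℝ) := by
      linarith
    exact_mod_cast hfin

set_option maxHeartbeats 4000000 in
lemma ICH_aux : ∀ (n : ℕ) (S : Set (Fin 2 → ℤ)), IsIntegrallyConvexSet S →
    ∀ x y z : Fin 2 → ℤ, x ∈ S → y ∈ S →
    (∀ i, min (x i) (y i) ≤ z i ∧ z i ≤ max (x i) (y i)) →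
    (min (x 0 - x 1) (y 0 - y 1) ≤ z 0 - z 1 ∧ z 0 - z 1 ≤ max (x 0 - x 1) (y 0 - y 1)) →
    (min (x 0 + x 1) (y 0 + y 1) ≤ z 0 + z 1 ∧ z 0 + z 1 ≤ max (x 0 + x 1) (y 0 + y 1)) →
    (y 0 - x 0).natAbs + (y 1 - x 1).natAbs ≤ n → z ∈ S := by
  intro n
  induction n with
  | zero =>
    intro S hS x y z hx hy h1 h2 h3 hn
    have e0 := h1 0
    have e1 := h1 1
    have hz : z = x := funext (Fin.forall_fin_two.mpr ⟨by omega, by omega⟩)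
    rw [hz]; exact hx
  | succ n IH =>
    intro S hS x y z hx hy h1 h2 h3 hn
    have e0 := h1 0
    have e1 := h1 1
    by_cases hzx : z = x
    · rw [hzx]; exact hx
    have hne : ¬ (z 0 = x 0 ∧ z 1 = x 1) := by
      rintro ⟨ha, hb⟩
      exact hzx (funext (Fin.forall_fin_two.mpr ⟨ha, hb⟩))
    by_cases hA : (y 1 - x 1).natAbs ≤ (y 0 - x 0).natAbs
    · rcases lt_trichotomy (z 1) (x 1) with h | h | h
      · obtain ⟨w, hwS, hwco, hwl⟩ := exists_step hS hx hy (0) (-1) (by omega)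
        have hw0 := hwco 0
        have hw1 := hwco 1
        have key : (min (w 0) (y 0) ≤ z 0 ∧ z 0 ≤ max (w 0) (y 0)) ∧
            (min (w 1) (y 1) ≤ z 1 ∧ z 1 ≤ max (w 1) (y 1)) ∧
            (min (w 0 - w 1) (y 0 - y 1) ≤ z 0 - z 1 ∧ z 0 - z 1 ≤ max (w 0 - w 1) (y 0 - y 1)) ∧
            (min (w 0 + w 1) (y 0 + y 1) ≤ z 0 + z 1 ∧ z 0 + z 1 ≤ max (w 0 + w 1) (y 0 + y 1)) ∧
            (y 0 - w 0).natAbs + (y 1 - w 1).natAbs ≤ n := by omega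
        exact IH S hS w y z hwS hy (Fin.forall_fin_two.mpr ⟨key.1, key.2.1⟩) key.2.2.1 key.2.2.2.1 key.2.2.2.2
      · rcases lt_trichotomy (z 0) (x 0) with h0 | h0 | h0
        · rcases lt_trichotomy (y 1) (x 1) with h4 | h4 | h4
          · obtain ⟨w, hwS, hwco, hwl⟩ := exists_step hS hx hy (-1) (1) (by omega)
            have hw0 := hwco 0
            have hw1 := hwco 1
            have key : (min (w 0) (y 0) ≤ z 0 ∧ z 0 ≤ max (w 0) (y 0)) ∧
                (min (w 1) (y 1) ≤ z 1 ∧ z 1 ≤ max (w 1) (y 1)) ∧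
                (min (w 0 - w 1) (y 0 - y 1) ≤ z 0 - z 1 ∧ z 0 - z 1 ≤ max (w 0 - w 1) (y 0 - y 1)) ∧
                (min (w 0 + w 1) (y 0 + y 1) ≤ z 0 + z 1 ∧ z 0 + z 1 ≤ max (w 0 + w 1) (y 0 + y 1)) ∧
                (y 0 - w 0).natAbs + (y 1 - w 1).natAbs ≤ n := by omega
            exact IH S hS w y z hwS hy (Fin.forall_fin_two.mpr ⟨key.1, key.2.1⟩) key.2.2.1 key.2.2.2.1 key.2.2.2.2
          · obtain ⟨w, hwS, hwco, hwl⟩ := exists_step hS hx hy (-1) (0) (by omega)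
            have hw0 := hwco 0
            have hw1 := hwco 1
            have key : (min (w 0) (y 0) ≤ z 0 ∧ z 0 ≤ max (w 0) (y 0)) ∧
                (min (w 1) (y 1) ≤ z 1 ∧ z 1 ≤ max (w 1) (y 1)) ∧
                (min (w 0 - w 1) (y 0 - y 1) ≤ z 0 - z 1 ∧ z 0 - z 1 ≤ max (w 0 - w 1) (y 0 - y 1)) ∧
                (min (w 0 + w 1) (y 0 + y 1) ≤ z 0 + z 1 ∧ z 0 + z 1 ≤ max (w 0 + w 1) (y 0 + y 1)) ∧
                (y 0 - w 0).natAbs + (y 1 - w 1).natAbs ≤ n := by omega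
            exact IH S hS w y z hwS hy (Fin.forall_fin_two.mpr ⟨key.1, key.2.1⟩) key.2.2.1 key.2.2.2.1 key.2.2.2.2
          · obtain ⟨w, hwS, hwco, hwl⟩ := exists_step hS hx hy (-1) (-1) (by omega)
            have hw0 := hwco 0
            have hw1 := hwco 1
            have key : (min (w 0) (y 0) ≤ z 0 ∧ z 0 ≤ max (w 0) (y 0)) ∧
                (min (w 1) (y 1) ≤ z 1 ∧ z 1 ≤ max (w 1) (y 1)) ∧
                (min (w 0 - w 1) (y 0 - y 1) ≤ z 0 - z 1 ∧ z 0 - z 1 ≤ max (w 0 - w 1) (y 0 - y 1)) ∧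
                (min (w 0 + w 1) (y 0 + y 1) ≤ z 0 + z 1 ∧ z 0 + z 1 ≤ max (w 0 + w 1) (y 0 + y 1)) ∧
                (y 0 - w 0).natAbs + (y 1 - w 1).natAbs ≤ n := by omega
            exact IH S hS w y z hwS hy (Fin.forall_fin_two.mpr ⟨key.1, key.2.1⟩) key.2.2.1 key.2.2.2.1 key.2.2.2.2
        · exact absurd ⟨h0, h⟩ hne
        · rcases lt_trichotomy (y 1) (x 1) with h4 | h4 | h4
          · obtain ⟨w, hwS, hwco, hwl⟩ := exists_step hS hx hy (1) (1) (by omega)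
            have hw0 := hwco 0
            have hw1 := hwco 1
            have key : (min (w 0) (y 0) ≤ z 0 ∧ z 0 ≤ max (w 0) (y 0)) ∧
                (min (w 1) (y 1) ≤ z 1 ∧ z 1 ≤ max (w 1) (y 1)) ∧
                (min (w 0 - w 1) (y 0 - y 1) ≤ z 0 - z 1 ∧ z 0 - z 1 ≤ max (w 0 - w 1) (y 0 - y 1)) ∧
                (min (w 0 + w 1) (y 0 + y 1) ≤ z 0 + z 1 ∧ z 0 + z 1 ≤ max (w 0 + w 1) (y 0 + y 1)) ∧
                (y 0 - w 0).natAbs + (y 1 - w 1).natAbs ≤ n := by omega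
            exact IH S hS w y z hwS hy (Fin.forall_fin_two.mpr ⟨key.1, key.2.1⟩) key.2.2.1 key.2.2.2.1 key.2.2.2.2
          · obtain ⟨w, hwS, hwco, hwl⟩ := exists_step hS hx hy (1) (0) (by omega)
            have hw0 := hwco 0
            have hw1 := hwco 1
            have key : (min (w 0) (y 0) ≤ z 0 ∧ z 0 ≤ max (w 0) (y 0)) ∧
                (min (w 1) (y 1) ≤ z 1 ∧ z 1 ≤ max (w 1) (y 1)) ∧
                (min (w 0 - w 1) (y 0 - y 1) ≤ z 0 - z 1 ∧ z 0 - z 1 ≤ max (w 0 - w 1) (y 0 - y 1)) ∧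
                (min (w 0 + w 1) (y 0 + y 1) ≤ z 0 + z 1 ∧ z 0 + z 1 ≤ max (w 0 + w 1) (y 0 + y 1)) ∧
                (y 0 - w 0).natAbs + (y 1 - w 1).natAbs ≤ n := by omega
            exact IH S hS w y z hwS hy (Fin.forall_fin_two.mpr ⟨key.1, key.2.1⟩) key.2.2.1 key.2.2.2.1 key.2.2.2.2
          · obtain ⟨w, hwS, hwco, hwl⟩ := exists_step hS hx hy (1) (-1) (by omega)
            have hw0 := hwco 0
            have hw1 := hwco 1
            have key : (min (w 0) (y 0) ≤ z 0 ∧ z 0 ≤ max (w 0) (y 0)) ∧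
                (min (w 1) (y 1) ≤ z 1 ∧ z 1 ≤ max (w 1) (y 1)) ∧
                (min (w 0 - w 1) (y 0 - y 1) ≤ z 0 - z 1 ∧ z 0 - z 1 ≤ max (w 0 - w 1) (y 0 - y 1)) ∧
                (min (w 0 + w 1) (y 0 + y 1) ≤ z 0 + z 1 ∧ z 0 + z 1 ≤ max (w 0 + w 1) (y 0 + y 1)) ∧
                (y 0 - w 0).natAbs + (y 1 - w 1).natAbs ≤ n := by omega
            exact IH S hS w y z hwS hy (Fin.forall_fin_two.mpr ⟨key.1, key.2.1⟩) key.2.2.1 key.2.2.2.1 key.2.2.2.2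
      · obtain ⟨w, hwS, hwco, hwl⟩ := exists_step hS hx hy (0) (1) (by omega)
        have hw0 := hwco 0
        have hw1 := hwco 1
        have key : (min (w 0) (y 0) ≤ z 0 ∧ z 0 ≤ max (w 0) (y 0)) ∧
            (min (w 1) (y 1) ≤ z 1 ∧ z 1 ≤ max (w 1) (y 1)) ∧
            (min (w 0 - w 1) (y 0 - y 1) ≤ z 0 - z 1 ∧ z 0 - z 1 ≤ max (w 0 - w 1) (y 0 - y 1)) ∧
            (min (w 0 + w 1) (y 0 + y 1) ≤ z 0 + z 1 ∧ z 0 + z 1 ≤ max (w 0 + w 1) (y 0 + y 1)) ∧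
            (y 0 - w 0).natAbs + (y 1 - w 1).natAbs ≤ n := by omega
        exact IH S hS w y z hwS hy (Fin.forall_fin_two.mpr ⟨key.1, key.2.1⟩) key.2.2.1 key.2.2.2.1 key.2.2.2.2
    · rcases lt_trichotomy (z 0) (x 0) with h | h | h
      · obtain ⟨w, hwS, hwco, hwl⟩ := exists_step hS hx hy (-1) (0) (by omega)
        have hw0 := hwco 0
        have hw1 := hwco 1
        have key : (min (w 0) (y 0) ≤ z 0 ∧ z 0 ≤ max (w 0) (y 0)) ∧
            (min (w 1) (y 1) ≤ z 1 ∧ z 1 ≤ max (w 1) (y 1)) ∧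
            (min (w 0 - w 1) (y 0 - y 1) ≤ z 0 - z 1 ∧ z 0 - z 1 ≤ max (w 0 - w 1) (y 0 - y 1)) ∧
            (min (w 0 + w 1) (y 0 + y 1) ≤ z 0 + z 1 ∧ z 0 + z 1 ≤ max (w 0 + w 1) (y 0 + y 1)) ∧
            (y 0 - w 0).natAbs + (y 1 - w 1).natAbs ≤ n := by omega
        exact IH S hS w y z hwS hy (Fin.forall_fin_two.mpr ⟨key.1, key.2.1⟩) key.2.2.1 key.2.2.2.1 key.2.2.2.2
      · rcases lt_trichotomy (z 1) (x 1) with h0 | h0 | h0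
        · rcases lt_trichotomy (y 0) (x 0) with h4 | h4 | h4
          · obtain ⟨w, hwS, hwco, hwl⟩ := exists_step hS hx hy (1) (-1) (by omega)
            have hw0 := hwco 0
            have hw1 := hwco 1
            have key : (min (w 0) (y 0) ≤ z 0 ∧ z 0 ≤ max (w 0) (y 0)) ∧
                (min (w 1) (y 1) ≤ z 1 ∧ z 1 ≤ max (w 1) (y 1)) ∧
                (min (w 0 - w 1) (y 0 - y 1) ≤ z 0 - z 1 ∧ z 0 - z 1 ≤ max (w 0 - w 1) (y 0 - y 1)) ∧
                (min (w 0 + w 1) (y 0 + y 1) ≤ z 0 + z 1 ∧ z 0 + z 1 ≤ max (w 0 + w 1) (y 0 + y 1)) ∧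
                (y 0 - w 0).natAbs + (y 1 - w 1).natAbs ≤ n := by omega
            exact IH S hS w y z hwS hy (Fin.forall_fin_two.mpr ⟨key.1, key.2.1⟩) key.2.2.1 key.2.2.2.1 key.2.2.2.2
          · obtain ⟨w, hwS, hwco, hwl⟩ := exists_step hS hx hy (0) (-1) (by omega)
            have hw0 := hwco 0
            have hw1 := hwco 1
            have key : (min (w 0) (y 0) ≤ z 0 ∧ z 0 ≤ max (w 0) (y 0)) ∧
                (min (w 1) (y 1) ≤ z 1 ∧ z 1 ≤ max (w 1) (y 1)) ∧
                (min (w 0 - w 1) (y 0 - y 1) ≤ z 0 - z 1 ∧ z 0 - z 1 ≤ max (w 0 - w 1) (y 0 - y 1)) ∧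
                (min (w 0 + w 1) (y 0 + y 1) ≤ z 0 + z 1 ∧ z 0 + z 1 ≤ max (w 0 + w 1) (y 0 + y 1)) ∧
                (y 0 - w 0).natAbs + (y 1 - w 1).natAbs ≤ n := by omega
            exact IH S hS w y z hwS hy (Fin.forall_fin_two.mpr ⟨key.1, key.2.1⟩) key.2.2.1 key.2.2.2.1 key.2.2.2.2
          · obtain ⟨w, hwS, hwco, hwl⟩ := exists_step hS hx hy (-1) (-1) (by omega)
            have hw0 := hwco 0
            have hw1 := hwco 1
            have key : (min (w 0) (y 0) ≤ z 0 ∧ z 0 ≤ max (w 0) (y 0)) ∧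
                (min (w 1) (y 1) ≤ z 1 ∧ z 1 ≤ max (w 1) (y 1)) ∧
                (min (w 0 - w 1) (y 0 - y 1) ≤ z 0 - z 1 ∧ z 0 - z 1 ≤ max (w 0 - w 1) (y 0 - y 1)) ∧
                (min (w 0 + w 1) (y 0 + y 1) ≤ z 0 + z 1 ∧ z 0 + z 1 ≤ max (w 0 + w 1) (y 0 + y 1)) ∧
                (y 0 - w 0).natAbs + (y 1 - w 1).natAbs ≤ n := by omega
            exact IH S hS w y z hwS hy (Fin.forall_fin_two.mpr ⟨key.1, key.2.1⟩) key.2.2.1 key.2.2.2.1 key.2.2.2.2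
        · exact absurd ⟨h, h0⟩ hne
        · rcases lt_trichotomy (y 0) (x 0) with h4 | h4 | h4
          · obtain ⟨w, hwS, hwco, hwl⟩ := exists_step hS hx hy (1) (1) (by omega)
            have hw0 := hwco 0
            have hw1 := hwco 1
            have key : (min (w 0) (y 0) ≤ z 0 ∧ z 0 ≤ max (w 0) (y 0)) ∧
                (min (w 1) (y 1) ≤ z 1 ∧ z 1 ≤ max (w 1) (y 1)) ∧
                (min (w 0 - w 1) (y 0 - y 1) ≤ z 0 - z 1 ∧ z 0 - z 1 ≤ max (w 0 - w 1) (y 0 - y 1)) ∧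
                (min (w 0 + w 1) (y 0 + y 1) ≤ z 0 + z 1 ∧ z 0 + z 1 ≤ max (w 0 + w 1) (y 0 + y 1)) ∧
                (y 0 - w 0).natAbs + (y 1 - w 1).natAbs ≤ n := by omega
            exact IH S hS w y z hwS hy (Fin.forall_fin_two.mpr ⟨key.1, key.2.1⟩) key.2.2.1 key.2.2.2.1 key.2.2.2.2
          · obtain ⟨w, hwS, hwco, hwl⟩ := exists_step hS hx hy (0) (1) (by omega)
            have hw0 := hwco 0
            have hw1 := hwco 1
            have key : (min (w 0) (y 0) ≤ z 0 ∧ z 0 ≤ max (w 0) (y 0)) ∧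
                (min (w 1) (y 1) ≤ z 1 ∧ z 1 ≤ max (w 1) (y 1)) ∧
                (min (w 0 - w 1) (y 0 - y 1) ≤ z 0 - z 1 ∧ z 0 - z 1 ≤ max (w 0 - w 1) (y 0 - y 1)) ∧
                (min (w 0 + w 1) (y 0 + y 1) ≤ z 0 + z 1 ∧ z 0 + z 1 ≤ max (w 0 + w 1) (y 0 + y 1)) ∧
                (y 0 - w 0).natAbs + (y 1 - w 1).natAbs ≤ n := by omega
            exact IH S hS w y z hwS hy (Fin.forall_fin_two.mpr ⟨key.1, key.2.1⟩) key.2.2.1 key.2.2.2.1 key.2.2.2.2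
          · obtain ⟨w, hwS, hwco, hwl⟩ := exists_step hS hx hy (-1) (1) (by omega)
            have hw0 := hwco 0
            have hw1 := hwco 1
            have key : (min (w 0) (y 0) ≤ z 0 ∧ z 0 ≤ max (w 0) (y 0)) ∧
                (min (w 1) (y 1) ≤ z 1 ∧ z 1 ≤ max (w 1) (y 1)) ∧
                (min (w 0 - w 1) (y 0 - y 1) ≤ z 0 - z 1 ∧ z 0 - z 1 ≤ max (w 0 - w 1) (y 0 - y 1)) ∧
                (min (w 0 + w 1) (y 0 + y 1) ≤ z 0 + z 1 ∧ z 0 + z 1 ≤ max (w 0 + w 1) (y 0 + y 1)) ∧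
                (y 0 - w 0).natAbs + (y 1 - w 1).natAbs ≤ n := by omega
            exact IH S hS w y z hwS hy (Fin.forall_fin_two.mpr ⟨key.1, key.2.1⟩) key.2.2.1 key.2.2.2.1 key.2.2.2.2
      · obtain ⟨w, hwS, hwco, hwl⟩ := exists_step hS hx hy (1) (0) (by omega)
        have hw0 := hwco 0
        have hw1 := hwco 1
        have key : (min (w 0) (y 0) ≤ z 0 ∧ z 0 ≤ max (w 0) (y 0)) ∧
            (min (w 1) (y 1) ≤ z 1 ∧ z 1 ≤ max (w 1) (y 1)) ∧
            (min (w 0 - w 1) (y 0 - y 1) ≤ z 0 - z 1 ∧ z 0 - z 1 ≤ max (w 0 - w 1) (y 0 - y 1)) ∧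
            (min (w 0 + w 1) (y 0 + y 1) ≤ z 0 + z 1 ∧ z 0 + z 1 ≤ max (w 0 + w 1) (y 0 + y 1)) ∧
            (y 0 - w 0).natAbs + (y 1 - w 1).natAbs ≤ n := by omega
        exact IH S hS w y z hwS hy (Fin.forall_fin_two.mpr ⟨key.1, key.2.1⟩) key.2.2.1 key.2.2.2.1 key.2.2.2.2

/-- Any integrally convex set in ℤ² containing x and y contains ICH(x,y). -/
theorem integrally_convex_set_contains_ICH
    (S : Set (Fin 2 → ℤ)) (hS : IsIntegrallyConvexSet S)
    (x y : Fin 2 → ℤ) (hx : x ∈ S) (hy : y ∈ S) (z : Fin 2 → ℤ)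
    (h1 : ∀ i, min (x i) (y i) ≤ z i ∧ z i ≤ max (x i) (y i))
    (h2 : min (x 0 - x 1) (y 0 - y 1) ≤ z 0 - z 1 ∧
          z 0 - z 1 ≤ max (x 0 - x 1) (y 0 - y 1))
    (h3 : min (x 0 + x 1) (y 0 + y 1) ≤ z 0 + z 1 ∧
          z 0 + z 1 ≤ max (x 0 + x 1) (y 0 + y 1)) :
    z ∈ S := by
  exact ICH_aux ((y 0 - x 0).natAbs + (y 1 - x 1).natAbs) S hS x y z hx hy h1 h2 h3 le_rfl
end
end

section
/- (Box-barrier property) Let f : ℤⁿ → ℝ ∪ {+∞} be integrally convex, p ∈ (ℤ ∪ {−∞})ⁿ, q ∈ (ℤ ∪ {+∞})ⁿ with p ≤ q. Define S = {x ∈ ℤⁿ : p_i < x_i < q_i ∀i} and let W be the set of integer points x with p ≤ x ≤ q such that x_i = p_i or x_i = q_i for some i. If x̂ ∈ S ∩ dom f satisfies f(x̂) ≤ f(y) for all y ∈ W, then f(x̂) ≤ f(z) for all z ∈ ℤⁿ \ S. -/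
open scoped BigOperators

noncomputable section

def realToEReal : ℝ →+ EReal :=
  ⟨⟨fun r => (r : EReal), EReal.coe_zero⟩, fun a b => EReal.coe_add a b⟩

lemma coe_sum'' {m : ℕ} (g : Fin m → ℝ) :
    ((∑ j, g j : ℝ) : EReal) = ∑ j, ((g j : ℝ) : EReal) :=
  map_sum realToEReal g Finset.univ

lemma term_bound (lam r : ℝ) (a : EReal) (h0 : 0 ≤ lam) (h : (r : EReal) ≤ a) :
    ((lam * r : ℝ) : EReal) ≤ (lam : EReal) * a := by
  rw [EReal.coe_mul]
  exact mul_le_mul_of_nonneg_left h (by exact_mod_cast h0)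

lemma sum_ge_aux (r : ℝ) {m : ℕ} (lam : Fin m → ℝ) (F : Fin m → EReal)
    (h0 : ∀ j, 0 ≤ lam j) (h1 : ∑ j, lam j = 1) (hF : ∀ j, (r : EReal) ≤ F j) :
    (r : EReal) ≤ ∑ j, (lam j : EReal) * F j := by
  calc (r : EReal) = ((∑ j, lam j * r : ℝ) : EReal) := by
        rw [← Finset.sum_mul, h1, one_mul]
    _ = ∑ j, ((lam j * r : ℝ) : EReal) := coe_sum'' _
    _ ≤ ∑ j, (lam j : EReal) * F j :=
        Finset.sum_le_sum fun j _ => term_bound _ _ _ (h0 j) (hF j)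

lemma localExt_le_pt {n : ℕ} (f : (Fin n → ℤ) → EReal) (z : Fin n → ℤ) :
    localExt f (realify z) ≤ f z := by
  apply sInf_le
  refine ⟨1, fun _ => 1, fun _ => z, fun _ => zero_le_one, by simp, ?_, ?_, by simp⟩
  · intro j i; simp [intNbhd, realify]
  · intro i; simp [realify]


/-- Box-barrier property for integrally convex functions. -/
theorem box_barrier_property {n : ℕ}
    (f : (Fin n → ℤ) → EReal) (hbot : ∀ x, f x ≠ ⊥)
    (hf : IsIntegrallyConvexFn f)
    (p : Fin n → WithBot ℤ) (q : Fin n → WithTop ℤ)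
    (hpq : ∀ i (a b : ℤ), p i = (a : WithBot ℤ) → q i = (b : WithTop ℤ) → a ≤ b)
    (S : Set (Fin n → ℤ))
    (hS : S = {x : Fin n → ℤ | ∀ i, p i < ((x i : ℤ) : WithBot ℤ) ∧
                                     ((x i : ℤ) : WithTop ℤ) < q i})
    (W : Set (Fin n → ℤ))
    (hW : W = {x : Fin n → ℤ |
        (∀ i, p i ≤ ((x i : ℤ) : WithBot ℤ) ∧ ((x i : ℤ) : WithTop ℤ) ≤ q i) ∧
        (∃ i, ((x i : ℤ) : WithBot ℤ) = p i ∨ ((x i : ℤ) : WithTop ℤ) = q i)})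
    (xhat : Fin n → ℤ) (hxS : xhat ∈ S) (hxdom : f xhat ≠ ⊤)
    (hbar : ∀ y ∈ W, f xhat ≤ f y) :
    ∀ z : Fin n → ℤ, z ∉ S → f xhat ≤ f z := by
  intro z hzS
  set d : Fin n → ℝ := fun i => (z i : ℝ) - (xhat i : ℝ) with hd
  set g : ℝ → Fin n → ℝ := fun t i => (xhat i : ℝ) + t * d i with hg
  set T : Set ℝ := {t | t ∈ Set.Icc (0:ℝ) 1 ∧
    ∀ i, (∀ a : ℤ, p i = (a : WithBot ℤ) → (a:ℝ) ≤ g t i) ∧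
         (∀ b : ℤ, q i = (b : WithTop ℤ) → g t i ≤ (b:ℝ))} with hT
  -- basic facts from hxS
  have hxlt : ∀ i, (∀ a : ℤ, p i = (a : WithBot ℤ) → a < xhat i) ∧
      (∀ b : ℤ, q i = (b : WithTop ℤ) → xhat i < b) := by
    intro i
    have := hS ▸ hxS
    constructor
    · intro a ha; exact_mod_cast ha ▸ (this i).1
    · intro b hb; exact_mod_cast hb ▸ (this i).2
  -- T is closed
  have hTclosed : IsClosed T := by
    have : T = Set.Icc (0:ℝ) 1 ∩ ⋂ i,
        ((⋂ a : ℤ, ⋂ _ : p i = (a : WithBot ℤ), {t : ℝ | (a:ℝ) ≤ g t i}) ∩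
         (⋂ b : ℤ, ⋂ _ : q i = (b : WithTop ℤ), {t : ℝ | g t i ≤ (b:ℝ)})) := by
      ext t
      simp only [hT, Set.mem_setOf_eq, Set.mem_inter_iff, Set.mem_iInter, forall_and]
    rw [this]
    refine isClosed_Icc.inter (isClosed_iInter fun i => IsClosed.inter ?_ ?_) <;>
      refine isClosed_iInter fun a => isClosed_iInter fun _ => ?_ <;>
      exact isClosed_le (by fun_prop) (by fun_prop)
  have h0T : (0:ℝ) ∈ T := by
    refine ⟨⟨le_refl 0, zero_le_one⟩, fun i => ⟨fun a ha => ?_, fun b hb => ?_⟩⟩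
    · have h3 : (a:ℝ) < (xhat i : ℝ) := by exact_mod_cast (hxlt i).1 a ha
      simp only [hg]; linarith
    · have h3 : (xhat i : ℝ) < (b:ℝ) := by exact_mod_cast (hxlt i).2 b hb
      simp only [hg]; linarith
  have hTbdd : BddAbove T := ⟨1, fun t ht => ht.1.2⟩
  set M : ℝ := ∑ i, |d i| with hM
  have hM0 : 0 ≤ M := Finset.sum_nonneg fun i _ => abs_nonneg _
  set t0 : ℝ := min 1 (1 / (1 + M)) with ht0
  have ht0pos : 0 < t0 := lt_min one_pos (by positivity)
  have ht0le1 : t0 ≤ 1 := min_le_left _ _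
  have hstep : ∀ i, |t0 * d i| ≤ 1 := by
    intro i
    have hdi : |d i| ≤ 1 + M := by
      have : |d i| ≤ M := Finset.single_le_sum (fun i _ => abs_nonneg (d i)) (Finset.mem_univ i)
      linarith
    have ht0' : t0 ≤ 1 / (1 + M) := min_le_right _ _
    calc |t0 * d i| = t0 * |d i| := by rw [abs_mul, abs_of_pos ht0pos]
      _ ≤ (1 / (1 + M)) * (1 + M) :=
          mul_le_mul ht0' hdi (abs_nonneg _) (by positivity)
      _ = 1 := by field_simp
  have ht0T : t0 ∈ T := by
    refine ⟨⟨le_of_lt ht0pos, ht0le1⟩, fun i => ⟨fun a ha => ?_, fun b hb => ?_⟩⟩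
    · have h1 := (hxlt i).1 a ha
      have h2 := hstep i
      have h3 : (a:ℝ) + 1 ≤ (xhat i : ℝ) := by exact_mod_cast h1
      have h4 : -(1:ℝ) ≤ t0 * d i := neg_le_of_abs_le h2
      simp only [hg]; linarith
    · have h1 := (hxlt i).2 b hb
      have h2 := hstep i
      have h3 : (xhat i : ℝ) + 1 ≤ (b:ℝ) := by exact_mod_cast h1
      have h4 : t0 * d i ≤ 1 := le_of_abs_le h2
      simp only [hg]; linarith
  set ts : ℝ := sSup T with hts
  have htsT : ts ∈ T := hTclosed.csSup_mem ⟨0, h0T⟩ hTbdd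
  have htspos : 0 < ts := lt_of_lt_of_le ht0pos (le_csSup hTbdd ht0T)
  have hts1 : ts ≤ 1 := htsT.1.2
  -- binding coordinate
  have hbind : ∃ i, (∃ a : ℤ, p i = (a : WithBot ℤ) ∧ g ts i = (a:ℝ)) ∨
      (∃ b : ℤ, q i = (b : WithTop ℤ) ∧ g ts i = (b:ℝ)) := by
    by_contra hcon
    push_neg at hcon
    have hstrict : ∀ i, (∀ a : ℤ, p i = (a : WithBot ℤ) → (a:ℝ) < g ts i) ∧
        (∀ b : ℤ, q i = (b : WithTop ℤ) → g ts i < (b:ℝ)) := by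
      intro i
      obtain ⟨h1, h2⟩ := hcon i
      exact ⟨fun a ha => lt_of_le_of_ne ((htsT.2 i).1 a ha) (Ne.symm (h1 a ha)),
             fun b hb => lt_of_le_of_ne ((htsT.2 i).2 b hb) (h2 b hb)⟩
    rcases eq_or_lt_of_le hts1 with h1 | h1
    · -- ts = 1, so g ts = z, and strictness puts z in S
      apply hzS
      rw [hS]
      intro i
      have hgz : g ts i = (z i : ℝ) := by simp only [hg, hd, h1]; ring
      constructor
      · rcases eq_or_ne (p i) ⊥ with hb | hb
        · rw [hb]; exact WithBot.bot_lt_coe _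
        · obtain ⟨a, ha⟩ := WithBot.ne_bot_iff_exists.mp hb
          have h2 := (hstrict i).1 a ha.symm
          rw [hgz] at h2
          have h3 : a < z i := by exact_mod_cast h2
          rw [← ha]; exact_mod_cast h3
      · rcases eq_or_ne (q i) ⊤ with hb | hb
        · rw [hb]; exact WithTop.coe_lt_top _
        · obtain ⟨b, hb'⟩ := WithTop.ne_top_iff_exists.mp hb
          have h2 := (hstrict i).2 b hb'.symm
          rw [hgz] at h2
          have h3 : z i < b := by exact_mod_cast h2
          rw [← hb']; exact_mod_cast h3
    · -- ts < 1 : push past ts, contradicting sSup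
      set U : Set ℝ := {t | ∀ i, (∀ a : ℤ, p i = (a : WithBot ℤ) → (a:ℝ) < g t i) ∧
          (∀ b : ℤ, q i = (b : WithTop ℤ) → g t i < (b:ℝ))} with hU
      have hUopen : IsOpen U := by
        have hrepr : U = ⋂ i,
            ((⋂ a : ℤ, ⋂ _ : p i = (a : WithBot ℤ), {t : ℝ | (a:ℝ) < g t i}) ∩
             (⋂ b : ℤ, ⋂ _ : q i = (b : WithTop ℤ), {t : ℝ | g t i < (b:ℝ)})) := by
          ext t
          simp only [hU, Set.mem_setOf_eq, Set.mem_inter_iff, Set.mem_iInter, forall_and]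
        rw [hrepr]
        refine isOpen_iInter_of_finite fun i => IsOpen.inter ?_ ?_
        · rcases eq_or_ne (p i) ⊥ with hb | hb
          · have : (⋂ a : ℤ, ⋂ _ : p i = (a : WithBot ℤ), {t : ℝ | (a:ℝ) < g t i}) =
                Set.univ := by
              ext t; simp [hb]
            rw [this]; exact isOpen_univ
          · obtain ⟨a0, ha0⟩ := WithBot.ne_bot_iff_exists.mp hb
            have : (⋂ a : ℤ, ⋂ _ : p i = (a : WithBot ℤ), {t : ℝ | (a:ℝ) < g t i}) =
                {t : ℝ | (a0:ℝ) < g t i} := by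
              ext t
              simp only [Set.mem_iInter, Set.mem_setOf_eq]
              constructor
              · intro h; exact h a0 ha0.symm
              · intro h a haa
                have : a = a0 := by rw [← ha0] at haa; exact_mod_cast haa.symm
                rwa [this]
            rw [this]; exact isOpen_lt continuous_const (by fun_prop)
        · rcases eq_or_ne (q i) ⊤ with hb | hb
          · have : (⋂ b : ℤ, ⋂ _ : q i = (b : WithTop ℤ), {t : ℝ | g t i < (b:ℝ)}) =
                Set.univ := by
              ext t; simp [hb]
            rw [this]; exact isOpen_univ
          · obtain ⟨b0, hb0⟩ := WithTop.ne_top_iff_exists.mp hb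
            have : (⋂ b : ℤ, ⋂ _ : q i = (b : WithTop ℤ), {t : ℝ | g t i < (b:ℝ)}) =
                {t : ℝ | g t i < (b0:ℝ)} := by
              ext t
              simp only [Set.mem_iInter, Set.mem_setOf_eq]
              constructor
              · intro h; exact h b0 hb0.symm
              · intro h b hbb
                have : b = b0 := by rw [← hb0] at hbb; exact_mod_cast hbb.symm
                rwa [this]
            rw [this]; exact isOpen_lt (by fun_prop) continuous_const
      have htsU : ts ∈ U := hstrict
      obtain ⟨eps, heps, hball⟩ := Metric.isOpen_iff.mp hUopen ts htsU
      set t' : ℝ := min 1 (ts + eps / 2) with ht'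
      have htst' : ts < t' := lt_min h1 (by linarith)
      have ht'ball : t' ∈ Metric.ball ts eps := by
        rw [Metric.mem_ball, Real.dist_eq, abs_lt]
        have : t' ≤ ts + eps / 2 := min_le_right _ _
        constructor <;> linarith
      have ht'T : t' ∈ T := by
        refine ⟨⟨le_trans (le_trans htsT.1.1 (le_of_lt htst')) (le_refl t'), min_le_left _ _⟩,
          fun i => ?_⟩
        obtain ⟨hh1, hh2⟩ := hball ht'ball i
        exact ⟨fun a ha => le_of_lt (hh1 a ha), fun b hb => le_of_lt (hh2 b hb)⟩
      exact absurd (le_csSup hTbdd ht'T) (not_le.mpr htst')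
  obtain ⟨i0, hi0⟩ := hbind
  -- every integer neighbor of g ts lies in W
  have hNW : ∀ y ∈ intNbhd (g ts), y ∈ W := by
    intro y hy
    rw [hW]
    constructor
    · intro i
      constructor
      · rcases eq_or_ne (p i) ⊥ with hb | hb
        · rw [hb]; exact bot_le
        · obtain ⟨a, ha⟩ := WithBot.ne_bot_iff_exists.mp hb
          have h1 : (a:ℝ) ≤ g ts i := (htsT.2 i).1 a ha.symm
          have h2 := abs_lt.mp (hy i)
          have h3 : (a:ℝ) < (y i : ℝ) + 1 := by linarith [h2.2]
          have h4 : a < y i + 1 := by exact_mod_cast h3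
          have h5 : a ≤ y i := by omega
          rw [← ha]; exact_mod_cast h5
      · rcases eq_or_ne (q i) ⊤ with hb | hb
        · rw [hb]; exact le_top
        · obtain ⟨b, hb'⟩ := WithTop.ne_top_iff_exists.mp hb
          have h1 : g ts i ≤ (b:ℝ) := (htsT.2 i).2 b hb'.symm
          have h2 := abs_lt.mp (hy i)
          have h3 : (y i : ℝ) - 1 < (b:ℝ) := by linarith [h2.1]
          have h4 : y i - 1 < b := by exact_mod_cast h3
          have h5 : y i ≤ b := by omega
          rw [← hb']; exact_mod_cast h5
    · rcases hi0 with ⟨a, ha, hua⟩ | ⟨b, hb, hub⟩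
      · refine ⟨i0, Or.inl ?_⟩
        have h2 := hy i0
        rw [hua] at h2
        have h3 : |((a - y i0 : ℤ) : ℝ)| < 1 := by push_cast; push_cast at h2; exact h2
        have h4 : |a - y i0| < 1 := by exact_mod_cast h3
        rw [abs_lt] at h4
        have h5 : y i0 = a := by omega
        rw [ha, h5]
      · refine ⟨i0, Or.inr ?_⟩
        have h2 := hy i0
        rw [hub] at h2
        have h3 : |((b - y i0 : ℤ) : ℝ)| < 1 := by push_cast; push_cast at h2; exact h2
        have h4 : |b - y i0| < 1 := by exact_mod_cast h3
        rw [abs_lt] at h4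
        have h5 : y i0 = b := by omega
        rw [hb, h5]
  set r : ℝ := (f xhat).toReal with hr
  have hfr : f xhat = (r : EReal) := (EReal.coe_toReal hxdom (hbot xhat)).symm
  -- lower bound : r ≤ localExt f (g ts)
  have hlow : (r : EReal) ≤ localExt f (g ts) := by
    apply le_sInf
    rintro v ⟨m, lam, y, hl0, hl1, hN, -, rfl⟩
    exact sum_ge_aux r lam _ hl0 hl1 fun j => hfr ▸ hbar _ (hNW _ (hN j))
  -- upper bound from integral convexity
  have hu_eq : (fun i => ts * (realify z) i + (1 - ts) * (realify xhat) i) = g ts := by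
    funext i; simp only [hg, hd, realify]; ring
  have hconv := hf (realify z) (realify xhat) ts (le_of_lt htspos) hts1
  rw [hu_eq] at hconv
  have hup : localExt f (g ts) ≤ (ts : EReal) * f z + ((1 - ts : ℝ) : EReal) * (r:EReal) := by
    refine le_trans hconv (add_le_add ?_ ?_)
    · exact mul_le_mul_of_nonneg_left (localExt_le_pt f z)
        (by exact_mod_cast le_of_lt htspos)
    · exact mul_le_mul_of_nonneg_left (hfr ▸ localExt_le_pt f xhat)
        (by exact_mod_cast (by linarith : (0:ℝ) ≤ 1 - ts))
  have key : (r : EReal) ≤ (ts:EReal) * f z + ((1-ts:ℝ):EReal) * (r:EReal) :=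
    le_trans hlow hup
  rcases eq_or_ne (f z) ⊤ with hz | hz
  · rw [hz]; exact le_top
  · have hfz : f z = (((f z).toReal : ℝ) : EReal) := (EReal.coe_toReal hz (hbot z)).symm
    set s : ℝ := (f z).toReal with hs
    rw [hfz] at key
    rw [← EReal.coe_mul, ← EReal.coe_mul, ← EReal.coe_add] at key
    have hreal : r ≤ ts * s + (1 - ts) * r := by exact_mod_cast key
    have hrs : r ≤ s := by nlinarith [htspos]
    rw [hfr, hfz]
    exact_mod_cast hrs
end
end

section
/- Let f : ℤ² → ℝ ∪ {+∞} be an integrally convex function, α a positive integer, and x^α ∈ dom f. If f(x^α) ≤ f(x^α + α d) for all d ∈ {−1,0,+1}², then there exists a minimizer x* ∈ ℤ² of f with ‖x^α − x*‖_∞ ≤ 2(α − 1), provided f attains its minimum. -/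
open scoped BigOperators

noncomputable section

/-! ### Auxiliary development -/

namespace ICP

lemma coe_sum {ι : Type*} (J : Finset ι) (g : ι → ℝ) :
    ((∑ j ∈ J, g j : ℝ) : EReal) = ∑ j ∈ J, ((g j : ℝ) : EReal) :=
  map_sum (⟨⟨Real.toEReal, EReal.coe_zero⟩, EReal.coe_add⟩ : ℝ →+ EReal) g J

/-- sum of coerced nonneg reals times a fixed non-⊥ EReal. -/
lemma group_sum {m : ℕ} (J : Finset (Fin m)) (lam : Fin m → ℝ)
    (h0 : ∀ j, 0 ≤ lam j) (C : EReal) (hC : C ≠ ⊥) :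
    (∑ j ∈ J, ((lam j : ℝ) : EReal) * C) = (((∑ j ∈ J, lam j : ℝ)) : EReal) * C := by
  induction C with
  | bot => exact absurd rfl hC
  | coe r =>
      rw [← EReal.coe_mul, Finset.sum_mul, coe_sum J (fun j => lam j * r)]
      exact Finset.sum_congr rfl (fun j _ => (EReal.coe_mul _ _))
  | top =>
      induction J using Finset.induction with
      | empty => simp
      | insert _ _ hnot ih =>
          rename_i a s
          rw [Finset.sum_insert hnot, Finset.sum_insert hnot, ih]
          rcases eq_or_lt_of_le (h0 a) with h | h
          · rw [← h]; simp
          · rcases eq_or_lt_of_le (Finset.sum_nonneg (fun j _ => h0 j)) with h2 | h2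
            · rw [← h2]; simp
            · rw [EReal.coe_mul_top_of_pos h, EReal.coe_mul_top_of_pos h2,
                EReal.coe_mul_top_of_pos (by positivity), EReal.top_add_top]

/-- `localExt` at an integer point equals `f`. -/
lemma localExt_realify {n : ℕ} (f : (Fin n → ℤ) → EReal) (hbot : ∀ x, f x ≠ ⊥)
    (p : Fin n → ℤ) : localExt f (realify p) = f p := by
  apply le_antisymm
  · apply sInf_le
    refine ⟨1, fun _ => 1, fun _ => p, fun _ => le_of_lt one_pos, by simp, ?_, ?_, ?_⟩
    · intro j i; simp [intNbhd, realify]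
    · intro i; simp [realify]
    · simp
  · apply le_sInf
    rintro v ⟨m, lam, y, h0, h1, hN, _, rfl⟩
    have hy : ∀ j, y j = p := by
      intro j
      funext i
      have h2 : |realify p i - ((y j i : ℝ))| < 1 := hN j i
      have h3 : |((p i : ℝ)) - ((y j i : ℝ))| < 1 := h2
      rw [← Int.cast_sub, ← Int.cast_abs] at h3
      have h4 : |p i - y j i| < (1:ℤ) := by exact_mod_cast h3
      rw [abs_lt] at h4; omega
    have : f p = ∑ j, ((lam j : ℝ) : EReal) * f (y j) := by
      calc f p = (((1:ℝ)) : EReal) * f p := by simp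
      _ = (((∑ j, lam j : ℝ)) : EReal) * f p := by rw [h1]
      _ = ∑ j, ((lam j : ℝ) : EReal) * f p := (group_sum Finset.univ lam h0 (f p) (hbot p)).symm
      _ = ∑ j, ((lam j : ℝ) : EReal) * f (y j) :=
          Finset.sum_congr rfl (fun j _ => by rw [hy j])
    exact this.le

/-- chord inequality from integral convexity. -/
lemma chord {n : ℕ} {f : (Fin n → ℤ) → EReal} (hbot : ∀ x, f x ≠ ⊥)
    (hf : IsIntegrallyConvexFn f) (p q : Fin n → ℤ) (t : ℝ) (ht0 : 0 ≤ t) (ht1 : t ≤ 1) :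
    localExt f (fun i => t * (p i : ℝ) + (1 - t) * (q i : ℝ)) ≤
      ((t : ℝ) : EReal) * f p + (((1 - t : ℝ)) : EReal) * f q := by
  have := hf (realify p) (realify q) t ht0 ht1
  rwa [localExt_realify f hbot p, localExt_realify f hbot q] at this


/-! ### dimension 2 specialization -/

def pt (a b : ℤ) : Fin 2 → ℤ := ![a, b]

@[simp] lemma pt0 (a b : ℤ) : pt a b 0 = a := rfl
@[simp] lemma pt1 (a b : ℤ) : pt a b 1 = b := rfl

lemma coe_mul_ne_bot (θ : ℝ) (hθ : 0 ≤ θ) (Q : EReal) (hQ : Q ≠ ⊥) :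
    ((θ : ℝ) : EReal) * Q ≠ ⊥ := by
  induction Q with
  | bot => exact absurd rfl hQ
  | coe r => rw [← EReal.coe_mul]; exact EReal.coe_ne_bot _
  | top =>
      rcases eq_or_lt_of_le hθ with h | h
      · rw [← h]; simp
      · rw [EReal.coe_mul_top_of_pos h]; simp

lemma ne_top_of_scale {θ : ℝ} (hθ : 0 < θ) {Q : EReal}
    (h : ((θ:ℝ):EReal) * Q ≠ ⊤) : Q ≠ ⊤ := by
  rintro rfl
  exact h (EReal.coe_mul_top_of_pos hθ)

lemma half_half (A : EReal) (hA : A ≠ ⊥) :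
    ((1/2 : ℝ) : EReal) * A + ((1/2 : ℝ) : EReal) * A = A := by
  induction A with
  | bot => exact absurd rfl hA
  | coe r =>
      rw [← EReal.coe_mul, ← EReal.coe_add]
      exact congrArg Real.toEReal (by ring)
  | top => rw [EReal.coe_mul_top_of_pos (by norm_num), EReal.top_add_top]

lemma double_le {A B C D : EReal} (hA : A ≠ ⊥) (hB : B ≠ ⊥) (hC : C ≠ ⊥) (hD : D ≠ ⊥)
    (h : ((1/2 : ℝ) : EReal) * A + ((1/2 : ℝ) : EReal) * B ≤
      ((1/2 : ℝ) : EReal) * C + ((1/2 : ℝ) : EReal) * D) : A + B ≤ C + D := by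
  have h2 := add_le_add h h
  rw [add_add_add_comm, half_half A hA, half_half B hB,
    add_add_add_comm, half_half C hC, half_half D hD] at h2
  exact h2

/-- Forced pair lower bound for the local extension at a point with first
coordinate integral and second strictly fractional. -/
lemma forced_pair (f : (Fin 2 → ℤ) → EReal) (hbot : ∀ x, f x ≠ ⊥)
    (u : Fin 2 → ℝ) (c n : ℤ) (θ : ℝ) (hθ0 : 0 < θ) (hθ1 : θ < 1)
    (hu0 : u 0 = (c : ℝ)) (hu1 : u 1 = (n : ℝ) + θ) :
    (((1 - θ : ℝ)) : EReal) * f (pt c n) + ((θ : ℝ) : EReal) * f (pt c (n+1)) ≤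
      localExt f u := by
  classical
  apply le_sInf
  rintro v ⟨m, lam, y, h0, h1, hN, hC, rfl⟩
  have hdich : ∀ j, y j = pt c n ∨ y j = pt c (n+1) := by
    intro j
    have hj0 : y j 0 = c := by
      have h2 : |u 0 - ((y j 0 : ℝ))| < 1 := hN j 0
      rw [hu0, ← Int.cast_sub, ← Int.cast_abs] at h2
      have h3 : |c - y j 0| < (1:ℤ) := by exact_mod_cast h2
      rw [abs_lt] at h3; omega
    have hj1 : y j 1 = n ∨ y j 1 = n + 1 := by
      have h2 : |u 1 - ((y j 1 : ℝ))| < 1 := hN j 1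
      rw [hu1, abs_lt] at h2
      have hl : ((n:ℝ)) - 1 < ((y j 1 : ℝ)) := by linarith
      have hr : ((y j 1 : ℝ)) < ((n:ℝ)) + 2 := by linarith
      have hl' : (n:ℤ) - 1 < y j 1 := by exact_mod_cast hl
      have hr' : y j 1 < (n:ℤ) + 2 := by exact_mod_cast hr
      omega
    rcases hj1 with h | h
    · left; funext i; fin_cases i <;> simp [hj0, h]
    · right; funext i; fin_cases i <;> simp [hj0, h]
  have hcompl : ∀ j ∈ Finset.univ.filter (fun j => ¬ (y j = pt c (n+1))), y j = pt c n := by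
    intro j hj
    rcases hdich j with h | h
    · exact h
    · exact absurd h (by simpa using (Finset.mem_filter.mp hj).2)
  have hwT : ∑ j ∈ Finset.univ.filter (fun j => y j = pt c (n+1)), lam j = θ := by
    have hsplit := Finset.sum_filter_add_sum_filter_not Finset.univ
      (fun j => y j = pt c (n+1)) (fun j => lam j * ((y j 1 : ℝ)))
    rw [hC 1, hu1] at hsplit
    have e1 : ∀ j ∈ Finset.univ.filter (fun j => y j = pt c (n+1)),
        lam j * ((y j 1 : ℝ)) = lam j * ((n:ℝ) + 1) := by
      intro j hj
      have := (Finset.mem_filter.mp hj).2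
      rw [this]; norm_num
    have e2 : ∀ j ∈ Finset.univ.filter (fun j => ¬ (y j = pt c (n+1))),
        lam j * ((y j 1 : ℝ)) = lam j * (n:ℝ) := by
      intro j hj; rw [hcompl j hj]; norm_num
    rw [Finset.sum_congr rfl e1, Finset.sum_congr rfl e2, ← Finset.sum_mul,
      ← Finset.sum_mul] at hsplit
    have hsum := Finset.sum_filter_add_sum_filter_not Finset.univ
      (fun j => y j = pt c (n+1)) lam
    rw [h1] at hsum
    have hkey : (∑ j ∈ Finset.univ.filter (fun j => y j = pt c (n+1)), lam j) * ((n:ℝ) + 1)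
        + (∑ j ∈ Finset.univ.filter (fun j => ¬ (y j = pt c (n+1))), lam j) * (n:ℝ)
        = ((∑ j ∈ Finset.univ.filter (fun j => y j = pt c (n+1)), lam j)
          + (∑ j ∈ Finset.univ.filter (fun j => ¬ (y j = pt c (n+1))), lam j)) * (n:ℝ)
          + (∑ j ∈ Finset.univ.filter (fun j => y j = pt c (n+1)), lam j) := by ring
    rw [hsum, one_mul] at hkey
    linarith [hsplit, hkey]
  have hwTc : ∑ j ∈ Finset.univ.filter (fun j => ¬ (y j = pt c (n+1))), lam j = 1 - θ := by
    have hsum := Finset.sum_filter_add_sum_filter_not Finset.univ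
      (fun j => y j = pt c (n+1)) lam
    rw [h1] at hsum
    linarith [hwT, hsum]
  have hval : (∑ j, ((lam j : ℝ) : EReal) * f (y j)) =
      (((1 - θ : ℝ)) : EReal) * f (pt c n) + ((θ : ℝ) : EReal) * f (pt c (n+1)) := by
    rw [← Finset.sum_filter_add_sum_filter_not Finset.univ
      (fun j => y j = pt c (n+1)) (fun j => ((lam j : ℝ) : EReal) * f (y j))]
    have e1 : ∀ j ∈ Finset.univ.filter (fun j => y j = pt c (n+1)),
        ((lam j : ℝ) : EReal) * f (y j)
        = ((lam j : ℝ) : EReal) * f (pt c (n+1)) := by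
      intro j hj
      have := (Finset.mem_filter.mp hj).2
      rw [this]
    have e2 : ∀ j ∈ Finset.univ.filter (fun j => ¬ (y j = pt c (n+1))),
        ((lam j : ℝ) : EReal) * f (y j) = ((lam j : ℝ) : EReal) * f (pt c n) := by
      intro j hj; rw [hcompl j hj]
    rw [Finset.sum_congr rfl e1, Finset.sum_congr rfl e2,
      group_sum _ lam h0 _ (hbot (pt c (n+1))), group_sum _ lam h0 _ (hbot (pt c n))]
    rw [hwT, hwTc]
    exact add_comm _ _
  exact hval.ge

/-- axis/diagonal lattice-midpoint atom. -/
lemma chord_half {f : (Fin 2 → ℤ) → EReal} (hbot : ∀ x, f x ≠ ⊥)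
    (hf : IsIntegrallyConvexFn f) (p q r : Fin 2 → ℤ)
    (hmid : ∀ i, p i + q i = 2 * r i) :
    f r + f r ≤ f p + f q := by
  have h := chord hbot hf p q (1/2) (by norm_num) (by norm_num)
  have harg : (fun i => (1/2 : ℝ) * ((p i : ℝ)) + (1 - 1/2) * ((q i : ℝ))) = realify r := by
    funext i
    have := hmid i
    have h2 : ((p i : ℝ)) + ((q i : ℝ)) = 2 * ((r i : ℝ)) := by exact_mod_cast this
    simp only [realify]; linarith
  rw [harg, localExt_realify f hbot r] at h
  have hh : (1 - (1/2) : ℝ) = (1/2 : ℝ) := by norm_num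
  rw [hh] at h
  have h' : ((1/2 : ℝ) : EReal) * f r + ((1/2 : ℝ) : EReal) * f r ≤
      ((1/2 : ℝ) : EReal) * f p + ((1/2 : ℝ) : EReal) * f q :=
    le_trans (le_of_eq (half_half (f r) (hbot r))) h
  exact double_le (hbot r) (hbot r) (hbot p) (hbot q) h'

/-- the (2,1) discrete midpoint atom. -/
lemma atom21 {f : (Fin 2 → ℤ) → EReal} (hbot : ∀ x, f x ≠ ⊥)
    (hf : IsIntegrallyConvexFn f) (a b : ℤ) :
    f (pt (a+1) b) + f (pt (a+1) (b+1)) ≤ f (pt a b) + f (pt (a+2) (b+1)) := by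
  have h := chord hbot hf (pt a b) (pt (a+2) (b+1)) (1/2) (by norm_num) (by norm_num)
  have hlow := forced_pair f hbot
    (fun i => (1/2 : ℝ) * ((pt a b i : ℝ)) + (1 - 1/2) * ((pt (a+2) (b+1) i : ℝ)))
    (a+1) b (1/2) (by norm_num) (by norm_num)
    (by show (1/2:ℝ) * ((a:ℤ):ℝ) + (1 - 1/2) * (((a+2:ℤ)):ℝ) = ((a+1:ℤ):ℝ)
        push_cast; ring)
    (by show (1/2:ℝ) * ((b:ℤ):ℝ) + (1 - 1/2) * (((b+1:ℤ)):ℝ) = ((b:ℤ):ℝ) + 1/2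
        push_cast; ring)
  have h2 := le_trans hlow h
  have hh : (1 - (1/2) : ℝ) = (1/2 : ℝ) := by norm_num
  rw [hh] at h2
  exact double_le (hbot _) (hbot _) (hbot _) (hbot _) h2


lemma as_real {A : EReal} (hA : A ≠ ⊤) (hA' : A ≠ ⊥) : ∃ r : ℝ, A = (r : EReal) :=
  ⟨A.toReal, (EReal.coe_toReal hA hA').symm⟩

lemma le_finite_parts {A B R : EReal} (hA : A ≠ ⊥) (hB : B ≠ ⊥) (hR : R ≠ ⊤)
    (h : A + B ≤ R) : A ≠ ⊤ ∧ B ≠ ⊤ := by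
  constructor <;> rintro rfl
  · rw [EReal.top_add_of_ne_bot hB] at h; exact hR (top_le_iff.mp h)
  · rw [EReal.add_top_of_ne_bot hA] at h; exact hR (top_le_iff.mp h)

lemma cancel_pair {a b c d u v : EReal} (hu : u ≠ ⊤) (hu' : u ≠ ⊥)
    (hv : v ≠ ⊤) (hv' : v ≠ ⊥) (h1 : b + u ≤ a + v) (h2 : v + d ≤ u + c) :
    b + d ≤ a + c := by
  obtain ⟨ru, rfl⟩ := as_real hu hu'
  obtain ⟨rv, rfl⟩ := as_real hv hv'
  have h3 := add_le_add h1 h2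
  have e1 : (b + (ru:EReal)) + ((rv:EReal) + d) = (b + d) + (((ru + rv : ℝ)) : EReal) := by
    rw [EReal.coe_add]; abel
  have e2 : (a + (rv:EReal)) + ((ru:EReal) + c) = (a + c) + (((ru + rv : ℝ)) : EReal) := by
    rw [EReal.coe_add]; abel
  rw [e1, e2] at h3
  exact (EReal.addLECancellable_coe (ru + rv)).add_le_add_iff_right.mp h3

lemma ne_top_of_le_coe {A : EReal} {r : ℝ} (h : A ≤ (r : EReal)) : A ≠ ⊤ := by
  rintro rfl
  exact (EReal.coe_lt_top r).not_ge h

/-- Points (vertically) within distance < 1 of the segment from `x` to `x+s`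
are in the effective domain. -/
lemma strip {f : (Fin 2 → ℤ) → EReal} (hbot : ∀ x, f x ≠ ⊥)
    (hf : IsIntegrallyConvexFn f) (x1 x2 s1 s2 c y : ℤ) (hs1 : 0 < s1)
    (hc0 : 0 ≤ c) (hcs : c ≤ s1) (hy : |y * s1 - c * s2| < s1)
    (hx : f (pt x1 x2) ≠ ⊤) (hxs : f (pt (x1+s1) (x2+s2)) ≠ ⊤) :
    f (pt (x1 + c) (x2 + y)) ≠ ⊤ := by
  have hS1 : (0:ℝ) < (s1:ℝ) := by exact_mod_cast hs1
  set t : ℝ := (c:ℝ)/(s1:ℝ) with htdef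
  have ht0 : 0 ≤ t := div_nonneg (by exact_mod_cast hc0) hS1.le
  have ht1 : t ≤ 1 := (div_le_one hS1).mpr (by exact_mod_cast hcs)
  have h := chord hbot hf (pt (x1+s1) (x2+s2)) (pt x1 x2) t ht0 ht1
  obtain ⟨rA, hrA⟩ := as_real hxs (hbot _)
  obtain ⟨rB, hrB⟩ := as_real hx (hbot _)
  rw [hrA, hrB, ← EReal.coe_mul, ← EReal.coe_mul, ← EReal.coe_add] at h
  have hts1 : t * (s1:ℝ) = (c:ℝ) := by
    rw [htdef]; field_simp
  have hu0 : (t * ((pt (x1+s1) (x2+s2) 0 : ℤ):ℝ) + (1-t) * ((pt x1 x2 0 : ℤ):ℝ))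
      = ((x1 + c : ℤ):ℝ) := by
    simp only [pt0]; push_cast; nlinarith [hts1]
  by_cases hdvd : s1 ∣ c * s2
  · obtain ⟨k, hk⟩ := hdvd
    have hyk : y = k := by
      rw [hk] at hy
      have h2 : |(y - k) * s1| < s1 := by
        have e : (y - k) * s1 = y * s1 - s1 * k := by ring
        rw [e]; exact hy
      rw [abs_mul, abs_of_pos hs1] at h2
      have h3 : |y - k| < 1 := by
        by_contra hcon
        push_neg at hcon
        nlinarith [h2]
      rw [abs_lt] at h3; omega
    have hkr : (c:ℝ)*(s2:ℝ) = (s1:ℝ)*(k:ℝ) := by exact_mod_cast hk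
    have hts2 : t * (s2:ℝ) = (k:ℝ) := by
      rw [htdef]
      field_simp
      linarith [hkr]
    have harg : (fun i => t * ((pt (x1+s1) (x2+s2) i : ℤ):ℝ) + (1-t) * ((pt x1 x2 i : ℤ):ℝ))
        = realify (pt (x1+c) (x2+y)) := by
      funext i
      fin_cases i
      · exact hu0
      · show t * ((x2+s2 : ℤ):ℝ) + (1-t) * ((x2 : ℤ):ℝ) = ((x2 + y : ℤ):ℝ)
        rw [hyk]; push_cast; nlinarith [hts2]
    rw [harg, localExt_realify f hbot _] at h
    exact ne_top_of_le_coe h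
  · set q : ℤ := (c * s2) / s1 with hqdef
    set r : ℤ := (c * s2) % s1 with hrdef
    have hqr : s1 * q + r = c * s2 := Int.mul_ediv_add_emod _ _
    have hr0 : 0 < r := by
      rcases lt_or_eq_of_le (Int.emod_nonneg (c*s2) hs1.ne') with h' | h'
      · exact h'
      · exact absurd (Int.dvd_of_emod_eq_zero h'.symm) hdvd
    have hr1 : r < s1 := Int.emod_lt_of_pos _ hs1
    set θ : ℝ := (r:ℝ)/(s1:ℝ) with hθdef
    have hθ0 : 0 < θ := div_pos (by exact_mod_cast hr0) hS1
    have hθ1 : θ < 1 := (div_lt_one hS1).mpr (by exact_mod_cast hr1)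
    have hqrr : (s1:ℝ)*(q:ℝ) + (r:ℝ) = (c:ℝ)*(s2:ℝ) := by exact_mod_cast hqr
    have hts2 : t * (s2:ℝ) = (q:ℝ) + θ := by
      rw [htdef, hθdef]
      field_simp
      linarith [hqrr]
    have hu1 : (t * ((pt (x1+s1) (x2+s2) 1 : ℤ):ℝ) + (1-t) * ((pt x1 x2 1 : ℤ):ℝ))
        = ((x2 + q : ℤ):ℝ) + θ := by
      simp only [pt1]; push_cast; nlinarith [hts2]
    have hlow := forced_pair f hbot
      (fun i => t * ((pt (x1+s1) (x2+s2) i : ℤ):ℝ) + (1-t) * ((pt x1 x2 i : ℤ):ℝ))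
      (x1+c) (x2+q) θ hθ0 hθ1 hu0 hu1
    have h2 := le_trans hlow h
    have hfin := le_finite_parts (coe_mul_ne_bot _ (by linarith) _ (hbot _))
      (coe_mul_ne_bot _ hθ0.le _ (hbot _)) (EReal.coe_ne_top _) h2
    have hyq : y = q ∨ y = q + 1 := by
      rw [abs_lt] at hy
      by_contra hne
      push_neg at hne
      have hcase : y ≤ q - 1 ∨ q + 2 ≤ y := by omega
      rcases hcase with hc | hc
      · have hmul : (y - q) * s1 ≤ (-1) * s1 :=
          mul_le_mul_of_nonneg_right (by omega) hs1.le
        nlinarith [hy.1]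
      · have hmul : (2:ℤ) * s1 ≤ (y - q) * s1 :=
          mul_le_mul_of_nonneg_right (by omega) hs1.le
        nlinarith [hy.2]
    rcases hyq with rfl | rfl
    · exact ne_top_of_scale (by linarith) hfin.1
    · rw [← add_assoc]
      exact ne_top_of_scale hθ0 hfin.2
  

lemma ediv_eq_of_between {a b k : ℤ} (hb : 0 < b) (h1 : b*k ≤ a) (h2 : a < b*(k+1)) :
    a / b = k := by
  have hde := Int.mul_ediv_add_emod a b
  have hm0 := Int.emod_nonneg a hb.ne'
  have hm1 := Int.emod_lt_of_pos a hb
  have hk1 : k < a / b + 1 := by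
    have hlt : b * k < b * (a/b + 1) := by nlinarith
    exact lt_of_mul_lt_mul_left hlt hb.le
  have hk2 : a / b < k + 1 := by
    have hlt : b * (a/b) < b * (k+1) := by nlinarith
    exact lt_of_mul_lt_mul_left hlt hb.le
  omega

/-- telescope along the segment, exchanging a horizontal unit step. -/
lemma telescope1 {f : (Fin 2 → ℤ) → EReal} (hbot : ∀ x, f x ≠ ⊥)
    (hf : IsIntegrallyConvexFn f) (x1 x2 s1 s2 : ℤ) (hs2 : 0 ≤ s2) (hlt : s2 < s1)
    (hx : f (pt x1 x2) ≠ ⊤) (hxs : f (pt (x1+s1) (x2+s2)) ≠ ⊤) :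
    f (pt (x1+1) x2) + f (pt (x1+s1-1) (x2+s2)) ≤
      f (pt x1 x2) + f (pt (x1+s1) (x2+s2)) := by
  have hs1 : 0 < s1 := lt_of_le_of_lt hs2 hlt
  set m : ℤ → ℤ := fun c => (c * s2) / s1 with hmdef
  have hdlow : ∀ c, s1 * m c ≤ c * s2 := by
    intro c
    have hde := Int.mul_ediv_add_emod (c*s2) s1
    have hm0 := Int.emod_nonneg (c*s2) hs1.ne'
    linarith
  have hdhigh : ∀ c, c * s2 < s1 * m c + s1 := by
    intro c
    have hde := Int.mul_ediv_add_emod (c*s2) s1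
    have hm1 := Int.emod_lt_of_pos (c*s2) hs1
    linarith
  have hstep : ∀ c : ℤ, m (c+1) = m c ∨ m (c+1) = m c + 1 := by
    intro c
    have h1 : m c ≤ m (c+1) := by
      have hlt2 : s1 * (m c) < s1 * (m (c+1) + 1) := by
        have := hdlow c; have := hdhigh (c+1)
        nlinarith
      have := lt_of_mul_lt_mul_left hlt2 hs1.le
      omega
    have h2 : m (c+1) < m c + 2 := by
      have hlt2 : s1 * (m (c+1)) < s1 * (m c + 2) := by
        have := hdlow (c+1); have := hdhigh c
        nlinarith
      exact lt_of_mul_lt_mul_left hlt2 hs1.le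
    omega
  have hm1 : m 1 = 0 := by
    show (1 * s2) / s1 = 0
    rw [one_mul]
    exact ediv_eq_of_between hs1 (by linarith) (by linarith)
  have hms1 : m s1 = s2 := by
    show (s1 * s2) / s1 = s2
    exact ediv_eq_of_between hs1 (by linarith) (by nlinarith)
  -- domain facts
  have hstripP : ∀ c : ℤ, 0 ≤ c → c ≤ s1 - 1 → f (pt (x1 + c) (x2 + m (c+1))) ≠ ⊤ := by
    intro c hc0 hc1
    apply strip hbot hf x1 x2 s1 s2 c (m (c+1)) hs1 hc0 (by omega) _ hx hxs
    rw [abs_lt]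
    constructor
    · have := hdhigh (c+1); nlinarith
    · have := hdlow (c+1); nlinarith
  have hstripQ : ∀ c : ℤ, 0 ≤ c → c ≤ s1 - 1 → f (pt (x1 + c + 1) (x2 + m (c+1))) ≠ ⊤ := by
    intro c hc0 hc1
    have h := strip hbot hf x1 x2 s1 s2 (c+1) (m (c+1)) hs1 (by omega) (by omega) ?_ hx hxs
    · have e : x1 + (c+1) = x1 + c + 1 := by ring
      rwa [e] at h
    rw [abs_lt]
    constructor
    · have := hdhigh (c+1); nlinarith
    · have := hdlow (c+1); nlinarith
  have main : ∀ n : ℕ, (n:ℤ) ≤ s1 - 1 →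
      f (pt (x1+1) x2) + f (pt (x1+(n:ℤ)) (x2 + m ((n:ℤ)+1))) ≤
        f (pt x1 x2) + f (pt (x1+(n:ℤ)+1) (x2 + m ((n:ℤ)+1))) := by
    intro n
    induction n with
    | zero =>
        intro _
        simp only [Nat.cast_zero, add_zero, zero_add, hm1]
        exact le_of_eq (add_comm _ _)
    | succ n ih =>
        intro hn1
        have hn1' : (n:ℤ) ≤ s1 - 1 := by push_cast at hn1 ⊢; omega
        have ihh := ih hn1'
        set c : ℤ := (n:ℤ) with hcdef
        have hc0 : 0 ≤ c := Int.natCast_nonneg n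
        rcases hstep (c+1) with hB0 | hB0
        · -- horizontal step, axis atom
          have hB : m (c+2) = m (c+1) := by
            rw [show c+2 = c+1+1 by ring]; exact hB0
          have hatom := chord_half hbot hf (pt (x1+c) (x2 + m (c+1)))
            (pt (x1+c+2) (x2 + m (c+1))) (pt (x1+c+1) (x2 + m (c+1)))
            (by intro i; fin_cases i <;> (simp; ring))
          have hh : f (pt (x1+c+1) (x2 + m (c+1))) + f (pt (x1+c+1) (x2 + m (c+2)))
              ≤ f (pt (x1+c) (x2 + m (c+1))) + f (pt (x1+c+2) (x2 + m (c+2))) := by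
            rw [hB]; exact hatom
          have hcan := cancel_pair (hstripP c hc0 (by omega)) (hbot _)
            (hstripQ c hc0 (by omega)) (hbot _) ihh hh
          have egoal : f (pt (x1+1) x2) + f (pt (x1+c+1) (x2 + m (c+2))) ≤
              f (pt x1 x2) + f (pt (x1+c+2) (x2 + m (c+2))) := hcan
          convert egoal using 4 <;> push_cast [hcdef] <;> ring
        · -- diagonal step, (2,1) atom
          have hB : m (c+2) = m (c+1) + 1 := by
            rw [show c+2 = c+1+1 by ring]; exact hB0
          have hatom := atom21 hbot hf (x1+c) (x2 + m (c+1))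
          have hh : f (pt (x1+c+1) (x2 + m (c+1))) + f (pt (x1+c+1) (x2 + m (c+2)))
              ≤ f (pt (x1+c) (x2 + m (c+1))) + f (pt (x1+c+2) (x2 + m (c+2))) := by
            rw [hB, show x2 + (m (c+1) + 1) = x2 + m (c+1) + 1 from by ring]
            exact hatom
          have hcan := cancel_pair (hstripP c hc0 (by omega)) (hbot _)
            (hstripQ c hc0 (by omega)) (hbot _) ihh hh
          have egoal : f (pt (x1+1) x2) + f (pt (x1+c+1) (x2 + m (c+2))) ≤
              f (pt x1 x2) + f (pt (x1+c+2) (x2 + m (c+2))) := hcan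
          convert egoal using 4 <;> push_cast [hcdef] <;> ring
  have hfin := main (s1-1).toNat (by rw [Int.toNat_of_nonneg (by omega)])
  rw [Int.toNat_of_nonneg (show (0:ℤ) ≤ s1 - 1 by omega)] at hfin
  have e1 : s1 - 1 + 1 = s1 := by ring
  rw [e1, hms1] at hfin
  convert hfin using 4 <;> ring

/-- telescope along the segment, exchanging a diagonal unit step. -/
lemma telescope2 {f : (Fin 2 → ℤ) → EReal} (hbot : ∀ x, f x ≠ ⊥)
    (hf : IsIntegrallyConvexFn f) (x1 x2 s1 s2 : ℤ) (hs2 : 0 < s2) (hle : s2 ≤ s1)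
    (hx : f (pt x1 x2) ≠ ⊤) (hxs : f (pt (x1+s1) (x2+s2)) ≠ ⊤) :
    f (pt (x1+1) (x2+1)) + f (pt (x1+s1-1) (x2+s2-1)) ≤
      f (pt x1 x2) + f (pt (x1+s1) (x2+s2)) := by
  have hs1 : 0 < s1 := lt_of_lt_of_le hs2 hle
  set M : ℤ → ℤ := fun c => (c * s2 + s1 - 1) / s1 with hMdef
  have hdlow : ∀ c, c * s2 ≤ s1 * M c := by
    intro c
    have hde := Int.mul_ediv_add_emod (c*s2 + s1 - 1) s1
    have hm1 := Int.emod_lt_of_pos (c*s2 + s1 - 1) hs1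
    have : s1 * M c = s1 * ((c * s2 + s1 - 1) / s1) := rfl
    linarith
  have hdhigh : ∀ c, s1 * M c ≤ c * s2 + s1 - 1 := by
    intro c
    have hde := Int.mul_ediv_add_emod (c*s2 + s1 - 1) s1
    have hm0 := Int.emod_nonneg (c*s2 + s1 - 1) hs1.ne'
    linarith
  have hstep : ∀ c : ℤ, M (c+1) = M c ∨ M (c+1) = M c + 1 := by
    intro c
    have h1 : M c ≤ M (c+1) := by
      have hlt2 : s1 * (M c) < s1 * (M (c+1) + 1) := by
        have := hdhigh c; have := hdlow (c+1)
        nlinarith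
      have := lt_of_mul_lt_mul_left hlt2 hs1.le
      omega
    have h2 : M (c+1) < M c + 2 := by
      have hlt2 : s1 * (M (c+1)) < s1 * (M c + 2) := by
        have := hdhigh (c+1); have := hdlow c
        nlinarith
      exact lt_of_mul_lt_mul_left hlt2 hs1.le
    omega
  have hM1 : M 1 = 1 := by
    show (1 * s2 + s1 - 1) / s1 = 1
    exact ediv_eq_of_between hs1 (by linarith) (by linarith)
  have hMs1 : M s1 = s2 := by
    show (s1 * s2 + s1 - 1) / s1 = s2
    exact ediv_eq_of_between hs1 (by nlinarith) (by nlinarith)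
  have hstripP : ∀ c : ℤ, 0 ≤ c → c ≤ s1 - 1 → f (pt (x1 + c) (x2 + (M (c+1) - 1))) ≠ ⊤ := by
    intro c hc0 hc1
    apply strip hbot hf x1 x2 s1 s2 c (M (c+1) - 1) hs1 hc0 (by omega) _ hx hxs
    rw [abs_lt]
    constructor
    · have := hdlow (c+1); nlinarith
    · have := hdhigh (c+1); nlinarith
  have hstripQ : ∀ c : ℤ, 0 ≤ c → c ≤ s1 - 1 → f (pt (x1 + c + 1) (x2 + M (c+1))) ≠ ⊤ := by
    intro c hc0 hc1
    have h := strip hbot hf x1 x2 s1 s2 (c+1) (M (c+1)) hs1 (by omega) (by omega) ?_ hx hxs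
    · have e : x1 + (c+1) = x1 + c + 1 := by ring
      rwa [e] at h
    rw [abs_lt]
    constructor
    · have := hdlow (c+1); nlinarith
    · have := hdhigh (c+1); nlinarith
  have main : ∀ n : ℕ, (n:ℤ) ≤ s1 - 1 →
      f (pt (x1+1) (x2+1)) + f (pt (x1+(n:ℤ)) (x2 + (M ((n:ℤ)+1) - 1))) ≤
        f (pt x1 x2) + f (pt (x1+(n:ℤ)+1) (x2 + M ((n:ℤ)+1))) := by
    intro n
    induction n with
    | zero =>
        intro _
        simp only [Nat.cast_zero, add_zero, zero_add, hM1]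
        have e : x2 + (1 - 1) = x2 := by ring
        rw [e]
        exact le_of_eq (add_comm _ _)
    | succ n ih =>
        intro hn1
        have hn1' : (n:ℤ) ≤ s1 - 1 := by push_cast at hn1 ⊢; omega
        have ihh := ih hn1'
        set c : ℤ := (n:ℤ) with hcdef
        have hc0 : 0 ≤ c := Int.natCast_nonneg n
        rcases hstep (c+1) with hB0 | hB0
        · -- horizontal step: (2,1) atom based at q_c
          have hB : M (c+2) = M (c+1) := by
            rw [show c+2 = c+1+1 by ring]; exact hB0
          have hatom := atom21 hbot hf (x1+c) (x2 + (M (c+1) - 1))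
          rw [show x2 + (M (c+1) - 1) + 1 = x2 + M (c+1) from by ring] at hatom
          have hh : f (pt (x1+c+1) (x2 + M (c+1))) + f (pt (x1+c+1) (x2 + (M (c+2) - 1)))
              ≤ f (pt (x1+c) (x2 + (M (c+1) - 1))) + f (pt (x1+c+2) (x2 + M (c+2))) := by
            rw [hB]
            exact le_trans (le_of_eq (add_comm _ _)) hatom
          have hcan := cancel_pair (hstripP c hc0 (by omega)) (hbot _)
            (hstripQ c hc0 (by omega)) (hbot _) ihh hh
          have egoal : f (pt (x1+1) (x2+1)) + f (pt (x1+c+1) (x2 + (M (c+2) - 1))) ≤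
              f (pt x1 x2) + f (pt (x1+c+2) (x2 + M (c+2))) := hcan
          convert egoal using 4 <;> push_cast [hcdef] <;> ring
        · -- diagonal step: diagonal chord atom
          have hB : M (c+2) = M (c+1) + 1 := by
            rw [show c+2 = c+1+1 by ring]; exact hB0
          have hatom := chord_half hbot hf (pt (x1+c) (x2 + (M (c+1) - 1)))
            (pt (x1+c+2) (x2 + (M (c+1) + 1))) (pt (x1+c+1) (x2 + M (c+1)))
            (by intro i; fin_cases i <;> (simp; ring))
          have hh : f (pt (x1+c+1) (x2 + M (c+1))) + f (pt (x1+c+1) (x2 + (M (c+2) - 1)))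
              ≤ f (pt (x1+c) (x2 + (M (c+1) - 1))) + f (pt (x1+c+2) (x2 + M (c+2))) := by
            rw [hB, show x2 + (M (c+1) + 1 - 1) = x2 + M (c+1) from by ring,
              show x2 + (M (c+1) + 1) = x2 + (M (c+1) + 1) from rfl]
            exact hatom
          have hcan := cancel_pair (hstripP c hc0 (by omega)) (hbot _)
            (hstripQ c hc0 (by omega)) (hbot _) ihh hh
          have egoal : f (pt (x1+1) (x2+1)) + f (pt (x1+c+1) (x2 + (M (c+2) - 1))) ≤
              f (pt x1 x2) + f (pt (x1+c+2) (x2 + M (c+2))) := hcan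
          convert egoal using 4 <;> push_cast [hcdef] <;> ring
  have hfin := main (s1-1).toNat (by rw [Int.toNat_of_nonneg (by omega)])
  rw [Int.toNat_of_nonneg (show (0:ℤ) ≤ s1 - 1 by omega)] at hfin
  have e1 : s1 - 1 + 1 = s1 := by ring
  rw [e1, hMs1] at hfin
  convert hfin using 4 <;> ring


/-- Core contradiction: a nearest minimizer in the normalized sector `0 ≤ b ≤ a`
cannot be at distance `≥ 2α - 1`. -/
lemma core {f : (Fin 2 → ℤ) → EReal} (hbot : ∀ x, f x ≠ ⊥)
    (hf : IsIntegrallyConvexFn f) (α : ℕ) (hα : 0 < α) (x1 x2 : ℤ)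
    (hdom : f (pt x1 x2) ≠ ⊤)
    (a b : ℤ) (hb0 : 0 ≤ b) (hba : b ≤ a) (ha : 2*(α:ℤ) - 1 ≤ a)
    (hzmin : ∀ w, f (pt (x1+a) (x2+b)) ≤ f w)
    (hclose : ∀ v1 v2 : ℤ, max |v1| |v2| < a → ¬(∀ w, f (pt (x1+v1) (x2+v2)) ≤ f w))
    (hcorner : ∀ d1 d2 : ℤ, |d1| ≤ 1 → |d2| ≤ 1 →
      f (pt x1 x2) ≤ f (pt (x1 + (α:ℤ)*d1) (x2 + (α:ℤ)*d2))) :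
    False := by
  have hα1 : 1 ≤ (α:ℤ) := by exact_mod_cast hα
  have ha1 : 1 ≤ a := by omega
  have hμtop : f (pt (x1+a) (x2+b)) ≠ ⊤ := by
    intro h
    exact hdom (top_le_iff.mp (h ▸ hzmin (pt x1 x2)))
  obtain ⟨mu0, hmu0⟩ := as_real hμtop (hbot _)
  obtain ⟨b0, hb0r⟩ := as_real hdom (hbot _)
  have hαR : 1 ≤ ((α:ℕ):ℝ) := by exact_mod_cast hα
  by_cases hb : b ≤ a - (α:ℤ)
  · -- horizontal chain towards corner (α, 0)
    have hblt : b < a := by omega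
    have tele0 := telescope1 hbot hf x1 x2 a b hb0 hblt hdom hμtop
    rw [hb0r, hmu0, ← EReal.coe_add] at tele0
    have hfin0 := le_finite_parts (hbot _) (hbot _) (EReal.coe_ne_top _) tele0
    have hW : f (pt (x1+a-1) (x2+b)) ≠ ⊤ := hfin0.2
    obtain ⟨w0, hw0⟩ := as_real hW (hbot _)
    have hWgt : f (pt (x1+a) (x2+b)) < f (pt (x1+a-1) (x2+b)) := by
      have hcl := hclose (a-1) b (by
        rw [abs_of_nonneg (by omega : (0:ℤ) ≤ a - 1), abs_of_nonneg hb0]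
        omega)
      rw [show x1 + (a-1) = x1 + a - 1 from by ring] at hcl
      push_neg at hcl
      obtain ⟨w, hw⟩ := hcl
      exact lt_of_le_of_lt (hzmin w) hw
    have hε : 0 < w0 - mu0 := by
      rw [hmu0, hw0, EReal.coe_lt_coe_iff] at hWgt
      linarith
    have claim : ∀ i : ℕ, (i:ℤ) ≤ (α:ℤ) →
        ∃ r : ℝ, f (pt (x1+(i:ℤ)) x2) = (r:EReal) ∧ r ≤ b0 - (i:ℝ) * (w0 - mu0) := by
      intro i
      induction i with
      | zero =>
          intro _
          refine ⟨b0, ?_, by norm_num⟩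
          simpa using hb0r
      | succ i ih =>
          intro hi1
          have hi : (i:ℤ) ≤ (α:ℤ) := by push_cast at hi1 ⊢; omega
          have hi' : (i:ℤ) ≤ (α:ℤ) - 1 := by push_cast at hi1 ⊢; omega
          obtain ⟨r, hr, hrle⟩ := ih hi
          have tele := telescope1 hbot hf (x1+(i:ℤ)) x2 (a - (i:ℤ)) b hb0
            (by omega) (by rw [hr]; exact EReal.coe_ne_top _)
            (by rw [show x1+(i:ℤ)+(a-(i:ℤ)) = x1 + a from by ring]; exact hμtop)
          rw [show x1+(i:ℤ)+(a-(i:ℤ))-1 = x1+a-1 from by ring,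
            show x1+(i:ℤ)+(a-(i:ℤ)) = x1+a from by ring, hr, hmu0, hw0,
            ← EReal.coe_add] at tele
          have hfin := le_finite_parts (hbot _) (EReal.coe_ne_bot _)
            (EReal.coe_ne_top _) tele
          obtain ⟨r', hr'⟩ := as_real hfin.1 (hbot _)
          rw [hr', ← EReal.coe_add, EReal.coe_le_coe_iff] at tele
          refine ⟨r', ?_, ?_⟩
          · rw [show ((i+1:ℕ):ℤ) = (i:ℤ)+1 from by push_cast; ring,
              show x1+((i:ℤ)+1) = x1+(i:ℤ)+1 from by ring]
            exact hr'
          · push_cast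
            linarith
    obtain ⟨rA, hrA, hrAle⟩ := claim α le_rfl
    have corner := hcorner 1 0 (by norm_num) (by norm_num)
    rw [show x1 + (α:ℤ)*1 = x1 + (α:ℤ) from by ring,
      show x2 + (α:ℤ)*0 = x2 from by ring, hb0r, hrA, EReal.coe_le_coe_iff] at corner
    nlinarith
  · -- diagonal chain towards corner (α, α)
    have hbα : (α:ℤ) ≤ b := by omega
    have hb1 : 0 < b := by omega
    have tele0 := telescope2 hbot hf x1 x2 a b hb1 hba hdom hμtop
    rw [hb0r, hmu0, ← EReal.coe_add] at tele0
    have hfin0 := le_finite_parts (hbot _) (hbot _) (EReal.coe_ne_top _) tele0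
    have hW : f (pt (x1+a-1) (x2+b-1)) ≠ ⊤ := hfin0.2
    obtain ⟨w0, hw0⟩ := as_real hW (hbot _)
    have hWgt : f (pt (x1+a) (x2+b)) < f (pt (x1+a-1) (x2+b-1)) := by
      have hcl := hclose (a-1) (b-1) (by
        rw [abs_of_nonneg (by omega : (0:ℤ) ≤ a - 1), abs_of_nonneg (by omega : (0:ℤ) ≤ b - 1)]
        omega)
      rw [show x1 + (a-1) = x1 + a - 1 from by ring,
        show x2 + (b-1) = x2 + b - 1 from by ring] at hcl
      push_neg at hcl
      obtain ⟨w, hw⟩ := hcl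
      exact lt_of_le_of_lt (hzmin w) hw
    have hε : 0 < w0 - mu0 := by
      rw [hmu0, hw0, EReal.coe_lt_coe_iff] at hWgt
      linarith
    have claim : ∀ i : ℕ, (i:ℤ) ≤ (α:ℤ) →
        ∃ r : ℝ, f (pt (x1+(i:ℤ)) (x2+(i:ℤ))) = (r:EReal) ∧ r ≤ b0 - (i:ℝ) * (w0 - mu0) := by
      intro i
      induction i with
      | zero =>
          intro _
          refine ⟨b0, ?_, by norm_num⟩
          simpa using hb0r
      | succ i ih =>
          intro hi1
          have hi : (i:ℤ) ≤ (α:ℤ) := by push_cast at hi1 ⊢; omega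
          have hi' : (i:ℤ) ≤ (α:ℤ) - 1 := by push_cast at hi1 ⊢; omega
          obtain ⟨r, hr, hrle⟩ := ih hi
          have tele := telescope2 hbot hf (x1+(i:ℤ)) (x2+(i:ℤ)) (a - (i:ℤ)) (b - (i:ℤ))
            (by omega) (by omega) (by rw [hr]; exact EReal.coe_ne_top _)
            (by rw [show x1+(i:ℤ)+(a-(i:ℤ)) = x1 + a from by ring,
                  show x2+(i:ℤ)+(b-(i:ℤ)) = x2 + b from by ring]; exact hμtop)
          rw [show x1+(i:ℤ)+(a-(i:ℤ))-1 = x1+a-1 from by ring,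
            show x2+(i:ℤ)+(b-(i:ℤ))-1 = x2+b-1 from by ring,
            show x1+(i:ℤ)+(a-(i:ℤ)) = x1+a from by ring,
            show x2+(i:ℤ)+(b-(i:ℤ)) = x2+b from by ring, hr, hmu0, hw0,
            ← EReal.coe_add] at tele
          have hfin := le_finite_parts (hbot _) (EReal.coe_ne_bot _)
            (EReal.coe_ne_top _) tele
          obtain ⟨r', hr'⟩ := as_real hfin.1 (hbot _)
          rw [hr', ← EReal.coe_add, EReal.coe_le_coe_iff] at tele
          refine ⟨r', ?_, ?_⟩
          · rw [show ((i+1:ℕ):ℤ) = (i:ℤ)+1 from by push_cast; ring,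
              show x1+((i:ℤ)+1) = x1+(i:ℤ)+1 from by ring,
              show x2+((i:ℤ)+1) = x2+(i:ℤ)+1 from by ring]
            exact hr'
          · push_cast
            linarith
    obtain ⟨rA, hrA, hrAle⟩ := claim α le_rfl
    have corner := hcorner 1 1 (by norm_num) (by norm_num)
    rw [show x1 + (α:ℤ)*1 = x1 + (α:ℤ) from by ring,
      show x2 + (α:ℤ)*1 = x2 + (α:ℤ) from by ring, hb0r, hrA, EReal.coe_le_coe_iff] at corner
    nlinarith


/-! ### signed permutation transport -/

def sigZ (p : Equiv.Perm (Fin 2)) (e : Fin 2 → ℤ) (v : Fin 2 → ℤ) : Fin 2 → ℤ :=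
  fun i => e i * v (p i)

def sigR (p : Equiv.Perm (Fin 2)) (e : Fin 2 → ℤ) (u : Fin 2 → ℝ) : Fin 2 → ℝ :=
  fun i => ((e i : ℤ) : ℝ) * u (p i)

lemma sig_inv_right (p : Equiv.Perm (Fin 2)) (hpp : p.symm = p) (e : Fin 2 → ℤ)
    (he : ∀ i, e i = 1 ∨ e i = -1) (v : Fin 2 → ℤ) :
    sigZ p e (sigZ p (fun i => e (p i)) v) = v := by
  funext i
  show e i * (e (p (p i)) * v (p (p i))) = v i
  have hp2 : p (p i) = i := p.injective (by rw [← Equiv.eq_symm_apply, hpp])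
  rw [hp2]
  rcases he i with h | h <;> rw [h] <;> ring

lemma sig_inv_left (p : Equiv.Perm (Fin 2)) (hpp : p.symm = p) (e : Fin 2 → ℤ)
    (he : ∀ i, e i = 1 ∨ e i = -1) (v : Fin 2 → ℤ) :
    sigZ p (fun i => e (p i)) (sigZ p e v) = v := by
  funext i
  show e (p i) * (e (p i) * v (p (p i))) = v i
  have hp2 : p (p i) = i := p.injective (by rw [← Equiv.eq_symm_apply, hpp])
  rw [hp2]
  rcases he (p i) with h | h <;> rw [h] <;> ring

lemma localExt_sig_le (f : (Fin 2 → ℤ) → EReal) (p : Equiv.Perm (Fin 2)) (e : Fin 2 → ℤ)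
    (he : ∀ i, e i = 1 ∨ e i = -1) (u : Fin 2 → ℝ) :
    localExt f (sigR p e u) ≤ localExt (fun v => f (sigZ p e v)) u := by
  apply sInf_le_sInf
  rintro v ⟨m, lam, y, h0, h1, hN, hC, rfl⟩
  refine ⟨m, lam, fun j => sigZ p e (y j), h0, h1, ?_, ?_, rfl⟩
  · intro j i
    have hh := hN j (p i)
    show |sigR p e u i - ((e i * y j (p i) : ℤ) : ℝ)| < 1
    rcases he i with h | h
    · show |((e i : ℤ):ℝ) * u (p i) - ((e i * y j (p i) : ℤ) : ℝ)| < 1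
      rw [h]; push_cast
      simpa using hh
    · show |((e i : ℤ):ℝ) * u (p i) - ((e i * y j (p i) : ℤ) : ℝ)| < 1
      rw [h]; push_cast
      rw [show (-1:ℝ) * u (p i) - (-1) * ((y j (p i) : ℤ):ℝ)
          = -(u (p i) - ((y j (p i) : ℤ):ℝ)) from by ring, abs_neg]
      exact hh
  · intro i
    show (∑ j, lam j * ((e i * y j (p i) : ℤ) : ℝ)) = ((e i : ℤ):ℝ) * u (p i)
    rw [← hC (p i), Finset.mul_sum]
    apply Finset.sum_congr rfl
    intro j _
    push_cast
    ring

lemma localExt_sig (f : (Fin 2 → ℤ) → EReal) (p : Equiv.Perm (Fin 2)) (hpp : p.symm = p)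
    (e : Fin 2 → ℤ) (he : ∀ i, e i = 1 ∨ e i = -1) (u : Fin 2 → ℝ) :
    localExt (fun v => f (sigZ p e v)) u = localExt f (sigR p e u) := by
  have he' : ∀ i, (fun i => e (p i)) i = 1 ∨ (fun i => e (p i)) i = -1 := fun i => he (p i)
  apply le_antisymm _ (localExt_sig_le f p e he u)
  have h2 := localExt_sig_le (fun v => f (sigZ p e v)) p (fun i => e (p i)) he' (sigR p e u)
  have harg : sigR p (fun i => e (p i)) (sigR p e u) = u := by
    funext i
    show ((e (p i) : ℤ):ℝ) * (((e (p i) : ℤ):ℝ) * u (p (p i))) = u i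
    have hp2 : p (p i) = i := p.injective (by rw [← Equiv.eq_symm_apply, hpp])
    rw [hp2]
    rcases he (p i) with h | h <;> rw [h] <;> push_cast <;> ring
  have hfun : (fun v => (fun v' => f (sigZ p e v')) (sigZ p (fun i => e (p i)) v)) = f := by
    funext v
    show f (sigZ p e (sigZ p (fun i => e (p i)) v)) = f v
    rw [sig_inv_right p hpp e he v]
  rw [harg, hfun] at h2
  exact h2

lemma IC_sig {f : (Fin 2 → ℤ) → EReal} (hf : IsIntegrallyConvexFn f)
    (p : Equiv.Perm (Fin 2)) (hpp : p.symm = p)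
    (e : Fin 2 → ℤ) (he : ∀ i, e i = 1 ∨ e i = -1) :
    IsIntegrallyConvexFn (fun v => f (sigZ p e v)) := by
  intro x y t ht0 ht1
  rw [localExt_sig f p hpp e he, localExt_sig f p hpp e he x, localExt_sig f p hpp e he y]
  have harg : sigR p e (fun i => t * x i + (1-t) * y i)
      = (fun i => t * sigR p e x i + (1-t) * sigR p e y i) := by
    funext i
    show ((e i : ℤ):ℝ) * (t * x (p i) + (1-t) * y (p i))
      = t * (((e i : ℤ):ℝ) * x (p i)) + (1-t) * (((e i : ℤ):ℝ) * y (p i))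
    ring
  rw [harg]
  exact hf (sigR p e x) (sigR p e y) t ht0 ht1


lemma fin2_cases (x : Fin 2) : x = 0 ∨ x = 1 := by fin_cases x <;> simp

lemma sign_abs (t : ℤ) : (if t < 0 then -1 else 1 : ℤ) * t = |t| := by
  split
  · rename_i h; rw [abs_of_neg h]; ring
  · rename_i h; rw [abs_of_nonneg (by omega)]; ring

lemma sector {f : (Fin 2 → ℤ) → EReal} (hbot : ∀ x, f x ≠ ⊥)
    (hf : IsIntegrallyConvexFn f) (α : ℕ) (hα : 0 < α)
    (xa : Fin 2 → ℤ) (hdom : f xa ≠ ⊤)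
    (hloc : ∀ d : Fin 2 → ℤ, (∀ i, |d i| ≤ 1) → f xa ≤ f (fun i => xa i + (α : ℤ) * d i))
    (z : Fin 2 → ℤ) (hz : ∀ w, f z ≤ f w)
    (p : Equiv.Perm (Fin 2)) (hpp : p.symm = p) (e : Fin 2 → ℤ)
    (he : ∀ i, e i = 1 ∨ e i = -1) (a b : ℤ)
    (hA : e (p 0) * (z (p 0) - xa (p 0)) = a)
    (hB : e (p 1) * (z (p 1) - xa (p 1)) = b)
    (hb0 : 0 ≤ b) (hba : b ≤ a) (ha : 2*(α:ℤ)-1 ≤ a)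
    (hnoclose : ∀ v : Fin 2 → ℤ, (∀ w, f v ≤ f w) → a ≤ max |v 0 - xa 0| |v 1 - xa 1|) :
    False := by
  set e' : Fin 2 → ℤ := fun i => e (p i) with he'def
  set g : (Fin 2 → ℤ) → EReal := fun v => f (sigZ p e v) with hgdef
  have hbot' : ∀ v, g v ≠ ⊥ := fun v => hbot _
  have hf' := IC_sig hf p hpp e he
  set xa' : Fin 2 → ℤ := sigZ p e' xa with hxa'
  set z' : Fin 2 → ℤ := sigZ p e' z with hz'd
  have hσxa : sigZ p e xa' = xa := sig_inv_right p hpp e he xa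
  have hσz : sigZ p e z' = z := sig_inv_right p hpp e he z
  have hgxa : g xa' = f xa := by show f (sigZ p e xa') = f xa; rw [hσxa]
  have hgz : g z' = f z := by show f (sigZ p e z') = f z; rw [hσz]
  have hptxa : pt (xa' 0) (xa' 1) = xa' := by funext i; fin_cases i <;> rfl
  have hz'pt : z' = pt (xa' 0 + a) (xa' 1 + b) := by
    funext i
    fin_cases i
    · have hA' : e (p 0) * z (p 0) - e (p 0) * xa (p 0) = a := by rw [← hA]; ring
      show e (p 0) * z (p 0) = e (p 0) * xa (p 0) + a
      linarith
    · have hB' : e (p 1) * z (p 1) - e (p 1) * xa (p 1) = b := by rw [← hB]; ring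
      show e (p 1) * z (p 1) = e (p 1) * xa (p 1) + b
      linarith
  have hdom' : g (pt (xa' 0) (xa' 1)) ≠ ⊤ := by rw [hptxa, hgxa]; exact hdom
  have hzmin' : ∀ w', g (pt (xa' 0 + a) (xa' 1 + b)) ≤ g w' := by
    intro w'
    rw [← hz'pt, hgz]
    exact hz _
  have habs_e : ∀ i t, |e i * t| = |t| := by
    intro i t
    rcases he i with h | h
    · rw [h, one_mul]
    · rw [h, neg_one_mul, abs_neg]
  have hclose' : ∀ v1 v2 : ℤ, max |v1| |v2| < a →
      ¬(∀ w', g (pt (xa' 0 + v1) (xa' 1 + v2)) ≤ g w') := by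
    intro v1 v2 hvd hPmin
    set Q : Fin 2 → ℤ := sigZ p e (pt (xa' 0 + v1) (xa' 1 + v2)) with hQd
    have hQmin : ∀ u, f Q ≤ f u := by
      intro u
      have h3 := hPmin (sigZ p e' u)
      have h4 : g (sigZ p e' u) = f u := by
        show f (sigZ p e (sigZ p e' u)) = f u
        rw [sig_inv_right p hpp e he u]
      rwa [h4] at h3
    have hQi : ∀ i, Q i - xa i = e i * (pt v1 v2 (p i)) := by
      intro i
      have hpt : ∀ j, pt (xa' 0 + v1) (xa' 1 + v2) j = xa' j + pt v1 v2 j := by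
        intro j; fin_cases j <;> rfl
      have hxai : e i * xa' (p i) = xa i := congrFun hσxa i
      calc Q i - xa i = e i * (xa' (p i) + pt v1 v2 (p i)) - xa i := by
            show e i * (pt (xa' 0 + v1) (xa' 1 + v2) (p i)) - xa i = _
            rw [hpt]
        _ = e i * xa' (p i) + e i * pt v1 v2 (p i) - xa i := by ring
        _ = e i * pt v1 v2 (p i) := by rw [hxai]; ring
    have habs : ∀ i, |Q i - xa i| = |pt v1 v2 (p i)| := by
      intro i; rw [hQi i, habs_e]
    have hp01 : (p 0 = 0 ∧ p 1 = 1) ∨ (p 0 = 1 ∧ p 1 = 0) := by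
      rcases fin2_cases (p 0) with h0 | h0
      · left
        refine ⟨h0, ?_⟩
        rcases fin2_cases (p 1) with h1 | h1
        · exact absurd (p.injective (h1.trans h0.symm)) (by simp)
        · exact h1
      · right
        refine ⟨h0, ?_⟩
        rcases fin2_cases (p 1) with h1 | h1
        · exact h1
        · exact absurd (p.injective (h1.trans h0.symm)) (by simp)
    have hQdist : max |Q 0 - xa 0| |Q 1 - xa 1| < a := by
      rw [habs 0, habs 1]
      rcases hp01 with ⟨h0, h1⟩ | ⟨h0, h1⟩
      · rw [h0, h1]; simpa using hvd
      · rw [h0, h1]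
        show max |pt v1 v2 1| |pt v1 v2 0| < a
        rw [max_comm]
        simpa using hvd
    exact absurd (hnoclose Q hQmin) (not_le.mpr hQdist)
  have hcorner' : ∀ d1 d2 : ℤ, |d1| ≤ 1 → |d2| ≤ 1 →
      g (pt (xa' 0) (xa' 1)) ≤ g (pt (xa' 0 + (α:ℤ)*d1) (xa' 1 + (α:ℤ)*d2)) := by
    intro d1 d2 hd1 hd2
    set d' : Fin 2 → ℤ := sigZ p e (pt d1 d2) with hd'd
    have hd'le : ∀ i, |d' i| ≤ 1 := by
      intro i
      have h5 : |d' i| = |pt d1 d2 (p i)| := habs_e i _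
      rw [h5]
      rcases fin2_cases (p i) with h | h <;> rw [h] <;> simpa
    have hL := hloc d' hd'le
    rw [hptxa, hgxa]
    have hptd : sigZ p e (pt (xa' 0 + (α:ℤ)*d1) (xa' 1 + (α:ℤ)*d2))
        = (fun i => xa i + (α:ℤ) * d' i) := by
      funext i
      have hsplit : ∀ j, pt (xa' 0 + (α:ℤ)*d1) (xa' 1 + (α:ℤ)*d2) j
          = xa' j + (α:ℤ) * pt d1 d2 j := by
        intro j; fin_cases j <;> rfl
      have hxai : e i * xa' (p i) = xa i := congrFun hσxa i
      show e i * (pt (xa' 0 + (α:ℤ)*d1) (xa' 1 + (α:ℤ)*d2) (p i)) = xa i + (α:ℤ) * d' i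
      rw [hsplit]
      show e i * (xa' (p i) + (α:ℤ) * pt d1 d2 (p i))
        = xa i + (α:ℤ) * (e i * pt d1 d2 (p i))
      calc e i * (xa' (p i) + (α:ℤ) * pt d1 d2 (p i))
          = e i * xa' (p i) + (α:ℤ) * (e i * pt d1 d2 (p i)) := by ring
        _ = xa i + (α:ℤ) * (e i * pt d1 d2 (p i)) := by rw [hxai]
    have h6 : g (pt (xa' 0 + (α:ℤ)*d1) (xa' 1 + (α:ℤ)*d2))
        = f (fun i => xa i + (α:ℤ) * d' i) := by
      show f (sigZ p e (pt (xa' 0 + (α:ℤ)*d1) (xa' 1 + (α:ℤ)*d2))) = _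
      rw [hptd]
    rw [h6]
    exact hL
  exact core hbot' hf' α hα (xa' 0) (xa' 1) hdom' a b hb0 hba ha hzmin' hclose' hcorner'


end ICP

/-- Proximity theorem for integrally convex functions in two variables. -/
theorem integrally_convex_proximity_dim2
    (f : (Fin 2 → ℤ) → EReal) (hbot : ∀ x, f x ≠ ⊥)
    (hf : IsIntegrallyConvexFn f)
    (α : ℕ) (hα : 0 < α)
    (xa : Fin 2 → ℤ) (hdom : f xa ≠ ⊤)
    (hmin : ∃ z, ∀ w, f z ≤ f w)
    (hloc : ∀ d : Fin 2 → ℤ, (∀ i, |d i| ≤ 1) →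
      f xa ≤ f (fun i => xa i + (α : ℤ) * d i)) :
    ∃ xstar : Fin 2 → ℤ, (∀ w, f xstar ≤ f w) ∧
      ∀ i, |xa i - xstar i| ≤ 2 * ((α : ℤ) - 1) := by
  classical
  obtain ⟨z0, hz0⟩ := hmin
  set D : (Fin 2 → ℤ) → ℤ := fun v => max |v 0 - xa 0| |v 1 - xa 1| with hD
  have hD0 : ∀ v, 0 ≤ D v := fun v => le_trans (abs_nonneg _) (le_max_left _ _)
  suffices H : ∀ n : ℕ, ∀ z : Fin 2 → ℤ, (∀ w, f z ≤ f w) → D z ≤ (n:ℤ) →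
      ∃ xstar : Fin 2 → ℤ, (∀ w, f xstar ≤ f w) ∧
        ∀ i, |xa i - xstar i| ≤ 2 * ((α : ℤ) - 1) by
    exact H (D z0).toNat z0 hz0 (by rw [Int.toNat_of_nonneg (hD0 z0)])
  intro n
  induction n using Nat.strong_induction_on with
  | _ n IH =>
    intro z hz hDz
    by_cases hsmall : D z ≤ 2*((α:ℤ)-1)
    · refine ⟨z, hz, ?_⟩
      intro i
      have h1 : |xa i - z i| = |z i - xa i| := abs_sub_comm _ _
      rcases ICP.fin2_cases i with h | h <;> subst h
      · rw [h1]; exact le_trans (le_max_left _ _) hsmall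
      · rw [h1]; exact le_trans (le_max_right _ _) hsmall
    · push_neg at hsmall
      by_cases hcl : ∃ v, (∀ w, f v ≤ f w) ∧ D v < D z
      · obtain ⟨v, hv, hvd⟩ := hcl
        have hvn : D v < (n:ℤ) := lt_of_lt_of_le hvd hDz
        have hv0 := hD0 v
        refine IH (D v).toNat (by omega) v hv (by rw [Int.toNat_of_nonneg hv0])
      · push_neg at hcl
        exfalso
        have ha : 2*(α:ℤ) - 1 ≤ D z := by omega
        have hnoclose : ∀ v : Fin 2 → ℤ, (∀ w, f v ≤ f w) →
            D z ≤ max |v 0 - xa 0| |v 1 - xa 1| := fun v hv => hcl v hv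
        by_cases hord : |z 1 - xa 1| ≤ |z 0 - xa 0|
        · have hmax : D z = |z 0 - xa 0| := max_eq_left hord
          refine ICP.sector hbot hf α hα xa hdom hloc z hz (Equiv.refl _) rfl
            (fun i => if z i - xa i < 0 then -1 else 1)
            (fun i => by split <;> simp)
            |z 0 - xa 0| |z 1 - xa 1| ?_ ?_ (abs_nonneg _) hord
            (hmax ▸ ha) (hmax ▸ hnoclose)
          · exact ICP.sign_abs _
          · exact ICP.sign_abs _
        · have hord' : |z 0 - xa 0| ≤ |z 1 - xa 1| := le_of_not_ge hord
          have hmax : D z = |z 1 - xa 1| := max_eq_right hord'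
          have hp0 : (Equiv.swap (0:Fin 2) 1) 0 = 1 := Equiv.swap_apply_left 0 1
          have hp1 : (Equiv.swap (0:Fin 2) 1) 1 = 0 := Equiv.swap_apply_right 0 1
          refine ICP.sector hbot hf α hα xa hdom hloc z hz (Equiv.swap 0 1)
            (Equiv.symm_swap 0 1)
            (fun i => if z i - xa i < 0 then -1 else 1)
            (fun i => by split <;> simp)
            |z 1 - xa 1| |z 0 - xa 0| ?_ ?_ (abs_nonneg _) hord'
            (hmax ▸ ha) (hmax ▸ hnoclose)
          · rw [hp0]; exact ICP.sign_abs _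
          · rw [hp1]; exact ICP.sign_abs _
end
end

section
/- For A a nonempty subset of {1,…,n}, let B_A = {𝟙_A + e_i, 𝟙_A − e_i : i ∈ A} ∪ {𝟙_A + e_i : i ∉ A} ∪ {𝟙_A}, where 𝟙_A is the characteristic vector of A. Then B_A is a Hilbert basis of the convex cone it generates: every integer vector in the real cone generated by B_A is a nonnegative integer combination of vectors in B_A. -/
open scoped BigOperators

noncomputable section

section Aux

variable {n : ℕ}

lemma evalR_plusA (A : Finset (Fin n)) (μ : Fin n → ℝ) (j : Fin n) (hj : j ∈ A) :
    ((∑ i ∈ A, μ i • ((fun j => if j ∈ A then (1 : ℝ) else 0) + Pi.single i 1) : Fin n → ℝ)) j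
      = (∑ i ∈ A, μ i) + μ j := by
  simp [Finset.sum_apply, Pi.single_apply, hj, mul_add, Finset.sum_add_distrib,
    mul_ite, Finset.sum_ite_eq]

lemma evalR_minusA (A : Finset (Fin n)) (μ : Fin n → ℝ) (j : Fin n) (hj : j ∈ A) :
    ((∑ i ∈ A, μ i • ((fun j => if j ∈ A then (1 : ℝ) else 0) - Pi.single i 1) : Fin n → ℝ)) j
      = (∑ i ∈ A, μ i) - μ j := by
  simp [Finset.sum_apply, Pi.single_apply, hj, mul_sub, Finset.sum_sub_distrib,
    mul_ite, Finset.sum_ite_eq]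

lemma evalR_compA (A : Finset (Fin n)) (μ : Fin n → ℝ) (j : Fin n) (hj : j ∈ A) :
    ((∑ i ∈ Aᶜ, μ i • ((fun j => if j ∈ A then (1 : ℝ) else 0) + Pi.single i 1) : Fin n → ℝ)) j
      = (∑ i ∈ Aᶜ, μ i) := by
  simp [Finset.sum_apply, Pi.single_apply, hj, mul_add, Finset.sum_add_distrib,
    mul_ite, Finset.sum_ite_eq]

lemma evalR_compA_out (A : Finset (Fin n)) (μ : Fin n → ℝ) (j : Fin n) (hj : j ∉ A) :
    ((∑ i ∈ Aᶜ, μ i • ((fun j => if j ∈ A then (1 : ℝ) else 0) + Pi.single i 1) : Fin n → ℝ)) j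
      = μ j := by
  simp [Finset.sum_apply, Pi.single_apply, hj, mul_add, Finset.sum_add_distrib,
    mul_ite, Finset.sum_ite_eq]

lemma evalR_plusA_out (A : Finset (Fin n)) (μ : Fin n → ℝ) (j : Fin n) (hj : j ∉ A) :
    ((∑ i ∈ A, μ i • ((fun j => if j ∈ A then (1 : ℝ) else 0) + Pi.single i 1) : Fin n → ℝ)) j
      = 0 := by
  simp [Finset.sum_apply, Pi.single_apply, hj, mul_add, Finset.sum_add_distrib,
    mul_ite, Finset.sum_ite_eq]

lemma evalR_minusA_out (A : Finset (Fin n)) (μ : Fin n → ℝ) (j : Fin n) (hj : j ∉ A) :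
    ((∑ i ∈ A, μ i • ((fun j => if j ∈ A then (1 : ℝ) else 0) - Pi.single i 1) : Fin n → ℝ)) j
      = 0 := by
  simp [Finset.sum_apply, Pi.single_apply, hj, mul_sub, Finset.sum_sub_distrib,
    mul_ite, Finset.sum_ite_eq]

lemma evalZ_plusA (A : Finset (Fin n)) (μ : Fin n → ℕ) (j : Fin n) (hj : j ∈ A) :
    ((∑ i ∈ A, μ i • ((fun j => if j ∈ A then (1 : ℤ) else 0) + Pi.single i 1) : Fin n → ℤ)) j
      = (∑ i ∈ A, (μ i : ℤ)) + μ j := by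
  simp [Finset.sum_apply, Pi.single_apply, hj, mul_add, Finset.sum_add_distrib,
    mul_ite, Finset.sum_ite_eq, nsmul_eq_mul]

lemma evalZ_minusA (A : Finset (Fin n)) (μ : Fin n → ℕ) (j : Fin n) (hj : j ∈ A) :
    ((∑ i ∈ A, μ i • ((fun j => if j ∈ A then (1 : ℤ) else 0) - Pi.single i 1) : Fin n → ℤ)) j
      = (∑ i ∈ A, (μ i : ℤ)) - μ j := by
  simp [Finset.sum_apply, Pi.single_apply, hj, mul_sub, Finset.sum_sub_distrib,
    mul_ite, Finset.sum_ite_eq, nsmul_eq_mul]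

lemma evalZ_compA (A : Finset (Fin n)) (μ : Fin n → ℕ) (j : Fin n) (hj : j ∈ A) :
    ((∑ i ∈ Aᶜ, μ i • ((fun j => if j ∈ A then (1 : ℤ) else 0) + Pi.single i 1) : Fin n → ℤ)) j
      = (∑ i ∈ Aᶜ, (μ i : ℤ)) := by
  simp [Finset.sum_apply, Pi.single_apply, hj, mul_add, Finset.sum_add_distrib,
    mul_ite, Finset.sum_ite_eq, nsmul_eq_mul]

lemma evalZ_compA_out (A : Finset (Fin n)) (μ : Fin n → ℕ) (j : Fin n) (hj : j ∉ A) :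
    ((∑ i ∈ Aᶜ, μ i • ((fun j => if j ∈ A then (1 : ℤ) else 0) + Pi.single i 1) : Fin n → ℤ)) j
      = μ j := by
  simp [Finset.sum_apply, Pi.single_apply, hj, mul_add, Finset.sum_add_distrib,
    mul_ite, Finset.sum_ite_eq, nsmul_eq_mul]

lemma evalZ_plusA_out (A : Finset (Fin n)) (μ : Fin n → ℕ) (j : Fin n) (hj : j ∉ A) :
    ((∑ i ∈ A, μ i • ((fun j => if j ∈ A then (1 : ℤ) else 0) + Pi.single i 1) : Fin n → ℤ)) j
      = 0 := by
  simp [Finset.sum_apply, Pi.single_apply, hj, mul_add, Finset.sum_add_distrib,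
    mul_ite, Finset.sum_ite_eq, nsmul_eq_mul]

lemma evalZ_minusA_out (A : Finset (Fin n)) (μ : Fin n → ℕ) (j : Fin n) (hj : j ∉ A) :
    ((∑ i ∈ A, μ i • ((fun j => if j ∈ A then (1 : ℤ) else 0) - Pi.single i 1) : Fin n → ℤ)) j
      = 0 := by
  simp [Finset.sum_apply, Pi.single_apply, hj, mul_sub, Finset.sum_sub_distrib,
    mul_ite, Finset.sum_ite_eq, nsmul_eq_mul]

end Aux

/-- B_A is a Hilbert basis of the cone it generates: every integer point of the
real cone generated by B_A is a nonnegative integer combination of B_A. -/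
theorem hilbert_basis_BA {n : ℕ} (A : Finset (Fin n)) (hA : A.Nonempty)
    (z : Fin n → ℤ)
    (hz : ∃ (μp μm μo : Fin n → ℝ) (lam : ℝ),
      (∀ i, 0 ≤ μp i) ∧ (∀ i, 0 ≤ μm i) ∧ (∀ i, 0 ≤ μo i) ∧ 0 ≤ lam ∧
      (fun j => (z j : ℝ)) =
        (∑ i ∈ A, μp i • ((fun j => if j ∈ A then (1 : ℝ) else 0) + Pi.single i 1)) +
        (∑ i ∈ A, μm i • ((fun j => if j ∈ A then (1 : ℝ) else 0) - Pi.single i 1)) +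
        (∑ i ∈ Aᶜ, μo i • ((fun j => if j ∈ A then (1 : ℝ) else 0) + Pi.single i 1)) +
        lam • (fun j => if j ∈ A then (1 : ℝ) else 0)) :
    ∃ (ap am ao : Fin n → ℕ) (l : ℕ),
      z =
        (∑ i ∈ A, ap i • ((fun j => if j ∈ A then (1 : ℤ) else 0) + Pi.single i 1)) +
        (∑ i ∈ A, am i • ((fun j => if j ∈ A then (1 : ℤ) else 0) - Pi.single i 1)) +
        (∑ i ∈ Aᶜ, ao i • ((fun j => if j ∈ A then (1 : ℤ) else 0) + Pi.single i 1)) +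
        l • (fun j => if j ∈ A then (1 : ℤ) else 0) := by
  classical
  obtain ⟨μp, μm, μo, lam, hμp, hμm, hμo, hlam, heq⟩ := hz
  set T : ℝ := (∑ i ∈ A, μp i) + (∑ i ∈ A, μm i) + (∑ i ∈ Aᶜ, μo i) + lam with hT
  -- componentwise equations
  have hcompA : ∀ j ∈ A, (z j : ℝ) = T + μp j - μm j := by
    intro j hj
    have h := congrFun heq j
    rw [Pi.add_apply, Pi.add_apply, Pi.add_apply, Pi.smul_apply,
      evalR_plusA A μp j hj, evalR_minusA A μm j hj, evalR_compA A μo j hj] at h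
    simp only [hj, if_true, smul_eq_mul, mul_one] at h
    rw [h, hT]; ring
  have hcompO : ∀ j ∉ A, (z j : ℝ) = μo j := by
    intro j hj
    have h := congrFun heq j
    rw [Pi.add_apply, Pi.add_apply, Pi.add_apply, Pi.smul_apply,
      evalR_plusA_out A μp j hj, evalR_minusA_out A μm j hj, evalR_compA_out A μo j hj] at h
    simp only [hj, if_false, smul_eq_mul, mul_zero] at h
    linarith [h]
  have hz0 : ∀ j ∉ A, 0 ≤ z j := by
    intro j hj
    have : (0 : ℝ) ≤ (z j : ℝ) := by rw [hcompO j hj]; exact hμo j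
    exact_mod_cast this
  set c : ℤ := ∑ j ∈ Aᶜ, z j with hc
  have hcR : (c : ℝ) = ∑ j ∈ Aᶜ, μo j := by
    rw [hc]; push_cast
    exact Finset.sum_congr rfl fun j hj => hcompO j (by simpa using hj)
  set P : Finset (Fin n) := A.filter (fun j => z j ≤ ⌊T⌋) with hP
  set Q : Finset (Fin n) := A.filter (fun j => ¬ z j ≤ ⌊T⌋) with hQ
  have hPA : ∀ j ∈ P, j ∈ A := fun j hj => (Finset.mem_filter.mp hj).1
  have hQA : ∀ j ∈ Q, j ∈ A := fun j hj => (Finset.mem_filter.mp hj).1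
  -- the real inequality at T
  have hST : (∑ j ∈ P, (T - (z j : ℝ))) + (∑ j ∈ Q, ((z j : ℝ) - T)) ≤ T - c := by
    have h1 : ∑ j ∈ P, (T - (z j : ℝ)) ≤ ∑ j ∈ P, (μp j + μm j) := by
      refine Finset.sum_le_sum fun j hj => ?_
      have := hcompA j (hPA j hj)
      have := hμp j; linarith
    have h2 : ∑ j ∈ Q, ((z j : ℝ) - T) ≤ ∑ j ∈ Q, (μp j + μm j) := by
      refine Finset.sum_le_sum fun j hj => ?_
      have := hcompA j (hQA j hj)
      have := hμm j; linarith
    have h3 : (∑ j ∈ P, (μp j + μm j)) + (∑ j ∈ Q, (μp j + μm j))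
        = ∑ j ∈ A, (μp j + μm j) :=
      Finset.sum_filter_add_sum_filter_not A _ _
    have h4 : ∑ j ∈ A, (μp j + μm j) = (∑ j ∈ A, μp j) + (∑ j ∈ A, μm j) :=
      Finset.sum_add_distrib
    rw [hcR]
    have : (∑ i ∈ A, μp i) + (∑ i ∈ A, μm i) = T - (∑ i ∈ Aᶜ, μo i) - lam := by
      rw [hT]; ring
    linarith
  set L : ℤ := if (P.card : ℤ) ≤ (Q.card : ℤ) + 1 then ⌈T⌉ else ⌊T⌋ with hL
  have hFL : ⌊T⌋ ≤ L := by
    rw [hL]; split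
    · exact Int.floor_le_ceil T
    · exact le_refl _
  have hLF : L ≤ ⌊T⌋ + 1 := by
    rw [hL]; split
    · exact Int.ceil_le_floor_add_one T
    · omega
  -- slope inequality
  have ha : ((P.card : ℝ) - Q.card - 1) * ((L : ℝ) - T) ≤ 0 := by
    rw [hL]; split
    · rename_i h
      have h1 : (P.card : ℝ) - Q.card - 1 ≤ 0 := by
        have : (P.card : ℝ) ≤ (Q.card : ℝ) + 1 := by exact_mod_cast h
        linarith
      have h2 : (0 : ℝ) ≤ (⌈T⌉ : ℝ) - T := by linarith [Int.le_ceil T]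
      exact mul_nonpos_of_nonpos_of_nonneg h1 h2
    · rename_i h
      push_neg at h
      have h1 : (0 : ℝ) ≤ (P.card : ℝ) - Q.card - 1 := by
        have : (Q.card : ℝ) + 1 ≤ (P.card : ℝ) := by exact_mod_cast h.le
        linarith
      have h2 : ((⌊T⌋ : ℝ)) - T ≤ 0 := by linarith [Int.floor_le T]
      exact mul_nonpos_of_nonneg_of_nonpos h1 h2
  -- the real inequality at L
  have hSLr : (∑ j ∈ P, ((L : ℝ) - (z j : ℝ))) + (∑ j ∈ Q, ((z j : ℝ) - (L : ℝ)))
      ≤ (L : ℝ) - c := by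
    have e1 : ∀ x : ℝ, (∑ j ∈ P, (x - (z j : ℝ))) + (∑ j ∈ Q, ((z j : ℝ) - x))
        = (P.card : ℝ) * x - (∑ j ∈ P, (z j : ℝ))
          + ((∑ j ∈ Q, (z j : ℝ)) - (Q.card : ℝ) * x) := by
      intro x
      rw [Finset.sum_sub_distrib, Finset.sum_sub_distrib, Finset.sum_const,
        Finset.sum_const, nsmul_eq_mul, nsmul_eq_mul]
    have hT' := hST
    rw [e1 T] at hT'
    rw [e1 (L : ℝ)]
    nlinarith [ha]
  -- the integer inequality at L
  have hSL : (∑ j ∈ P, (L - z j)) + (∑ j ∈ Q, (z j - L)) ≤ L - c := by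
    have := hSLr
    push_cast at this ⊢
    exact_mod_cast this
  have hzP : ∀ j ∈ P, z j ≤ L := by
    intro j hj
    have := (Finset.mem_filter.mp hj).2
    omega
  have hzQ : ∀ j ∈ Q, L ≤ z j := by
    intro j hj
    have := (Finset.mem_filter.mp hj).2
    omega
  set SA : ℤ := (∑ j ∈ P, (L - z j)) + (∑ j ∈ Q, (z j - L)) with hSA
  have hSA0 : 0 ≤ SA := by
    rw [hSA]
    have h1 : 0 ≤ ∑ j ∈ P, (L - z j) :=
      Finset.sum_nonneg fun j hj => by linarith [hzP j hj]
    have h2 : 0 ≤ ∑ j ∈ Q, (z j - L) :=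
      Finset.sum_nonneg fun j hj => by linarith [hzQ j hj]
    linarith
  refine ⟨fun j => if j ∈ A then (z j - L).toNat else 0,
    fun j => if j ∈ A then (L - z j).toNat else 0,
    fun j => (z j).toNat, (L - c - SA).toNat, ?_⟩
  set ap : Fin n → ℕ := fun j => if j ∈ A then (z j - L).toNat else 0 with hap
  set am : Fin n → ℕ := fun j => if j ∈ A then (L - z j).toNat else 0 with ham
  have hsum_ap : (∑ i ∈ A, ((ap i : ℤ) + (am i : ℤ))) = SA := by
    rw [← Finset.sum_filter_add_sum_filter_not A (fun j => z j ≤ ⌊T⌋), ← hP, ← hQ, hSA]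
    congr 1
    · refine Finset.sum_congr rfl fun j hj => ?_
      have hjA := hPA j hj
      have hle := hzP j hj
      simp only [hap, ham, hjA, if_true]
      omega
    · refine Finset.sum_congr rfl fun j hj => ?_
      have hjA := hQA j hj
      have hle := hzQ j hj
      simp only [hap, ham, hjA, if_true]
      omega
  have hsum_ap' : (∑ i ∈ A, (ap i : ℤ)) + (∑ i ∈ A, (am i : ℤ)) = SA := by
    rw [← Finset.sum_add_distrib]; exact hsum_ap
  have hsum_ao : (∑ i ∈ Aᶜ, ((z i).toNat : ℤ)) = c := by
    rw [hc]
    refine Finset.sum_congr rfl fun j hj => ?_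
    have := hz0 j (by simpa using hj)
    omega
  have hl : (((L - c - SA).toNat : ℤ)) = L - c - SA := Int.toNat_of_nonneg (by omega)
  funext j
  by_cases hj : j ∈ A
  · rw [Pi.add_apply, Pi.add_apply, Pi.add_apply, Pi.smul_apply,
      evalZ_plusA A ap j hj, evalZ_minusA A am j hj, evalZ_compA A _ j hj]
    simp only [hj, if_true, smul_eq_mul, mul_one, nsmul_eq_mul]
    have hapj : (ap j : ℤ) - (am j : ℤ) = z j - L := by
      simp only [hap, ham, hj, if_true]; omega
    rw [hsum_ao, hl]
    have hzj : (z j : ℝ) = T + μp j - μm j := hcompA j hj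
    omega
  · rw [Pi.add_apply, Pi.add_apply, Pi.add_apply, Pi.smul_apply,
      evalZ_plusA_out A ap j hj, evalZ_minusA_out A am j hj, evalZ_compA_out A _ j hj]
    simp only [hj, if_false, smul_eq_mul, mul_zero, nsmul_eq_mul]
    have := hz0 j hj
    omega
end
end

section
/- Let f : ℤⁿ → ℝ ∪ {+∞} be integrally convex with dom f ⊆ ℤ₊ⁿ containing 0, α a positive integer, and suppose f(0) ≤ f(α·𝟙_A) for all A ⊆ {1,…,n}. Then for every nonempty A ⊆ {1,…,n} and every λ ∈ ℤ₊, one has (α−1)·𝟙_A ≤ (α−1+λ)·𝟙_A and f((α−1)·𝟙_A) ≤ f((α−1+λ)·𝟙_A). -/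
open scoped BigOperators

noncomputable section

lemma coe_sum_ereal {m : ℕ} (g : Fin m → ℝ) :
    ((∑ j, g j : ℝ) : EReal) = ∑ j, (g j : EReal) := by
  induction m with
  | zero => simp
  | succ k ih => rw [Fin.sum_univ_succ, Fin.sum_univ_succ, EReal.coe_add, ih]

lemma intNbhd_int {n : ℕ} (z y : Fin n → ℤ) (h : y ∈ intNbhd (realify z)) : y = z := by
  funext i
  have hi := h i
  simp only [realify] at hi
  have : |((z i - y i : ℤ) : ℝ)| < 1 := by push_cast; exact hi
  have h2 : ((|z i - y i| : ℤ) : ℝ) < 1 := by rwa [Int.cast_abs]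
  have h3 : |z i - y i| < 1 := by exact_mod_cast h2
  rw [abs_lt] at h3
  omega

lemma localExt_int {n : ℕ} (f : (Fin n → ℤ) → EReal) (hbot : ∀ x, f x ≠ ⊥)
    (z : Fin n → ℤ) : localExt f (realify z) = f z := by
  apply le_antisymm
  · apply sInf_le
    refine ⟨1, fun _ => 1, fun _ => z, fun _ => zero_le_one, by simp, ?_, by simp [realify], by simp⟩
    intro j i; simp [intNbhd, realify]
  · apply le_sInf
    rintro v ⟨m, lam, y, hnn, hsum, hnb, -, rfl⟩
    have hy : ∀ j, y j = z := fun j => intNbhd_int _ _ (hnb j)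
    simp only [hy]
    by_cases htop : f z = ⊤
    · rw [htop]
      obtain ⟨j0, hj0⟩ : ∃ j, 0 < lam j := by
        by_contra h
        push_neg at h
        have : ∑ j, lam j = 0 := Finset.sum_eq_zero fun j _ => le_antisymm (h j) (hnn j)
        rw [this] at hsum; norm_num at hsum
      have h1 : ((lam j0 : ℝ) : EReal) * ⊤ = ⊤ := EReal.coe_mul_top_of_pos hj0
      have h2 : ∀ j ∈ Finset.univ, (0:EReal) ≤ ((lam j : ℝ) : EReal) * ⊤ := by
        intro j _
        exact mul_nonneg (by exact_mod_cast hnn j) le_top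
      calc (⊤:EReal) = ((lam j0 : ℝ) : EReal) * ⊤ := h1.symm
        _ ≤ ∑ j, ((lam j : ℝ) : EReal) * ⊤ := Finset.single_le_sum h2 (Finset.mem_univ j0)
    · obtain ⟨r, hr⟩ : ∃ r : ℝ, f z = (r : EReal) := by
        lift f z to ℝ using ⟨htop, hbot z⟩ with r
        exact ⟨r, rfl⟩
      rw [hr]
      have : ∑ j, ((lam j : ℝ) : EReal) * (r : EReal) = ((∑ j, lam j * r : ℝ) : EReal) := by
        rw [coe_sum_ereal]
        exact Finset.sum_congr rfl fun j _ => (EReal.coe_mul _ _).symm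
      rw [this, ← Finset.sum_mul, hsum, one_mul]

lemma seg_ineq {n : ℕ} (f : (Fin n → ℤ) → EReal) (hbot : ∀ x, f x ≠ ⊥)
    (hf : IsIntegrallyConvexFn f) (A : Finset (Fin n)) (a b c : ℤ) (t : ℝ)
    (ht0 : 0 ≤ t) (ht1 : t ≤ 1)
    (hc : t * (a : ℝ) + (1 - t) * (b : ℝ) = (c : ℝ)) :
    f (fun i => if i ∈ A then c else 0) ≤
      ((t : ℝ) : EReal) * f (fun i => if i ∈ A then a else 0) +
      (((1 - t : ℝ)) : EReal) * f (fun i => if i ∈ A then b else 0) := by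
  have h := hf (realify (fun i => if i ∈ A then a else 0))
    (realify (fun i => if i ∈ A then b else 0)) t ht0 ht1
  have hmid : (fun i => t * realify (fun i => if i ∈ A then a else 0) i +
      (1 - t) * realify (fun i => if i ∈ A then b else 0) i) =
      realify (fun i => if i ∈ A then c else 0) := by
    funext i
    simp only [realify]
    by_cases hiA : i ∈ A <;> simp [hiA, hc]
  rw [hmid, localExt_int f hbot, localExt_int f hbot, localExt_int f hbot] at h
  exact h

/-- Along the direction of a characteristic vector, the value at (α−1)·𝟙_A is a
minimum among (α−1+λ)·𝟙_A. -/
theorem value_along_characteristic_vector {n : ℕ}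
    (f : (Fin n → ℤ) → EReal) (hbot : ∀ x, f x ≠ ⊥)
    (hf : IsIntegrallyConvexFn f)
    (hpos : ∀ x, f x ≠ ⊤ → ∀ i, 0 ≤ x i)
    (h0 : f 0 ≠ ⊤)
    (α : ℕ) (hα : 0 < α)
    (hloc : ∀ A : Finset (Fin n),
      f 0 ≤ f (fun i => if i ∈ A then (α : ℤ) else 0)) :
    ∀ A : Finset (Fin n), A.Nonempty → ∀ lam : ℕ,
      (∀ i, (if i ∈ A then (α : ℤ) - 1 else 0) ≤
            (if i ∈ A then (α : ℤ) - 1 + (lam : ℤ) else 0)) ∧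
      f (fun i => if i ∈ A then (α : ℤ) - 1 else 0) ≤
        f (fun i => if i ∈ A then (α : ℤ) - 1 + (lam : ℤ) else 0) := by
  intro A hA lam
  constructor
  · intro i; split <;> omega
  · -- trivial case lam = 0
    rcases Nat.eq_zero_or_pos lam with hl0 | hl
    · simp [hl0]
    -- now lam ≥ 1
    set L : ℤ := (α : ℤ) - 1 + (lam : ℤ) with hL
    have hαL : (α : ℤ) ≤ L := by omega
    have hLpos : (0 : ℤ) < L := by omega
    have hf0 : f 0 = f (fun i => if i ∈ A then (0:ℤ) else 0) := by
      congr 1; funext i; simp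
    by_cases hT : f (fun i => if i ∈ A then L else 0) = ⊤
    · rw [hT]; exact le_top
    · -- all finite; extract reals
      obtain ⟨r3, hr3⟩ : ∃ r : ℝ, f (fun i => if i ∈ A then L else 0) = (r : EReal) := by
        lift f (fun i => if i ∈ A then L else 0) to ℝ using ⟨hT, hbot _⟩ with r
        exact ⟨r, rfl⟩
      obtain ⟨r0, hr0⟩ : ∃ r : ℝ, f (fun i => if i ∈ A then (0:ℤ) else 0) = (r : EReal) := by
        rw [← hf0]
        lift f 0 to ℝ using ⟨h0, hbot _⟩ with r
        exact ⟨r, rfl⟩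
      -- step 1 : f(α·1) finite
      have hLR : (0:ℝ) < (L:ℝ) := by exact_mod_cast hLpos
      have t1 : ℝ := ((L:ℝ) - α) / L
      have h1 := seg_ineq f hbot hf A 0 L (α:ℤ) (((L:ℝ) - α) / L)
        (div_nonneg (by
          have h' : ((α:ℝ)) ≤ (L:ℝ) := by exact_mod_cast hαL
          linarith) hLR.le)
        (by
          rw [div_le_one hLR]
          have h' : (0:ℝ) ≤ (α:ℝ) := by positivity
          linarith)
        (by field_simp <;> push_cast <;> ring)
      rw [hr0, hr3] at h1
      rw [← EReal.coe_mul, ← EReal.coe_mul, ← EReal.coe_add] at h1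
      have hαT : f (fun i => if i ∈ A then ((α:ℤ)) else 0) ≠ ⊤ :=
        ne_top_of_le_ne_top (EReal.coe_ne_top _) h1
      obtain ⟨r2, hr2⟩ : ∃ r : ℝ, f (fun i => if i ∈ A then ((α:ℤ)) else 0) = (r : EReal) := by
        lift f (fun i => if i ∈ A then ((α:ℤ)) else 0) to ℝ using ⟨hαT, hbot _⟩ with r
        exact ⟨r, rfl⟩
      -- step 2 : f((α-1)·1) finite and ≤ comb
      have hαR : (0:ℝ) < (α:ℝ) := by exact_mod_cast hα
      have h2 := seg_ineq f hbot hf A 0 (α:ℤ) ((α:ℤ)-1) (1 / (α:ℝ))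
        (by positivity) (by rw [div_le_one hαR]; exact_mod_cast hα)
        (by push_cast; field_simp <;> ring)
      rw [hr0, hr2] at h2
      rw [← EReal.coe_mul, ← EReal.coe_mul, ← EReal.coe_add] at h2
      have hmT : f (fun i => if i ∈ A then ((α:ℤ)-1) else 0) ≠ ⊤ :=
        ne_top_of_le_ne_top (EReal.coe_ne_top _) h2
      obtain ⟨r1, hr1⟩ : ∃ r : ℝ, f (fun i => if i ∈ A then ((α:ℤ)-1) else 0) = (r : EReal) := by
        lift f (fun i => if i ∈ A then ((α:ℤ)-1) else 0) to ℝ using ⟨hmT, hbot _⟩ with r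
        exact ⟨r, rfl⟩
      -- step 3 : comb between α-1 and L
      have hlR : (0:ℝ) < (lam:ℝ) := by exact_mod_cast hl
      have h3 := seg_ineq f hbot hf A ((α:ℤ)-1) L (α:ℤ) (((lam:ℝ)-1) / lam)
        (div_nonneg (by
          have h' : (1:ℝ) ≤ (lam:ℝ) := by exact_mod_cast hl
          linarith) hlR.le)
        (by
          rw [div_le_one hlR]
          linarith)
        (by rw [hL]; push_cast; field_simp; ring)
      rw [hr1, hr2, hr3] at h3
      rw [← EReal.coe_mul, ← EReal.coe_mul, ← EReal.coe_add] at h3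
      -- hloc
      have h4 := hloc A
      rw [hf0, hr0, hr2] at h4
      -- transfer to ℝ
      rw [hr1] at h2
      rw [hr1, hr3]
      rw [EReal.coe_le_coe_iff] at h2 h3 h4 ⊢
      -- real arithmetic: r1 ≤ r0/α + (α-1)/α r2, r0 ≤ r2 ⇒ r1 ≤ r2
      have hr12 : r1 ≤ r2 := by
        have := h2
        have e : 1 / (α:ℝ) * r0 + (1 - 1/(α:ℝ)) * r2 ≤ r2 := by
          have : 1 / (α:ℝ) * r0 ≤ 1 / (α:ℝ) * r2 := by
            apply mul_le_mul_of_nonneg_left h4 (by positivity)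
          linarith
        linarith
      -- from h3 : r2 ≤ ((lam-1)/lam) r1 + (1 - (lam-1)/lam) r3
      have hinv : (1:ℝ) - ((lam:ℝ)-1)/lam = 1/lam := by field_simp <;> ring
      rw [hinv] at h3
      have : (1/(lam:ℝ)) * r1 ≤ (1/(lam:ℝ)) * r3 := by
        have hll : ((lam:ℝ)-1)/lam = 1 - 1/lam := by field_simp
        rw [hll] at h3
        nlinarith [hr12, h3]
      have hpos' : (0:ℝ) < 1/(lam:ℝ) := by positivity
      exact le_of_mul_le_mul_left this hpos'
end
end

section
/- Let f : ℤⁿ → ℝ ∪ {+∞} be integrally convex, A a nonempty subset of {1,…,n}, x ∈ dom f with f(x) ≤ f(x + 𝟙_A). Then for any i ∈ {1,…,n}, δ ∈ {+1, 0, −1}, and λ ∈ ℤ₊, we have f(x + 𝟙_A + δe_i) ≤ f(x + 𝟙_A + δe_i + λ·𝟙_A). -/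
open scoped BigOperators

noncomputable section

lemma sum_coe_mul {α : Type*} (s : Finset α) (w : α → ℝ) (hw : ∀ a ∈ s, 0 ≤ w a) (c : EReal) :
    ∑ a ∈ s, ((w a : ℝ) : EReal) * c = ((∑ a ∈ s, w a : ℝ) : EReal) * c := by
  induction s using Finset.cons_induction with
  | empty => simp
  | cons a s ha ih =>
    rw [Finset.sum_cons, Finset.sum_cons, ih (fun b hb => hw b (Finset.mem_cons_of_mem hb)),
      EReal.coe_add, EReal.right_distrib_of_nonneg]
    · exact_mod_cast hw a (Finset.mem_cons_self a s)
    · exact_mod_cast Finset.sum_nonneg (fun b hb => hw b (Finset.mem_cons_of_mem hb))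

lemma coe_mul_ne_bot (c : ℝ) (hc : 0 ≤ c) (a : EReal) (ha : a ≠ ⊥) : (c : EReal) * a ≠ ⊥ := by
  induction a using EReal.rec with
  | bot => exact absurd rfl ha
  | coe q => rw [← EReal.coe_mul]; exact EReal.coe_ne_bot _
  | top =>
    rcases eq_or_lt_of_le hc with h | h
    · rw [← h]; simp
    · rw [EReal.coe_mul_top_of_pos h]; simp


/-- Step lemma: descending along 𝟙_A from a perturbed point. -/
theorem step_lemma_characteristic_direction {n : ℕ}
    (f : (Fin n → ℤ) → EReal) (hbot : ∀ x, f x ≠ ⊥)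
    (hf : IsIntegrallyConvexFn f)
    (A : Finset (Fin n)) (hA : A.Nonempty)
    (x : Fin n → ℤ) (hxdom : f x ≠ ⊤)
    (hx : f x ≤ f (fun j => x j + if j ∈ A then 1 else 0)) :
    ∀ (i : Fin n) (δ : ℤ), |δ| ≤ 1 → ∀ lam : ℕ,
      f (fun j => x j + (if j ∈ A then 1 else 0) + (if j = i then δ else 0)) ≤
        f (fun j => x j + (if j ∈ A then 1 else 0) + (if j = i then δ else 0) +
            (lam : ℤ) * (if j ∈ A then 1 else 0)) := by
  classical
  intro i δ hδ lam
  rcases Nat.eq_zero_or_pos lam with hlam0 | hlampos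
  · subst hlam0
    exact le_of_eq (by norm_num)
  set y : Fin n → ℤ := fun j => x j + (if j ∈ A then 1 else 0) + (if j = i then δ else 0)
    with hy
  set zL : Fin n → ℤ := fun j => x j + (if j ∈ A then 1 else 0) + (if j = i then δ else 0) +
      (lam : ℤ) * (if j ∈ A then 1 else 0) with hzL
  set xa : Fin n → ℤ := fun j => x j + if j ∈ A then 1 else 0 with hxa
  have hlam1 : (1 : ℝ) ≤ (lam : ℝ) := by exact_mod_cast hlampos
  obtain ⟨t, htl, ht0, ht1⟩ : ∃ t : ℝ, t * ((lam : ℝ) + 1) = 1 ∧ 0 < t ∧ t < 1 := by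
    refine ⟨1 / ((lam : ℝ) + 1), by field_simp, by positivity, ?_⟩
    rw [div_lt_one (by linarith)]; linarith
  have hcv := hf (realify zL) (realify x) t ht0.le ht1.le
  set p : Fin n → ℝ := fun j => t * realify zL j + (1 - t) * realify x j with hp
  have hpj : ∀ j, p j = (xa j : ℝ) + (if j = i then t * (δ : ℝ) else 0) := by
    intro j
    simp only [hp, realify, hzL, hxa]
    by_cases hji : j = i
    · subst hji
      by_cases hjA : j ∈ A
      · simp only [hjA, if_true, if_pos rfl]; push_cast; linear_combination htl
      · simp only [hjA, if_false, if_pos rfl]; push_cast; ring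
    · by_cases hjA : j ∈ A
      · simp only [hjA, hji, if_true, if_false]; push_cast; linear_combination htl
      · simp only [hjA, hji, if_false]; push_cast; ring
  -- upper bound
  have hup : localExt f p ≤ (t : EReal) * f zL + ((1 - t : ℝ) : EReal) * f x := by
    refine hcv.trans (add_le_add ?_ ?_)
    · exact mul_le_mul_of_nonneg_left (localExt_le_pt f zL) (by exact_mod_cast ht0.le)
    · exact mul_le_mul_of_nonneg_left (localExt_le_pt f x)
        (by exact_mod_cast (by linarith : (0:ℝ) ≤ 1 - t))
  have hyi : y i = xa i + δ := by simp [hy, hxa]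
  have hyk : ∀ k, k ≠ i → y k = xa k := by intro k hk; simp [hy, hxa, hk]
  -- lower bound
  have hlow : (t : EReal) * f y + ((1 - t : ℝ) : EReal) * f xa ≤ localExt f p := by
    refine le_sInf ?_
    rintro v ⟨m, w, ys, hw, hw1, hnb, hco, rfl⟩
    have hkey : ∀ j k, k ≠ i → ys j k = xa k := by
      intro j k hk
      have h1 := hnb j k
      rw [hpj k, if_neg hk, add_zero] at h1
      have h2 : |((xa k - ys j k : ℤ) : ℝ)| < 1 := by push_cast; exact h1
      have h3 : -(1:ℤ) < xa k - ys j k ∧ xa k - ys j k < 1 :=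
        abs_lt.1 (by exact_mod_cast h2)
      omega
    have hki : ∀ j, ys j i = xa i ∨ ys j i = xa i + δ := by
      intro j
      have h1 := hnb j i
      rw [hpj i, if_pos rfl] at h1
      rw [abs_lt] at h1
      obtain ⟨hl, hr⟩ := h1
      obtain ⟨hd1, hd2⟩ := abs_le.1 hδ
      interval_cases δ
      · have i1 : ys j i < xa i + 1 := by
          exact_mod_cast (show ((ys j i : ℤ) : ℝ) < ((xa i + 1 : ℤ) : ℝ) by
            push_cast at hl hr ⊢; linarith)
        have i2 : xa i - 2 < ys j i := by
          exact_mod_cast (show ((xa i - 2 : ℤ) : ℝ) < ((ys j i : ℤ) : ℝ) by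
            push_cast at hl hr ⊢; linarith)
        omega
      · have i1 : ys j i < xa i + 1 := by
          exact_mod_cast (show ((ys j i : ℤ) : ℝ) < ((xa i + 1 : ℤ) : ℝ) by
            push_cast at hl hr ⊢; linarith)
        have i2 : xa i - 1 < ys j i := by
          exact_mod_cast (show ((xa i - 1 : ℤ) : ℝ) < ((ys j i : ℤ) : ℝ) by
            push_cast at hl hr ⊢; linarith)
        omega
      · have i1 : ys j i < xa i + 2 := by
          exact_mod_cast (show ((ys j i : ℤ) : ℝ) < ((xa i + 2 : ℤ) : ℝ) by
            push_cast at hl hr ⊢; linarith)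
        have i2 : xa i - 1 < ys j i := by
          exact_mod_cast (show ((xa i - 1 : ℤ) : ℝ) < ((ys j i : ℤ) : ℝ) by
            push_cast at hl hr ⊢; linarith)
        omega
    have hys : ∀ j, ys j = y ∨ ys j = xa := by
      intro j
      rcases hki j with h | h
      · right; funext k
        rcases eq_or_ne k i with rfl | hk
        · exact h
        · exact hkey j k hk
      · left; funext k
        rcases eq_or_ne k i with rfl | hk
        · rw [h, ← hyi]
        · rw [hkey j k hk]; exact (hyk k hk).symm
    set wP : ℝ := ∑ j ∈ Finset.univ.filter (fun j => ys j = y), w j with hwP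
    set wN : ℝ := ∑ j ∈ Finset.univ.filter (fun j => ¬ ys j = y), w j with hwN
    have hsum : wP + wN = 1 := by
      rw [hwP, hwN, Finset.sum_filter_add_sum_filter_not]; exact hw1
    have hwP0 : 0 ≤ wP := Finset.sum_nonneg fun j _ => hw j
    have hwN0 : 0 ≤ wN := Finset.sum_nonneg fun j _ => hw j
    have hv : ∑ j, ((w j : ℝ) : EReal) * f (ys j)
        = ((wP : ℝ) : EReal) * f y + ((wN : ℝ) : EReal) * f xa := by
      rw [← Finset.sum_filter_add_sum_filter_not Finset.univ (fun j => ys j = y)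
        (fun j => ((w j : ℝ) : EReal) * f (ys j))]
      congr 1
      · rw [Finset.sum_congr rfl
          (fun j hj => by rw [(Finset.mem_filter.1 hj).2] :
            ∀ j ∈ Finset.univ.filter (fun j => ys j = y),
              ((w j : ℝ) : EReal) * f (ys j) = ((w j : ℝ) : EReal) * f y)]
        exact sum_coe_mul _ _ (fun j _ => hw j) (f y)
      · rw [Finset.sum_congr rfl
          (fun j hj => by
            rw [(hys j).resolve_left (Finset.mem_filter.1 hj).2] :
            ∀ j ∈ Finset.univ.filter (fun j => ¬ ys j = y),
              ((w j : ℝ) : EReal) * f (ys j) = ((w j : ℝ) : EReal) * f xa)]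
        exact sum_coe_mul _ _ (fun j _ => hw j) (f xa)
    rw [hv]
    by_cases hδ0 : δ = 0
    · have hyxa : y = xa := by funext k; simp [hy, hxa, hδ0]
      rw [← hyxa]
      have e1 : (t : EReal) * f y + ((1 - t : ℝ) : EReal) * f y = f y := by
        rw [← EReal.right_distrib_of_nonneg (by exact_mod_cast ht0.le)
          (by exact_mod_cast (by linarith : (0:ℝ) ≤ 1 - t)), ← EReal.coe_add]
        norm_num
      have e2 : ((wP : ℝ) : EReal) * f y + ((wN : ℝ) : EReal) * f y = f y := by
        rw [← EReal.right_distrib_of_nonneg (by exact_mod_cast hwP0)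
          (by exact_mod_cast hwN0), ← EReal.coe_add, hsum]
        norm_num
      rw [e1, e2]
    · have hδr : (δ : ℝ) ≠ 0 := by exact_mod_cast hδ0
      have hco' := hco i
      rw [hpj i, if_pos rfl] at hco'
      have hsum2 : ∑ j, w j * ((ys j i : ℤ) : ℝ)
          = (∑ j, w j) * ((xa i : ℤ) : ℝ) + wP * (δ : ℝ) := by
        have hysi : ∀ j, ((ys j i : ℤ) : ℝ)
            = ((xa i : ℤ) : ℝ) + (if ys j = y then (δ : ℝ) else 0) := by
          intro j
          by_cases hP : ys j = y
          · rw [if_pos hP, hP, hyi]; push_cast; ring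
          · rw [if_neg hP, (hys j).resolve_left hP]; ring
        calc ∑ j, w j * ((ys j i : ℤ) : ℝ)
            = ∑ j, (w j * ((xa i : ℤ) : ℝ) + w j * (if ys j = y then (δ : ℝ) else 0)) := by
              refine Finset.sum_congr rfl fun j _ => ?_
              rw [hysi j, mul_add]
          _ = (∑ j, w j) * ((xa i : ℤ) : ℝ)
              + ∑ j, (if ys j = y then w j * (δ : ℝ) else 0) := by
              rw [Finset.sum_add_distrib, Finset.sum_mul]
              congr 1
              refine Finset.sum_congr rfl fun j _ => ?_
              split_ifs <;> simp
          _ = (∑ j, w j) * ((xa i : ℤ) : ℝ) + wP * (δ : ℝ) := by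
              rw [← Finset.sum_filter, hwP]
              congr 1
              exact (Finset.sum_mul (Finset.univ.filter (fun j => ys j = y)) w ((δ : ℝ))).symm
      rw [hsum2, hw1, one_mul] at hco'
      have hwPt : wP = t := by
        have : (δ : ℝ) * wP = (δ : ℝ) * t := by linarith
        exact mul_left_cancel₀ hδr this
      have hwNt : wN = 1 - t := by linarith
      rw [hwPt, hwNt]
  have hchain : (t : EReal) * f y + ((1 - t : ℝ) : EReal) * f xa
      ≤ (t : EReal) * f zL + ((1 - t : ℝ) : EReal) * f x := hlow.trans hup
  by_cases hzt : f zL = ⊤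
  · rw [hzt]; exact le_top
  have hxr : ((f x).toReal : EReal) = f x := EReal.coe_toReal hxdom (hbot x)
  have hzr : ((f zL).toReal : EReal) = f zL := EReal.coe_toReal hzt (hbot zL)
  rw [← hxr, ← hzr, ← EReal.coe_mul, ← EReal.coe_mul, ← EReal.coe_add] at hchain
  have hxat : f xa ≠ ⊤ := by
    intro h
    rw [h, EReal.coe_mul_top_of_pos (by linarith : (0:ℝ) < 1 - t),
      EReal.add_top_of_ne_bot (coe_mul_ne_bot t ht0.le (f y) (hbot y))] at hchain
    exact (EReal.coe_ne_top _) (top_le_iff.1 hchain)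
  have hyt : f y ≠ ⊤ := by
    intro h
    rw [h, EReal.coe_mul_top_of_pos ht0,
      EReal.top_add_of_ne_bot
        (coe_mul_ne_bot (1 - t) (by linarith) (f xa) (hbot xa))] at hchain
    exact (EReal.coe_ne_top _) (top_le_iff.1 hchain)
  have hyr : ((f y).toReal : EReal) = f y := EReal.coe_toReal hyt (hbot y)
  have hxar : ((f xa).toReal : EReal) = f xa := EReal.coe_toReal hxat (hbot xa)
  rw [← hyr, ← hxar, ← EReal.coe_mul, ← EReal.coe_mul, ← EReal.coe_add] at hchain
  have hch : t * (f y).toReal + (1 - t) * (f xa).toReal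
      ≤ t * (f zL).toReal + (1 - t) * (f x).toReal := EReal.coe_le_coe_iff.1 hchain
  have hrb : (f x).toReal ≤ (f xa).toReal :=
    EReal.coe_le_coe_iff.1 (by rw [hxr, hxar]; exact hx)
  rw [← hyr, ← hzr]
  apply EReal.coe_le_coe_iff.2
  have h3 : (1 - t) * (f x).toReal ≤ (1 - t) * (f xa).toReal :=
    mul_le_mul_of_nonneg_left hrb (by linarith)
  exact le_of_mul_le_mul_left (by linarith) ht0
end
end

section
/- There exists an integrally convex function f : ℤ³ → ℝ ∪ {+∞} such that the scaled function f²(x) = f(2x) is not integrally convex. Specifically, one may take f with dom f = [0,4]×[0,2]×[0,2] given by explicit values, and the failure is witnessed by the midpoint condition at x=(0,0,0), y=(2,1,1) for f². -/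
open scoped BigOperators

noncomputable section

/-! ### Auxiliary development -/

/-- The 15-point integrally convex set used in the counterexample, described
by the facet inequalities of its convex hull. -/
def zS (z : Fin 3 → ℤ) : Prop :=
  z 1 ≤ z 0 ∧ z 2 ≤ z 0 ∧ z 1 + z 2 ≤ z 0 + 1 ∧ 0 ≤ z 1 ∧ z 2 ≤ z 1 + 1 ∧
  0 ≤ z 2 ∧ z 2 ≤ 2 ∧ z 1 ≤ z 2 + 1 ∧ z 1 ≤ 2 ∧ z 0 ≤ z 1 + z 2 + 1 ∧
  z 0 ≤ z 1 + 2 ∧ z 0 ≤ z 2 + 2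

/-- `w` admits a "good" representation: a convex combination of points of `S`
that moreover all lie (when their weight is nonzero) in the integral
neighborhood of `w`. -/
def wgood (w : Fin 3 → ℝ) : Prop :=
  ∃ (m : ℕ) (lam : Fin m → ℝ) (y : Fin m → (Fin 3 → ℤ)),
    (∀ j, 0 ≤ lam j) ∧ (∑ j, lam j) = 1 ∧ (∀ j, zS (y j)) ∧
    (∀ j, lam j ≠ 0 → ∀ i, |w i - (y j i : ℝ)| < 1) ∧
    (∀ i, (∑ j, lam j * ((y j i : ℝ))) = w i)

/-- `w` is a convex combination of points of `S` (points of zero weight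
unconstrained). -/
def inHullS (w : Fin 3 → ℝ) : Prop :=
  ∃ (m : ℕ) (lam : Fin m → ℝ) (y : Fin m → (Fin 3 → ℤ)),
    (∀ j, 0 ≤ lam j) ∧ (∑ j, lam j) = 1 ∧ (∀ j, lam j ≠ 0 → zS (y j)) ∧
    (∀ i, (∑ j, lam j * ((y j i : ℝ))) = w i)

lemma facet_bound (w : Fin 3 → ℝ) (h : inHullS w) (c0 c1 c2 d : ℤ)
    (hc : ∀ z : Fin 3 → ℤ, zS z → c0 * z 0 + c1 * z 1 + c2 * z 2 ≤ d) :
    (c0 : ℝ) * w 0 + (c1 : ℝ) * w 1 + (c2 : ℝ) * w 2 ≤ (d : ℝ) := by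
  obtain ⟨m, lam, y, hnn, hsum, hS, hc3⟩ := h
  have key : (c0 : ℝ) * w 0 + (c1 : ℝ) * w 1 + (c2 : ℝ) * w 2
      = ∑ j, lam j * ((c0 : ℝ) * (y j 0 : ℝ) + (c1 : ℝ) * (y j 1 : ℝ) + (c2 : ℝ) * (y j 2 : ℝ)) := by
    rw [← hc3 0, ← hc3 1, ← hc3 2, Finset.mul_sum, Finset.mul_sum, Finset.mul_sum,
      ← Finset.sum_add_distrib, ← Finset.sum_add_distrib]
    exact Finset.sum_congr rfl (fun j _ => by ring)
  rw [key]
  have hle : ∀ j ∈ Finset.univ (α := Fin m),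
      lam j * ((c0 : ℝ) * (y j 0 : ℝ) + (c1 : ℝ) * (y j 1 : ℝ) + (c2 : ℝ) * (y j 2 : ℝ))
        ≤ lam j * (d : ℝ) := by
    intro j _
    rcases eq_or_ne (lam j) 0 with h0 | h0
    · simp [h0]
    · refine mul_le_mul_of_nonneg_left ?_ (hnn j)
      exact_mod_cast hc (y j) (hS j h0)
  calc (∑ j, lam j * ((c0 : ℝ) * (y j 0 : ℝ) + (c1 : ℝ) * (y j 1 : ℝ) + (c2 : ℝ) * (y j 2 : ℝ)))
      ≤ ∑ j, lam j * (d : ℝ) := Finset.sum_le_sum hle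
    _ = (d : ℝ) := by rw [← Finset.sum_mul, hsum, one_mul]

/-- From membership in the hull, derive all 12 facet inequalities. -/
lemma facets (w : Fin 3 → ℝ) (h : inHullS w) :
    w 1 ≤ w 0 ∧ w 2 ≤ w 0 ∧ w 1 + w 2 ≤ w 0 + 1 ∧ 0 ≤ w 1 ∧ w 2 ≤ w 1 + 1 ∧
    0 ≤ w 2 ∧ w 2 ≤ 2 ∧ w 1 ≤ w 2 + 1 ∧ w 1 ≤ 2 ∧ w 0 ≤ w 1 + w 2 + 1 ∧
    w 0 ≤ w 1 + 2 ∧ w 0 ≤ w 2 + 2 := by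
  have A1 := facet_bound w h (-1) 1 0 0 (fun z hz => by unfold zS at hz; omega)
  have A2 := facet_bound w h (-1) 0 1 0 (fun z hz => by unfold zS at hz; omega)
  have A3 := facet_bound w h (-1) 1 1 1 (fun z hz => by unfold zS at hz; omega)
  have A4 := facet_bound w h 0 (-1) 0 0 (fun z hz => by unfold zS at hz; omega)
  have A5 := facet_bound w h 0 (-1) 1 1 (fun z hz => by unfold zS at hz; omega)
  have A6 := facet_bound w h 0 0 (-1) 0 (fun z hz => by unfold zS at hz; omega)
  have A7 := facet_bound w h 0 0 1 2 (fun z hz => by unfold zS at hz; omega)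
  have A8 := facet_bound w h 0 1 (-1) 1 (fun z hz => by unfold zS at hz; omega)
  have A9 := facet_bound w h 0 1 0 2 (fun z hz => by unfold zS at hz; omega)
  have A10 := facet_bound w h 1 (-1) (-1) 1 (fun z hz => by unfold zS at hz; omega)
  have A11 := facet_bound w h 1 (-1) 0 2 (fun z hz => by unfold zS at hz; omega)
  have A12 := facet_bound w h 1 0 (-1) 2 (fun z hz => by unfold zS at hz; omega)
  push_cast at A1 A2 A3 A4 A5 A6 A7 A8 A9 A10 A11 A12
  refine ⟨by linarith, by linarith, by linarith, by linarith, by linarith, by linarith,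
    by linarith, by linarith, by linarith, by linarith, by linarith, by linarith⟩

/-- Leaf helper: a convex combination of four lattice points of `S` witnesses
`wgood`. -/
lemma wgood_of_four (w : Fin 3 → ℝ) (a b c d : ℝ) (v1 v2 v3 v4 : Fin 3 → ℤ)
    (h1 : zS v1) (h2 : zS v2) (h3 : zS v3) (h4 : zS v4)
    (ha : 0 ≤ a) (hb : 0 ≤ b) (hc : 0 ≤ c) (hd : 0 ≤ d)
    (hsum : a + b + c + d = 1)
    (hn1 : a ≠ 0 → ∀ i, |w i - (v1 i : ℝ)| < 1)
    (hn2 : b ≠ 0 → ∀ i, |w i - (v2 i : ℝ)| < 1)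
    (hn3 : c ≠ 0 → ∀ i, |w i - (v3 i : ℝ)| < 1)
    (hn4 : d ≠ 0 → ∀ i, |w i - (v4 i : ℝ)| < 1)
    (hcomb : ∀ i, a * (v1 i : ℝ) + b * (v2 i : ℝ) + c * (v3 i : ℝ) + d * (v4 i : ℝ) = w i) :
    wgood w := by
  refine ⟨4, ![a, b, c, d], ![v1, v2, v3, v4], ?_, ?_, ?_, ?_, ?_⟩
  · intro j; fin_cases j <;> simpa using by assumption
  · simp [Fin.sum_univ_four]; linarith
  · intro j; fin_cases j <;> simpa using by assumption
  · intro j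
    fin_cases j <;> simp only [Matrix.cons_val_zero, Matrix.cons_val_one, Matrix.head_cons,
      Matrix.cons_val_two, Matrix.tail_cons, Matrix.cons_val_three]
    · exact hn1
    · exact hn2
    · exact hn3
    · exact hn4
  · intro i
    rw [Fin.sum_univ_four]
    simpa using hcomb i

lemma abs3 (w : Fin 3 → ℝ) (z : Fin 3 → ℤ) (a0 a1 a2 : ℤ)
    (e0 : z 0 = a0) (e1 : z 1 = a1) (e2 : z 2 = a2)
    (h0 : |w 0 - (a0 : ℝ)| < 1) (h1 : |w 1 - (a1 : ℝ)| < 1) (h2 : |w 2 - (a2 : ℝ)| < 1) :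
    ∀ i, |w i - (z i : ℝ)| < 1 := by
  intro i
  fin_cases i
  · show |w 0 - ((z 0 : ℤ) : ℝ)| < 1; rw [e0]; exact h0
  · show |w 1 - ((z 1 : ℤ) : ℝ)| < 1; rw [e1]; exact h1
  · show |w 2 - ((z 2 : ℤ) : ℝ)| < 1; rw [e2]; exact h2

lemma forall3 (P : Fin 3 → Prop) (h0 : P 0) (h1 : P 1) (h2 : P 2) : ∀ i, P i := by
  intro i; fin_cases i; exacts [h0, h1, h2]
lemma quarter (w : Fin 3 → ℝ)
    (hF1 : w 1 ≤ w 0) (hF2 : w 2 ≤ w 0) (hF3 : w 1 + w 2 ≤ w 0 + 1) (hF4 : 0 ≤ w 1)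
    (hF5 : w 2 ≤ w 1 + 1) (hF6 : 0 ≤ w 2) (hF7 : w 2 ≤ 2) (hF8 : w 1 ≤ w 2 + 1)
    (hF9 : w 1 ≤ 2) (hF10 : w 0 ≤ w 1 + w 2 + 1) (hF11 : w 0 ≤ w 1 + 2)
    (hF12 : w 0 ≤ w 2 + 2) (hO : w 2 ≤ w 1) (hQ : w 0 ≤ 2) : wgood w := by
  rcases le_total (w 0) 1 with hA | hA
  case inl =>
    -- leaf T0
    have ha : (0:ℝ) ≤ 1 - w 0 := by linarith
    have hb : (0:ℝ) ≤ w 0 - w 1 := by linarith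
    have hc : (0:ℝ) ≤ w 1 - w 2 := by linarith
    have hd : (0:ℝ) ≤ w 2 := by linarith
    refine wgood_of_four w (1 - w 0) (w 0 - w 1) (w 1 - w 2) (w 2)
      ![0,0,0] ![1,0,0] ![1,1,0] ![1,1,1]
      (by unfold zS; decide) (by unfold zS; decide) (by unfold zS; decide) (by unfold zS; decide)
      ha hb hc hd (by ring) ?_ ?_ ?_ ?_ ?_
    · intro hne; have h' := lt_of_le_of_ne ha (Ne.symm hne)
      refine abs3 w _ 0 0 0 rfl rfl rfl ?_ ?_ ?_ <;>
        (rw [abs_sub_lt_iff]; constructor <;> push_cast <;> linarith)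
    · intro hne; have h' := lt_of_le_of_ne hb (Ne.symm hne)
      refine abs3 w _ 1 0 0 rfl rfl rfl ?_ ?_ ?_ <;>
        (rw [abs_sub_lt_iff]; constructor <;> push_cast <;> linarith)
    · intro hne; have h' := lt_of_le_of_ne hc (Ne.symm hne)
      refine abs3 w _ 1 1 0 rfl rfl rfl ?_ ?_ ?_ <;>
        (rw [abs_sub_lt_iff]; constructor <;> push_cast <;> linarith)
    · intro hne; have h' := lt_of_le_of_ne hd (Ne.symm hne)
      refine abs3 w _ 1 1 1 rfl rfl rfl ?_ ?_ ?_ <;>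
        (rw [abs_sub_lt_iff]; constructor <;> push_cast <;> linarith)
    · refine forall3 _ ?_ ?_ ?_ <;> (simp only [Matrix.cons_val_zero, Matrix.cons_val_one, Matrix.head_cons, Matrix.cons_val_two, Matrix.tail_cons]; push_cast; ring_nf) <;> linarith
  case inr =>
  rcases le_total (w 1) 1 with hB | hB
  case inl =>
    rcases le_total (w 0 - 1) (w 2) with hC | hC
    case inl =>
      -- leaf T1
      have ha : (0:ℝ) ≤ 1 - w 1 := by linarith
      have hb : (0:ℝ) ≤ w 1 - w 2 := by linarith
      have hc : (0:ℝ) ≤ w 2 - w 0 + 1 := by linarith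
      have hd : (0:ℝ) ≤ w 0 - 1 := by linarith
      refine wgood_of_four w (1 - w 1) (w 1 - w 2) (w 2 - w 0 + 1) (w 0 - 1)
        ![1,0,0] ![1,1,0] ![1,1,1] ![2,1,1]
        (by unfold zS; decide) (by unfold zS; decide) (by unfold zS; decide) (by unfold zS; decide)
        ha hb hc hd (by ring) ?_ ?_ ?_ ?_ ?_
      · intro hne; have h' := lt_of_le_of_ne ha (Ne.symm hne)
        refine abs3 w _ 1 0 0 rfl rfl rfl ?_ ?_ ?_ <;>
          (rw [abs_sub_lt_iff]; constructor <;> push_cast <;> linarith)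
      · intro hne; have h' := lt_of_le_of_ne hb (Ne.symm hne)
        refine abs3 w _ 1 1 0 rfl rfl rfl ?_ ?_ ?_ <;>
          (rw [abs_sub_lt_iff]; constructor <;> push_cast <;> linarith)
      · intro hne; have h' := lt_of_le_of_ne hc (Ne.symm hne)
        refine abs3 w _ 1 1 1 rfl rfl rfl ?_ ?_ ?_ <;>
          (rw [abs_sub_lt_iff]; constructor <;> push_cast <;> linarith)
      · intro hne; have h' := lt_of_le_of_ne hd (Ne.symm hne)
        refine abs3 w _ 2 1 1 rfl rfl rfl ?_ ?_ ?_ <;>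
          (rw [abs_sub_lt_iff]; constructor <;> push_cast <;> linarith)
      · refine forall3 _ ?_ ?_ ?_ <;> (simp only [Matrix.cons_val_zero, Matrix.cons_val_one, Matrix.head_cons, Matrix.cons_val_two, Matrix.tail_cons]; push_cast; ring_nf) <;> linarith
    case inr =>
      rcases le_total (w 1) (w 0 - 1) with hD | hD
      case inl =>
        -- leaf T5
        have ha : (0:ℝ) ≤ 2 - w 0 := by linarith
        have hb : (0:ℝ) ≤ w 0 - 1 - w 2 := by linarith
        have hc : (0:ℝ) ≤ w 0 - 1 - w 1 := by linarith
        have hd : (0:ℝ) ≤ w 1 + w 2 - w 0 + 1 := by linarith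
        refine wgood_of_four w (2 - w 0) (w 0 - 1 - w 2) (w 0 - 1 - w 1) (w 1 + w 2 - w 0 + 1)
          ![1,0,0] ![2,1,0] ![2,0,1] ![2,1,1]
          (by unfold zS; decide) (by unfold zS; decide) (by unfold zS; decide) (by unfold zS; decide)
          ha hb hc hd (by ring) ?_ ?_ ?_ ?_ ?_
        · intro hne; have h' := lt_of_le_of_ne ha (Ne.symm hne)
          refine abs3 w _ 1 0 0 rfl rfl rfl ?_ ?_ ?_ <;>
            (rw [abs_sub_lt_iff]; constructor <;> push_cast <;> linarith)
        · intro hne; have h' := lt_of_le_of_ne hb (Ne.symm hne)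
          refine abs3 w _ 2 1 0 rfl rfl rfl ?_ ?_ ?_ <;>
            (rw [abs_sub_lt_iff]; constructor <;> push_cast <;> linarith)
        · intro hne; have h' := lt_of_le_of_ne hc (Ne.symm hne)
          refine abs3 w _ 2 0 1 rfl rfl rfl ?_ ?_ ?_ <;>
            (rw [abs_sub_lt_iff]; constructor <;> push_cast <;> linarith)
        · intro hne; have h' := lt_of_le_of_ne hd (Ne.symm hne)
          refine abs3 w _ 2 1 1 rfl rfl rfl ?_ ?_ ?_ <;>
            (rw [abs_sub_lt_iff]; constructor <;> push_cast <;> linarith)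
        · refine forall3 _ ?_ ?_ ?_ <;> (simp only [Matrix.cons_val_zero, Matrix.cons_val_one, Matrix.head_cons, Matrix.cons_val_two, Matrix.tail_cons]; push_cast; ring_nf) <;> linarith
      case inr =>
        -- leaf T4
        have ha : (0:ℝ) ≤ 1 - w 1 := by linarith
        have hb : (0:ℝ) ≤ w 1 - w 0 + 1 := by linarith
        have hc : (0:ℝ) ≤ w 0 - 1 - w 2 := by linarith
        have hd : (0:ℝ) ≤ w 2 := by linarith
        refine wgood_of_four w (1 - w 1) (w 1 - w 0 + 1) (w 0 - 1 - w 2) (w 2)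
          ![1,0,0] ![1,1,0] ![2,1,0] ![2,1,1]
          (by unfold zS; decide) (by unfold zS; decide) (by unfold zS; decide) (by unfold zS; decide)
          ha hb hc hd (by ring) ?_ ?_ ?_ ?_ ?_
        · intro hne; have h' := lt_of_le_of_ne ha (Ne.symm hne)
          refine abs3 w _ 1 0 0 rfl rfl rfl ?_ ?_ ?_ <;>
            (rw [abs_sub_lt_iff]; constructor <;> push_cast <;> linarith)
        · intro hne; have h' := lt_of_le_of_ne hb (Ne.symm hne)
          refine abs3 w _ 1 1 0 rfl rfl rfl ?_ ?_ ?_ <;>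
            (rw [abs_sub_lt_iff]; constructor <;> push_cast <;> linarith)
        · intro hne; have h' := lt_of_le_of_ne hc (Ne.symm hne)
          refine abs3 w _ 2 1 0 rfl rfl rfl ?_ ?_ ?_ <;>
            (rw [abs_sub_lt_iff]; constructor <;> push_cast <;> linarith)
        · intro hne; have h' := lt_of_le_of_ne hd (Ne.symm hne)
          refine abs3 w _ 2 1 1 rfl rfl rfl ?_ ?_ ?_ <;>
            (rw [abs_sub_lt_iff]; constructor <;> push_cast <;> linarith)
        · refine forall3 _ ?_ ?_ ?_ <;> (simp only [Matrix.cons_val_zero, Matrix.cons_val_one, Matrix.head_cons, Matrix.cons_val_two, Matrix.tail_cons]; push_cast; ring_nf) <;> linarith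
  case inr =>
    rcases le_total 1 (w 2) with hC | hC
    case inl =>
      -- leaf T8
      have ha : (0:ℝ) ≤ 2 - w 0 := by linarith
      have hb : (0:ℝ) ≤ w 1 - 1 := by linarith
      have hc : (0:ℝ) ≤ w 2 - 1 := by linarith
      have hd : (0:ℝ) ≤ w 0 + 1 - w 1 - w 2 := by linarith
      refine wgood_of_four w (2 - w 0) (w 1 - 1) (w 2 - 1) (w 0 + 1 - w 1 - w 2)
        ![1,1,1] ![2,2,1] ![2,1,2] ![2,1,1]
        (by unfold zS; decide) (by unfold zS; decide) (by unfold zS; decide) (by unfold zS; decide)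
        ha hb hc hd (by ring) ?_ ?_ ?_ ?_ ?_
      · intro hne; have h' := lt_of_le_of_ne ha (Ne.symm hne)
        refine abs3 w _ 1 1 1 rfl rfl rfl ?_ ?_ ?_ <;>
          (rw [abs_sub_lt_iff]; constructor <;> push_cast <;> linarith)
      · intro hne; have h' := lt_of_le_of_ne hb (Ne.symm hne)
        refine abs3 w _ 2 2 1 rfl rfl rfl ?_ ?_ ?_ <;>
          (rw [abs_sub_lt_iff]; constructor <;> push_cast <;> linarith)
      · intro hne; have h' := lt_of_le_of_ne hc (Ne.symm hne)
        refine abs3 w _ 2 1 2 rfl rfl rfl ?_ ?_ ?_ <;>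
          (rw [abs_sub_lt_iff]; constructor <;> push_cast <;> linarith)
      · intro hne; have h' := lt_of_le_of_ne hd (Ne.symm hne)
        refine abs3 w _ 2 1 1 rfl rfl rfl ?_ ?_ ?_ <;>
          (rw [abs_sub_lt_iff]; constructor <;> push_cast <;> linarith)
      · refine forall3 _ ?_ ?_ ?_ <;> (simp only [Matrix.cons_val_zero, Matrix.cons_val_one, Matrix.head_cons, Matrix.cons_val_two, Matrix.tail_cons]; push_cast; ring_nf) <;> linarith
    case inr =>
      rcases le_total (w 0 - 1) (w 2) with hD | hD
      case inl =>
        -- leaf T9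
        have ha : (0:ℝ) ≤ 1 - w 2 := by linarith
        have hb : (0:ℝ) ≤ w 2 - w 0 + 1 := by linarith
        have hc : (0:ℝ) ≤ w 1 - 1 := by linarith
        have hd : (0:ℝ) ≤ w 0 - w 1 := by linarith
        refine wgood_of_four w (1 - w 2) (w 2 - w 0 + 1) (w 1 - 1) (w 0 - w 1)
          ![1,1,0] ![1,1,1] ![2,2,1] ![2,1,1]
          (by unfold zS; decide) (by unfold zS; decide) (by unfold zS; decide) (by unfold zS; decide)
          ha hb hc hd (by ring) ?_ ?_ ?_ ?_ ?_
        · intro hne; have h' := lt_of_le_of_ne ha (Ne.symm hne)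
          refine abs3 w _ 1 1 0 rfl rfl rfl ?_ ?_ ?_ <;>
            (rw [abs_sub_lt_iff]; constructor <;> push_cast <;> linarith)
        · intro hne; have h' := lt_of_le_of_ne hb (Ne.symm hne)
          refine abs3 w _ 1 1 1 rfl rfl rfl ?_ ?_ ?_ <;>
            (rw [abs_sub_lt_iff]; constructor <;> push_cast <;> linarith)
        · intro hne; have h' := lt_of_le_of_ne hc (Ne.symm hne)
          refine abs3 w _ 2 2 1 rfl rfl rfl ?_ ?_ ?_ <;>
            (rw [abs_sub_lt_iff]; constructor <;> push_cast <;> linarith)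
        · intro hne; have h' := lt_of_le_of_ne hd (Ne.symm hne)
          refine abs3 w _ 2 1 1 rfl rfl rfl ?_ ?_ ?_ <;>
            (rw [abs_sub_lt_iff]; constructor <;> push_cast <;> linarith)
        · refine forall3 _ ?_ ?_ ?_ <;> (simp only [Matrix.cons_val_zero, Matrix.cons_val_one, Matrix.head_cons, Matrix.cons_val_two, Matrix.tail_cons]; push_cast; ring_nf) <;> linarith
      case inr =>
        -- leaf T3
        have ha : (0:ℝ) ≤ 2 - w 0 := by linarith
        have hb : (0:ℝ) ≤ w 0 - w 2 - 1 := by linarith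
        have hc : (0:ℝ) ≤ w 1 - 1 := by linarith
        have hd : (0:ℝ) ≤ w 2 - w 1 + 1 := by linarith
        refine wgood_of_four w (2 - w 0) (w 0 - w 2 - 1) (w 1 - 1) (w 2 - w 1 + 1)
          ![1,1,0] ![2,1,0] ![2,2,1] ![2,1,1]
          (by unfold zS; decide) (by unfold zS; decide) (by unfold zS; decide) (by unfold zS; decide)
          ha hb hc hd (by ring) ?_ ?_ ?_ ?_ ?_
        · intro hne; have h' := lt_of_le_of_ne ha (Ne.symm hne)
          refine abs3 w _ 1 1 0 rfl rfl rfl ?_ ?_ ?_ <;>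
            (rw [abs_sub_lt_iff]; constructor <;> push_cast <;> linarith)
        · intro hne; have h' := lt_of_le_of_ne hb (Ne.symm hne)
          refine abs3 w _ 2 1 0 rfl rfl rfl ?_ ?_ ?_ <;>
            (rw [abs_sub_lt_iff]; constructor <;> push_cast <;> linarith)
        · intro hne; have h' := lt_of_le_of_ne hc (Ne.symm hne)
          refine abs3 w _ 2 2 1 rfl rfl rfl ?_ ?_ ?_ <;>
            (rw [abs_sub_lt_iff]; constructor <;> push_cast <;> linarith)
        · intro hne; have h' := lt_of_le_of_ne hd (Ne.symm hne)
          refine abs3 w _ 2 1 1 rfl rfl rfl ?_ ?_ ?_ <;>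
            (rw [abs_sub_lt_iff]; constructor <;> push_cast <;> linarith)
        · refine forall3 _ ?_ ?_ ?_ <;> (simp only [Matrix.cons_val_zero, Matrix.cons_val_one, Matrix.head_cons, Matrix.cons_val_two, Matrix.tail_cons]; push_cast; ring_nf) <;> linarith


lemma zS_swap (z : Fin 3 → ℤ) (h : zS z) : zS ![z 0, z 2, z 1] := by
  simp only [zS, Matrix.cons_val_zero, Matrix.cons_val_one, Matrix.head_cons,
    Matrix.cons_val_two, Matrix.tail_cons] at h ⊢
  omega

lemma zS_flip (z : Fin 3 → ℤ) (h : zS z) : zS ![4 - z 0, 2 - z 2, 2 - z 1] := by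
  simp only [zS, Matrix.cons_val_zero, Matrix.cons_val_one, Matrix.head_cons,
    Matrix.cons_val_two, Matrix.tail_cons] at h ⊢
  omega

lemma wgood_swap (w : Fin 3 → ℝ) (h : wgood ![w 0, w 2, w 1]) : wgood w := by
  obtain ⟨m, lam, y, hnn, hsum, hS, hnb, hcomb⟩ := h
  refine ⟨m, lam, fun j => ![y j 0, y j 2, y j 1], hnn, hsum,
    fun j => zS_swap _ (hS j), ?_, ?_⟩
  · intro j hj
    have H := hnb j hj
    refine forall3 _ ?_ ?_ ?_
    · simpa using H 0
    · simpa using H 2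
    · simpa using H 1
  · refine forall3 _ ?_ ?_ ?_
    · simpa using hcomb 0
    · simpa using hcomb 2
    · simpa using hcomb 1

lemma wgood_flipswap (w : Fin 3 → ℝ) (h : wgood ![4 - w 0, 2 - w 2, 2 - w 1]) : wgood w := by
  obtain ⟨m, lam, y, hnn, hsum, hS, hnb, hcomb⟩ := h
  refine ⟨m, lam, fun j => ![4 - y j 0, 2 - y j 2, 2 - y j 1], hnn, hsum,
    fun j => zS_flip _ (hS j), ?_, ?_⟩
  · intro j hj
    have H := hnb j hj
    refine forall3 _ ?_ ?_ ?_
    · have h0 := H 0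
      simp only [Matrix.cons_val_zero] at h0 ⊢
      rw [abs_sub_lt_iff] at h0 ⊢
      push_cast
      constructor <;> linarith [h0.1, h0.2]
    · have h0 := H 2
      simp only [Matrix.cons_val_two, Matrix.tail_cons, Matrix.head_cons,
        Matrix.cons_val_one] at h0 ⊢
      rw [abs_sub_lt_iff] at h0 ⊢
      push_cast
      constructor <;> linarith [h0.1, h0.2]
    · have h0 := H 1
      simp only [Matrix.cons_val_two, Matrix.tail_cons, Matrix.head_cons,
        Matrix.cons_val_one, Matrix.cons_val_zero] at h0 ⊢
      rw [abs_sub_lt_iff] at h0 ⊢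
      push_cast
      constructor <;> linarith [h0.1, h0.2]
  · refine forall3 _ ?_ ?_ ?_
    · have h0 := hcomb 0
      simp only [Matrix.cons_val_zero] at h0 ⊢
      push_cast
      simp only [mul_sub]
      rw [Finset.sum_sub_distrib, ← Finset.sum_mul, hsum, h0]
      ring
    · have h0 := hcomb 2
      simp only [Matrix.cons_val_two, Matrix.tail_cons, Matrix.head_cons,
        Matrix.cons_val_one] at h0 ⊢
      push_cast
      simp only [mul_sub]
      rw [Finset.sum_sub_distrib, ← Finset.sum_mul, hsum, h0]
      ring
    · have h0 := hcomb 1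
      simp only [Matrix.cons_val_two, Matrix.tail_cons, Matrix.head_cons,
        Matrix.cons_val_one, Matrix.cons_val_zero] at h0 ⊢
      push_cast
      simp only [mul_sub]
      rw [Finset.sum_sub_distrib, ← Finset.sum_mul, hsum, h0]
      ring

lemma half (w : Fin 3 → ℝ)
    (hF1 : w 1 ≤ w 0) (hF2 : w 2 ≤ w 0) (hF3 : w 1 + w 2 ≤ w 0 + 1) (hF4 : 0 ≤ w 1)
    (hF5 : w 2 ≤ w 1 + 1) (hF6 : 0 ≤ w 2) (hF7 : w 2 ≤ 2) (hF8 : w 1 ≤ w 2 + 1)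
    (hF9 : w 1 ≤ 2) (hF10 : w 0 ≤ w 1 + w 2 + 1) (hF11 : w 0 ≤ w 1 + 2)
    (hF12 : w 0 ≤ w 2 + 2) (hO : w 2 ≤ w 1) : wgood w := by
  rcases le_total (w 0) 2 with hQ | hQ
  · exact quarter w hF1 hF2 hF3 hF4 hF5 hF6 hF7 hF8 hF9 hF10 hF11 hF12 hO hQ
  · refine wgood_flipswap w
      (quarter ![4 - w 0, 2 - w 2, 2 - w 1] ?_ ?_ ?_ ?_ ?_ ?_ ?_ ?_ ?_ ?_ ?_ ?_ ?_ ?_) <;>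
      (simp only [Matrix.cons_val_zero, Matrix.cons_val_one, Matrix.head_cons,
        Matrix.cons_val_two, Matrix.tail_cons]; linarith)

lemma main_constr (w : Fin 3 → ℝ) (h : inHullS w) : wgood w := by
  obtain ⟨hF1, hF2, hF3, hF4, hF5, hF6, hF7, hF8, hF9, hF10, hF11, hF12⟩ := facets w h
  rcases le_total (w 2) (w 1) with hO | hO
  · exact half w hF1 hF2 hF3 hF4 hF5 hF6 hF7 hF8 hF9 hF10 hF11 hF12 hO
  · refine wgood_swap w
      (half ![w 0, w 2, w 1] ?_ ?_ ?_ ?_ ?_ ?_ ?_ ?_ ?_ ?_ ?_ ?_ ?_) <;>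
      (simp only [Matrix.cons_val_zero, Matrix.cons_val_one, Matrix.head_cons,
        Matrix.cons_val_two, Matrix.tail_cons]; linarith)

open Classical in
/-- The indicator function of the set `S`. -/
noncomputable def fS : (Fin 3 → ℤ) → EReal := fun z => if zS z then (0 : EReal) else ⊤

lemma fS_of_zS {z : Fin 3 → ℤ} (h : zS z) : fS z = 0 := by simp [fS, h]

lemma fS_of_not_zS {z : Fin 3 → ℤ} (h : ¬ zS z) : fS z = ⊤ := by simp [fS, h]

lemma fS_nonneg (z : Fin 3 → ℤ) : (0 : EReal) ≤ fS z := by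
  unfold fS; split
  · exact le_refl _
  · exact le_top

lemma coe_mul_nonneg (c : ℝ) (e : EReal) (hc : 0 ≤ c) (he : 0 ≤ e) :
    (0 : EReal) ≤ (c : EReal) * e := by
  induction e using EReal.rec with
  | bot => simpa using he
  | coe r => rw [← EReal.coe_mul]; exact_mod_cast mul_nonneg hc (by exact_mod_cast he)
  | top =>
    rcases eq_or_lt_of_le hc with h0 | h0
    · rw [← h0]; simp
    · rw [EReal.mul_top_of_pos (by exact_mod_cast h0)]; exact le_top

lemma localExt_nonneg (g : (Fin 3 → ℤ) → EReal) (hg : ∀ z, (0:EReal) ≤ g z)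
    (x : Fin 3 → ℝ) : (0 : EReal) ≤ localExt g x := by
  refine le_sInf ?_
  rintro b ⟨m, lam, y, hnn, hsum, hnb, hcomb, rfl⟩
  exact Finset.sum_nonneg fun j _ => coe_mul_nonneg _ _ (hnn j) (hg _)

lemma localExt_top (v : Fin 3 → ℝ) (h : ¬ inHullS v) : localExt fS v = ⊤ := by
  rw [localExt, sInf_eq_top]
  rintro a ⟨m, lam, y, hnn, hsum, hnb, hcomb, rfl⟩
  by_cases hall : ∀ j, lam j ≠ 0 → zS (y j)
  · exact absurd ⟨m, lam, y, hnn, hsum, hall, hcomb⟩ h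
  · push_neg at hall
    obtain ⟨j, hj0, hjS⟩ := hall
    refine top_le_iff.mp ?_
    calc (⊤ : EReal) = ((lam j : ℝ) : EReal) * fS (y j) := by
          rw [fS_of_not_zS hjS,
            EReal.mul_top_of_pos (by exact_mod_cast lt_of_le_of_ne (hnn j) (Ne.symm hj0))]
      _ ≤ ∑ j', ((lam j' : ℝ) : EReal) * fS (y j') :=
          Finset.single_le_sum
            (fun i _ => coe_mul_nonneg _ _ (hnn i) (fS_nonneg _)) (Finset.mem_univ j)

lemma localExt_le_zero (v : Fin 3 → ℝ) (h : wgood v) : localExt fS v ≤ 0 := by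
  classical
  obtain ⟨m, lam, y, hnn, hsum, hS, hnb, hcomb⟩ := h
  obtain ⟨j0, -, hj0⟩ := Finset.exists_ne_zero_of_sum_ne_zero
    (show (∑ j, lam j) ≠ 0 by rw [hsum]; norm_num)
  refine sInf_le ⟨m, lam, fun j => if lam j = 0 then y j0 else y j, hnn, hsum, ?_, ?_, ?_⟩
  · intro j i
    by_cases hz : lam j = 0
    · simpa [hz] using hnb j0 hj0 i
    · simpa [hz] using hnb j hz i
  · intro i
    rw [← hcomb i]
    refine Finset.sum_congr rfl fun j _ => ?_
    by_cases hz : lam j = 0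
    · simp [hz]
    · simp [hz]
  · refine (Finset.sum_eq_zero fun j _ => ?_).symm
    have hzj : zS (if lam j = 0 then y j0 else y j) := by
      by_cases hz : lam j = 0
      · simpa [hz] using hS j0
      · simpa [hz] using hS j
    rw [fS_of_zS hzj, mul_zero]

lemma inHullS_mix (x y : Fin 3 → ℝ) (t : ℝ) (ht0 : 0 ≤ t) (ht1 : t ≤ 1)
    (hx : inHullS x) (hy : inHullS y) :
    inHullS (fun i => t * x i + (1 - t) * y i) := by
  obtain ⟨m1, lam1, y1, hnn1, hsum1, hS1, hc1⟩ := hx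
  obtain ⟨m2, lam2, y2, hnn2, hsum2, hS2, hc2⟩ := hy
  refine ⟨m1 + m2, Fin.addCases (fun j => t * lam1 j) (fun j => (1 - t) * lam2 j),
    Fin.addCases y1 y2, ?_, ?_, ?_, ?_⟩
  · intro j
    induction j using Fin.addCases with
    | left k => simp only [Fin.addCases_left]; exact mul_nonneg ht0 (hnn1 k)
    | right k => simp only [Fin.addCases_right]; exact mul_nonneg (by linarith) (hnn2 k)
  · rw [Fin.sum_univ_add]
    simp only [Fin.addCases_left, Fin.addCases_right]
    rw [← Finset.mul_sum, ← Finset.mul_sum, hsum1, hsum2]; ring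
  · intro j
    induction j using Fin.addCases with
    | left k =>
        simp only [Fin.addCases_left]
        intro hne
        exact hS1 k (fun h0 => hne (by rw [h0, mul_zero]))
    | right k =>
        simp only [Fin.addCases_right]
        intro hne
        exact hS2 k (fun h0 => hne (by rw [h0, mul_zero]))
  · intro i
    rw [Fin.sum_univ_add]
    simp only [Fin.addCases_left, Fin.addCases_right]
    have e1 : (∑ k : Fin m1, t * lam1 k * ((y1 k i : ℤ) : ℝ))
        = t * ∑ k : Fin m1, lam1 k * ((y1 k i : ℤ) : ℝ) := by
      rw [Finset.mul_sum]; exact Finset.sum_congr rfl fun k _ => by ring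
    have e2 : (∑ k : Fin m2, (1 - t) * lam2 k * ((y2 k i : ℤ) : ℝ))
        = (1 - t) * ∑ k : Fin m2, lam2 k * ((y2 k i : ℤ) : ℝ) := by
      rw [Finset.mul_sum]; exact Finset.sum_congr rfl fun k _ => by ring
    rw [e1, e2, hc1 i, hc2 i]

lemma localExt_le_single (g : (Fin 3 → ℤ) → EReal) (x : Fin 3 → ℝ) (z : Fin 3 → ℤ)
    (hz : ∀ i, (z i : ℝ) = x i) : localExt g x ≤ g z := by
  refine sInf_le ⟨1, fun _ => 1, fun _ => z, fun _ => zero_le_one, by simp, ?_, ?_, ?_⟩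
  · intro j i
    rw [show |x i - (z i : ℝ)| = 0 by rw [hz i]; simp]
    norm_num
  · intro i; simp [hz i]
  · simp

lemma localExt_mid_top :
    localExt (fun x : Fin 3 → ℤ => fS (fun i => 2 * x i)) ![(1:ℝ), 1/2, 1/2] = ⊤ := by
  rw [localExt, sInf_eq_top]
  rintro a ⟨m, lam, y, hnn, hsum, hnb, hcomb, rfl⟩
  obtain ⟨j0, -, hj0⟩ := Finset.exists_ne_zero_of_sum_ne_zero
    (show (∑ j, lam j) ≠ 0 by rw [hsum]; norm_num)
  have hall : ∀ j, fS (fun i => 2 * y j i) = ⊤ := by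
    intro j
    have hn := hnb j
    have h0 : y j 0 = 1 := by
      have h := hn 0
      simp only [Matrix.cons_val_zero] at h
      rw [abs_sub_lt_iff] at h
      have hl : (0:ℤ) < y j 0 := by exact_mod_cast (by linarith [h.1, h.2] : (0:ℝ) < (y j 0 : ℝ))
      have hr : y j 0 < 2 := by exact_mod_cast (by linarith [h.1, h.2] : ((y j 0 : ℝ)) < 2)
      omega
    have h1 : y j 1 = 0 ∨ y j 1 = 1 := by
      have h := hn 1
      simp only [Matrix.cons_val_one, Matrix.head_cons, Matrix.cons_val_zero] at h
      rw [abs_sub_lt_iff] at h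
      have hi : (-1 : ℤ) < 2 * y j 1 ∧ 2 * y j 1 < 3 := by
        constructor <;> [exact_mod_cast (by push_cast; linarith [h.1, h.2] : (-1:ℝ) < 2 * (y j 1:ℝ));
          exact_mod_cast (by push_cast; linarith [h.1, h.2] : (2 * (y j 1:ℝ) : ℝ) < 3)]
      omega
    have h2 : y j 2 = 0 ∨ y j 2 = 1 := by
      have h := hn 2
      simp only [Matrix.cons_val_two, Matrix.tail_cons, Matrix.head_cons] at h
      rw [abs_sub_lt_iff] at h
      have hi : (-1 : ℤ) < 2 * y j 2 ∧ 2 * y j 2 < 3 := by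
        constructor <;> [exact_mod_cast (by push_cast; linarith [h.1, h.2] : (-1:ℝ) < 2 * (y j 2:ℝ));
          exact_mod_cast (by push_cast; linarith [h.1, h.2] : (2 * (y j 2:ℝ) : ℝ) < 3)]
      omega
    refine fS_of_not_zS ?_
    simp only [zS]
    omega
  refine top_le_iff.mp ?_
  calc (⊤ : EReal) = ((lam j0 : ℝ) : EReal) * fS (fun i => 2 * y j0 i) := by
        rw [hall j0,
          EReal.mul_top_of_pos (by exact_mod_cast lt_of_le_of_ne (hnn j0) (Ne.symm hj0))]
    _ ≤ ∑ j, ((lam j : ℝ) : EReal) * fS (fun i => 2 * y j i) :=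
        Finset.single_le_sum (f := fun j => ((lam j : ℝ) : EReal) * fS (fun i => 2 * y j i))
          (fun i _ => coe_mul_nonneg _ _ (hnn i) (by rw [hall i]; exact le_top))
          (Finset.mem_univ j0)

/-- For n = 3, integral convexity is not preserved by the scaling operation
with α = 2. -/
theorem scaling_fails_dim3 :
    ∃ f : (Fin 3 → ℤ) → EReal,
      (∀ x, f x ≠ ⊥) ∧ IsIntegrallyConvexFn f ∧
      ¬ IsIntegrallyConvexFn (fun x : Fin 3 → ℤ => f (fun i => 2 * x i)) := by
  classical
  refine ⟨fS, ?_, ?_, ?_⟩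
  · intro x
    unfold fS; split
    · simp
    · simp
  · -- fS is integrally convex
    intro x y t ht0 ht1
    rcases eq_or_lt_of_le ht0 with h0 | h0
    · obtain rfl : t = 0 := h0.symm
      have e : (fun i => (0:ℝ) * x i + (1 - 0) * y i) = y := funext fun i => by ring
      rw [e]
      norm_num
    rcases eq_or_lt_of_le ht1 with h1 | h1
    · obtain rfl : t = 1 := h1
      have e : (fun i => (1:ℝ) * x i + (1 - 1) * y i) = x := funext fun i => by ring
      rw [e]
      norm_num
    by_cases hx : inHullS x
    · by_cases hy : inHullS y
      · have hLx : localExt fS x = 0 :=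
          le_antisymm (localExt_le_zero x (main_constr x hx)) (localExt_nonneg fS fS_nonneg x)
        have hLy : localExt fS y = 0 :=
          le_antisymm (localExt_le_zero y (main_constr y hy)) (localExt_nonneg fS fS_nonneg y)
        have hw := localExt_le_zero _ (main_constr _ (inHullS_mix x y t ht0 ht1 hx hy))
        rw [hLx, hLy, mul_zero, mul_zero, add_zero]
        exact hw
      · have hLy : localExt fS y = ⊤ := localExt_top y hy
        rw [hLy, EReal.mul_top_of_pos (by exact_mod_cast (by linarith : (0:ℝ) < 1 - t)),
          EReal.add_top_of_ne_bot ?_]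
        · exact le_top
        · exact ne_bot_of_le_ne_bot (by simp)
            (coe_mul_nonneg _ _ ht0 (localExt_nonneg fS fS_nonneg x))
    · have hLx : localExt fS x = ⊤ := localExt_top x hx
      rw [hLx, EReal.mul_top_of_pos (by exact_mod_cast h0),
        EReal.top_add_of_ne_bot ?_]
      · exact le_top
      · exact ne_bot_of_le_ne_bot (by simp)
          (coe_mul_nonneg _ _ (by linarith) (localExt_nonneg fS fS_nonneg y))
  · -- scaling fails
    intro hIC
    have h := hIC (fun _ => (0:ℝ)) ![(2:ℝ), 1, 1] (1/2) (by norm_num) (by norm_num)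
    have eArg : (fun i => (1/2 : ℝ) * (fun _ => (0:ℝ)) i + (1 - 1/2) * (![(2:ℝ), 1, 1]) i)
        = ![(1:ℝ), 1/2, 1/2] := by
      funext i
      fin_cases i <;>
        simp only [Matrix.cons_val_zero, Matrix.cons_val_one, Matrix.head_cons,
          Matrix.cons_val_two, Matrix.tail_cons] <;> norm_num
    rw [eArg, localExt_mid_top] at h
    have hL1 : localExt (fun x : Fin 3 → ℤ => fS (fun i => 2 * x i)) (fun _ => (0:ℝ)) = 0 := by
      refine le_antisymm ?_ (localExt_nonneg _ (fun z => fS_nonneg _) _)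
      have hb := localExt_le_single (fun x : Fin 3 → ℤ => fS (fun i => 2 * x i))
        (fun _ => (0:ℝ)) (fun _ => (0:ℤ)) (fun i => by norm_num)
      exact hb.trans (le_of_eq (fS_of_zS (by norm_num [zS])))
    have hL2 : localExt (fun x : Fin 3 → ℤ => fS (fun i => 2 * x i)) ![(2:ℝ), 1, 1] = 0 := by
      refine le_antisymm ?_ (localExt_nonneg _ (fun z => fS_nonneg _) _)
      have hb := localExt_le_single (fun x : Fin 3 → ℤ => fS (fun i => 2 * x i))
        ![(2:ℝ), 1, 1] ![2, 1, 1] ?_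
      · exact hb.trans (le_of_eq (fS_of_zS (by unfold zS; decide)))
      · intro i
        fin_cases i <;>
          simp only [Matrix.cons_val_zero, Matrix.cons_val_one, Matrix.head_cons,
            Matrix.cons_val_two, Matrix.tail_cons] <;> norm_num
    rw [hL1, hL2, mul_zero, mul_zero, add_zero] at h
    rw [top_le_iff] at h
    exact absurd h.symm (by simp)

end
end
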